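/- arXiv:2104.08302 — 7 statements merged into one kernel-verified Lean document; each statement's English description precedes it below -/
import Mathlib

section
/- If W is a real random variable such that E[f'(W) - W·f(W)] = 0 for every absolutely continuous f : ℝ → ℝ with E|f'(Z)| < ∞ (Z standard normal), then W has the standard normal distribution. -/
open MeasureTheory ProbabilityTheory Real Set Filter Topology

noncomputable section SteinAux

/-- standard gaussian density (unnormalized) -/
def php (t : ℝ) : ℝ := Real.exp (-(1/2) * t^2)

def cz (z : ℝ) : ℝ := ((gaussianReal 0 1) (Set.Iio z)).toReal

def rhoz (z t : ℝ) : ℝ := ((if t < z then (1:ℝ) else 0) - cz z) * php t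

def Gz (z x : ℝ) : ℝ := ∫ t in Set.Iic x, rhoz z t

def fz (z x : ℝ) : ℝ := Real.exp ((1/2) * x^2) * Gz z x

def fz' (z x : ℝ) : ℝ := x * fz z x + ((if x < z then (1:ℝ) else 0) - cz z)

lemma php_nonneg (t : ℝ) : 0 ≤ php t := (Real.exp_pos _).le

lemma continuous_php : Continuous php := by
  unfold php; continuity

lemma integrable_php : Integrable php := by
  rw [show php = fun t => Real.exp (-(1/2:ℝ) * t^2) from rfl]
  exact integrable_exp_neg_mul_sq (by norm_num)

lemma integrable_mul_php : Integrable (fun t : ℝ => t * php t) := by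
  rw [show (fun t : ℝ => t * php t) = fun t => t * Real.exp (-(1/2:ℝ) * t^2) from rfl]
  exact integrable_mul_exp_neg_mul_sq (by norm_num)

lemma cz_nonneg (z : ℝ) : 0 ≤ cz z := ENNReal.toReal_nonneg

lemma cz_le_one (z : ℝ) : cz z ≤ 1 := by
  have : (gaussianReal 0 1) (Set.Iio z) ≤ 1 := prob_le_one
  simpa [cz] using ENNReal.toReal_le_of_le_ofReal zero_le_one (by simpa using this)

lemma ind_sub_cz_abs_le (z x : ℝ) : |(if x < z then (1:ℝ) else 0) - cz z| ≤ 1 := by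
  have h0 := cz_nonneg z; have h1 := cz_le_one z
  rw [abs_le]; constructor <;> split_ifs <;> linarith

lemma measurable_rhoz (z : ℝ) : Measurable (rhoz z) := by
  apply Measurable.mul
  · exact (Measurable.ite (measurableSet_Iio (a := z)) measurable_const measurable_const).sub
      measurable_const
  · exact continuous_php.measurable

lemma integrable_rhoz (z : ℝ) : Integrable (rhoz z) := by
  refine integrable_php.mono'
    (measurable_rhoz z).aestronglyMeasurable (Filter.Eventually.of_forall fun t => ?_)
  calc ‖rhoz z t‖ = |(if t < z then (1:ℝ) else 0) - cz z| * php t := by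
        rw [rhoz, norm_mul]; simp [abs_of_nonneg (php_nonneg t), Real.norm_eq_abs]
    _ ≤ 1 * php t := mul_le_mul_of_nonneg_right (ind_sub_cz_abs_le z t) (php_nonneg t)
    _ = php t := one_mul _

lemma integral_php : ∫ t, php t = Real.sqrt (2 * Real.pi) := by
  have := integral_gaussian (1/2 : ℝ)
  rw [show Real.pi/(1/2:ℝ) = 2*Real.pi by ring] at this
  exact this

lemma php_eq_pdf (t : ℝ) : php t = Real.sqrt (2 * Real.pi) * gaussianPDFReal 0 1 t := by
  rw [gaussianPDFReal]
  simp only [NNReal.coe_one, mul_one, sub_zero]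
  rw [← mul_assoc, mul_inv_cancel₀ (Real.sqrt_ne_zero'.2 (by positivity)), one_mul]
  rw [php]; ring_nf

lemma cz_eq_integral (z : ℝ) : cz z = ∫ t in Set.Iio z, gaussianPDFReal 0 1 t := by
  rw [cz, gaussianReal_apply_eq_integral 0 one_ne_zero,
    ENNReal.toReal_ofReal (setIntegral_nonneg measurableSet_Iio fun t _ =>
      gaussianPDFReal_nonneg 0 1 t)]

lemma integral_php_Iio (z : ℝ) : ∫ t in Set.Iio z, php t = Real.sqrt (2 * Real.pi) * cz z := by
  simp_rw [php_eq_pdf]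
  rw [integral_const_mul, cz_eq_integral]

lemma hasDerivAt_php (x : ℝ) : HasDerivAt php (-x * php x) x := by
  have h1 : HasDerivAt (fun t : ℝ => -(1/2:ℝ) * t^2) (-x) x := by
    have this : HasDerivAt (fun y : ℝ => -(1/2:ℝ) * y^2) (-(1/2:ℝ) * (↑2 * x^(2-1))) x :=
      (hasDerivAt_pow 2 x).const_mul (-(1/2:ℝ))
    convert this using 1
    push_cast; ring
  have h2 := h1.exp
  convert h2 using 1
  · rfl
  rw [php]; ring

lemma tendsto_sq_atBot : Tendsto (fun t : ℝ => t^2) atBot atTop := by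
  have := (tendsto_pow_atTop (two_ne_zero)).comp (tendsto_neg_atBot_atTop (G := ℝ))
  refine this.congr fun t => ?_
  simp [neg_sq]

lemma tendsto_php_atBot : Tendsto php atBot (𝓝 0) := by
  have h : Tendsto (fun t : ℝ => -(1/2) * t^2) atBot atBot := by
    have h2 : Tendsto (fun t : ℝ => (1/2:ℝ) * t^2) atBot atTop :=
      Tendsto.const_mul_atTop (by norm_num) tendsto_sq_atBot
    have := (tendsto_neg_atTop_atBot (G := ℝ)).comp h2
    refine this.congr fun t => ?_
    simp
  exact Real.tendsto_exp_atBot.comp h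

lemma tendsto_php_atTop : Tendsto php atTop (𝓝 0) := by
  have h : Tendsto (fun t : ℝ => -(1/2) * t^2) atTop atBot := by
    have h2 : Tendsto (fun t : ℝ => (1/2:ℝ) * t^2) atTop atTop :=
      Tendsto.const_mul_atTop (by norm_num) (tendsto_pow_atTop two_ne_zero)
    have := (tendsto_neg_atTop_atBot (G := ℝ)).comp h2
    refine this.congr fun t => ?_
    simp
  exact Real.tendsto_exp_atBot.comp h

lemma integrable_neg_mul_php : Integrable (fun t : ℝ => -t * php t) :=
  integrable_mul_php.neg.congr (Filter.Eventually.of_forall fun t => by simp [neg_mul])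

lemma integral_neg_mul_php_Iic (x : ℝ) : ∫ t in Set.Iic x, -t * php t = php x := by
  have := integral_Iic_of_hasDerivAt_of_tendsto' (a := x) (f := php)
    (f' := fun t => -t * php t) (fun t _ => hasDerivAt_php t)
    integrable_neg_mul_php.integrableOn tendsto_php_atBot
  simpa using this

lemma integral_mul_php_Ioi (x : ℝ) : ∫ t in Set.Ioi x, t * php t = php x := by
  have hderiv : ∀ t ∈ Set.Ici x, HasDerivAt (fun u => -php u) (t * php t) t := by
    intro t _
    have this : HasDerivAt (fun u => -php u) (-(-t * php t)) t := (hasDerivAt_php t).neg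
    convert this using 1; ring
  have htend : Tendsto (fun u => -php u) atTop (𝓝 (0:ℝ)) := by
    simpa using tendsto_php_atTop.neg
  have := integral_Ioi_of_hasDerivAt_of_tendsto' hderiv integrable_mul_php.integrableOn htend
  simpa using this

lemma mills_Iic {x : ℝ} (hx : x ≤ 0) : (-x) * ∫ t in Set.Iic x, php t ≤ php x := by
  rw [← integral_const_mul]
  rw [← integral_neg_mul_php_Iic x]
  refine setIntegral_mono_on ((integrable_php.const_mul _).integrableOn)
    (integrable_neg_mul_php.integrableOn) measurableSet_Iic fun t ht => ?_
  exact mul_le_mul_of_nonneg_right (by simp at ht; linarith) (php_nonneg t)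

lemma mills_Ioi {x : ℝ} (hx : 0 ≤ x) : x * ∫ t in Set.Ioi x, php t ≤ php x := by
  rw [← integral_const_mul]
  rw [← integral_mul_php_Ioi x]
  refine setIntegral_mono_on ((integrable_php.const_mul _).integrableOn)
    (integrable_mul_php.integrableOn) measurableSet_Ioi fun t ht => ?_
  exact mul_le_mul_of_nonneg_right (by simp at ht; linarith) (php_nonneg t)

lemma ae_ne_z (z : ℝ) : ∀ᵐ t : ℝ, t ≠ z := by
  refine ae_iff.2 ?_
  have : {t : ℝ | ¬ t ≠ z} = {z} := by ext t; simp [not_not]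
  rw [this]
  exact measure_singleton z

lemma Gz_left {z x : ℝ} (hx : x ≤ z) :
    Gz z x = (1 - cz z) * ∫ t in Set.Iic x, php t := by
  rw [Gz, ← integral_const_mul]
  refine setIntegral_congr_ae measurableSet_Iic ?_
  filter_upwards [ae_ne_z z] with t htz ht
  rw [rhoz, if_pos (lt_of_le_of_ne (ht.trans hx) htz)]

lemma integral_rhoz_total (z : ℝ) : ∫ t, rhoz z t = 0 := by
  have hrepr : rhoz z = fun t => Set.indicator (Set.Iio z) php t - cz z * php t :=
    funext fun t => by
      by_cases h : t < z <;> simp [rhoz, Set.indicator, Set.mem_Iio, h] <;> ring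
  rw [hrepr, integral_sub (integrable_php.indicator measurableSet_Iio)
    (integrable_php.const_mul _), integral_indicator measurableSet_Iio,
    integral_php_Iio, integral_const_mul, integral_php]
  ring

lemma Gz_right {z x : ℝ} (hx : z ≤ x) :
    Gz z x = cz z * ∫ t in Set.Ioi x, php t := by
  have hsplit := integral_add_compl (measurableSet_Iic (a := x)) (integrable_rhoz z)
  rw [compl_Iic] at hsplit
  have h2 : ∫ t in Set.Ioi x, rhoz z t = -(cz z * ∫ t in Set.Ioi x, php t) := by
    rw [← integral_const_mul, ← integral_neg]
    refine setIntegral_congr_fun measurableSet_Ioi fun t ht => ?_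
    have htz : ¬ t < z := by simp only [Set.mem_Ioi] at ht; linarith
    rw [rhoz, if_neg htz]
    ring
  have htot := integral_rhoz_total z
  have : Gz z x + ∫ t in Set.Ioi x, rhoz z t = 0 := by rw [Gz]; rw [hsplit, htot]
  linarith [this, h2]

def Bz (z : ℝ) : ℝ := Real.sqrt (2*Real.pi) * (|z|+1) * Real.exp ((1/2)*z^2) + 1

lemma one_le_Bz (z : ℝ) : 1 ≤ Bz z := by
  have : 0 ≤ Real.sqrt (2*Real.pi) * (|z|+1) * Real.exp ((1/2)*z^2) := by positivity
  rw [Bz]; linarith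

lemma exp_mul_php (x : ℝ) : Real.exp ((1/2) * x^2) * php x = 1 := by
  rw [php, ← Real.exp_add, show (1/2:ℝ)*x^2 + -(1/2)*x^2 = 0 by ring, Real.exp_zero]

lemma integral_php_Iic_nonneg (x : ℝ) : 0 ≤ ∫ t in Set.Iic x, php t :=
  setIntegral_nonneg measurableSet_Iic fun t _ => php_nonneg t

lemma integral_php_Ioi_nonneg (x : ℝ) : 0 ≤ ∫ t in Set.Ioi x, php t :=
  setIntegral_nonneg measurableSet_Ioi fun t _ => php_nonneg t

lemma integral_php_Iic_le (x : ℝ) : ∫ t in Set.Iic x, php t ≤ Real.sqrt (2*Real.pi) := by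
  rw [← integral_php]
  exact setIntegral_le_integral integrable_php (Filter.Eventually.of_forall php_nonneg)

lemma integral_php_Ioi_le (x : ℝ) : ∫ t in Set.Ioi x, php t ≤ Real.sqrt (2*Real.pi) := by
  rw [← integral_php]
  exact setIntegral_le_integral integrable_php (Filter.Eventually.of_forall php_nonneg)

lemma abs_mul_fz_le (z x : ℝ) : |x * fz z x| ≤ Bz z := by
  have h0 := cz_nonneg z
  have h1 := cz_le_one z
  have hexp : (0:ℝ) < Real.exp ((1/2)*x^2) := Real.exp_pos _
  have hsq : (0:ℝ) ≤ Real.sqrt (2*Real.pi) := Real.sqrt_nonneg _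
  have hB := one_le_Bz z
  set e := Real.exp ((1/2)*x^2) with he
  set E := Real.exp ((1/2)*z^2) with hE
  have hE0 : (0:ℝ) < E := Real.exp_pos _
  rcases le_or_gt x z with hxz | hzx
  · rw [fz, Gz_left hxz]
    set I := ∫ t in Set.Iic x, php t with hI
    have hI0 : 0 ≤ I := integral_php_Iic_nonneg x
    have hIle : I ≤ Real.sqrt (2*Real.pi) := integral_php_Iic_le x
    rcases le_or_gt x 0 with hx0 | hx0
    · have hm : (-x) * I ≤ php x := mills_Iic hx0
      have key : (-x) * (e * I) ≤ 1 := by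
        calc (-x)*(e*I) = e*((-x)*I) := by ring
          _ ≤ e * php x := mul_le_mul_of_nonneg_left hm hexp.le
          _ = 1 := exp_mul_php x
      have hq0 : 0 ≤ (-x) * (e * I) := by
        apply mul_nonneg (by linarith) (mul_nonneg hexp.le hI0)
      have hnp : x * (e * ((1 - cz z) * I)) ≤ 0 :=
        mul_nonpos_of_nonpos_of_nonneg hx0
          (mul_nonneg hexp.le (mul_nonneg (by linarith) hI0))
      rw [abs_of_nonpos hnp]
      have heq : -(x * (e * ((1 - cz z) * I))) = (1 - cz z) * ((-x) * (e * I)) := by ring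
      rw [heq]
      nlinarith [mul_le_mul_of_nonneg_left key (by linarith : (0:ℝ) ≤ 1 - cz z),
        mul_le_mul_of_nonneg_right (by linarith : 1 - cz z ≤ 1) hq0]
    · have hee : e ≤ E := by
        rw [he, hE]; exact Real.exp_le_exp.2 (by nlinarith)
      have hxabs : x ≤ |z| + 1 := by
        have : x ≤ z := hxz
        have := le_abs_self z
        linarith
      have hnn : 0 ≤ x * (e * ((1 - cz z) * I)) :=
        mul_nonneg hx0.le (mul_nonneg hexp.le (mul_nonneg (by linarith) hI0))
      rw [abs_of_nonneg hnn]
      have hin : (1 - cz z) * I ≤ Real.sqrt (2*Real.pi) := by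
        calc (1 - cz z) * I ≤ 1 * I := mul_le_mul_of_nonneg_right (by linarith) hI0
          _ = I := one_mul _
          _ ≤ _ := hIle
      have h2 : e * ((1 - cz z) * I) ≤ E * Real.sqrt (2*Real.pi) :=
        mul_le_mul hee hin (mul_nonneg (by linarith) hI0) hE0.le
      have h3 : x * (e * ((1 - cz z) * I)) ≤ (|z|+1) * (E * Real.sqrt (2*Real.pi)) :=
        mul_le_mul hxabs h2 (mul_nonneg hexp.le (mul_nonneg (by linarith) hI0))
          (by positivity)
      rw [Bz]
      nlinarith [h3]
  · rw [fz, Gz_right hzx.le]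
    set J := ∫ t in Set.Ioi x, php t with hJ
    have hJ0 : 0 ≤ J := integral_php_Ioi_nonneg x
    have hJle : J ≤ Real.sqrt (2*Real.pi) := integral_php_Ioi_le x
    rcases le_or_gt 0 x with hx0 | hx0
    · have hm : x * J ≤ php x := mills_Ioi hx0
      have key : x * (e * J) ≤ 1 := by
        calc x*(e*J) = e*(x*J) := by ring
          _ ≤ e * php x := mul_le_mul_of_nonneg_left hm hexp.le
          _ = 1 := exp_mul_php x
      have hq0 : 0 ≤ x * (e * J) := mul_nonneg hx0 (mul_nonneg hexp.le hJ0)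
      have hnn : 0 ≤ x * (e * (cz z * J)) :=
        mul_nonneg hx0 (mul_nonneg hexp.le (mul_nonneg h0 hJ0))
      rw [abs_of_nonneg hnn]
      have heq : x * (e * (cz z * J)) = cz z * (x * (e * J)) := by ring
      rw [heq]
      nlinarith [mul_le_mul_of_nonneg_left key h0,
        mul_le_mul_of_nonneg_right h1 hq0]
    · have hee : e ≤ E := by
        rw [he, hE]; exact Real.exp_le_exp.2 (by nlinarith)
      have hxabs : -x ≤ |z| + 1 := by
        have := neg_abs_le z
        linarith
      have hnp : x * (e * (cz z * J)) ≤ 0 :=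
        mul_nonpos_of_nonpos_of_nonneg hx0.le
          (mul_nonneg hexp.le (mul_nonneg h0 hJ0))
      rw [abs_of_nonpos hnp]
      have heq : -(x * (e * (cz z * J))) = (-x) * (e * (cz z * J)) := by ring
      rw [heq]
      have hin : cz z * J ≤ Real.sqrt (2*Real.pi) := by
        calc cz z * J ≤ 1 * J := mul_le_mul_of_nonneg_right h1 hJ0
          _ = J := one_mul _
          _ ≤ _ := hJle
      have h2 : e * (cz z * J) ≤ E * Real.sqrt (2*Real.pi) :=
        mul_le_mul hee hin (mul_nonneg h0 hJ0) hE0.le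
      have h3 : (-x) * (e * (cz z * J)) ≤ (|z|+1) * (E * Real.sqrt (2*Real.pi)) :=
        mul_le_mul hxabs h2 (mul_nonneg hexp.le (mul_nonneg h0 hJ0)) (by positivity)
      rw [Bz]
      nlinarith [h3]

lemma abs_fz'_le (z x : ℝ) : |fz' z x| ≤ Bz z + 1 := by
  rw [fz']
  refine (abs_add_le _ _).trans ?_
  linarith [abs_mul_fz_le z x, ind_sub_cz_abs_le z x]

lemma Gz_eq_primitive (z : ℝ) : ∀ u : ℝ, Gz z u = Gz z 0 + ∫ t in (0:ℝ)..u, rhoz z t := by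
  intro u
  have := intervalIntegral.integral_Iic_sub_Iic ((integrable_rhoz z).integrableOn)
    ((integrable_rhoz z).integrableOn) (a := 0) (b := u)
  rw [Gz, Gz]
  linarith

lemma continuous_Gz (z : ℝ) : Continuous (Gz z) := by
  have h := (integrable_rhoz z).continuous_primitive 0
  have : Gz z = fun u => Gz z 0 + ∫ t in (0:ℝ)..u, rhoz z t := funext (Gz_eq_primitive z)
  rw [this]
  exact continuous_const.add h

lemma continuous_fz (z : ℝ) : Continuous (fz z) := by
  rw [show fz z = fun x => Real.exp ((1/2) * x^2) * Gz z x from rfl]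
  exact (Real.continuous_exp.comp (by continuity)).mul (continuous_Gz z)

lemma continuousWithinAt_rhoz (z x : ℝ) : ContinuousWithinAt (rhoz z) (Set.Ioi x) x := by
  by_cases hxz : x < z
  · have hev : (fun t => (1 - cz z) * php t) =ᶠ[𝓝 x] rhoz z := by
      filter_upwards [Iio_mem_nhds hxz] with t ht
      rw [rhoz, if_pos (Set.mem_Iio.1 ht)]
    have hca : ContinuousAt (fun t => (1 - cz z) * php t) x :=
      (continuous_const.mul continuous_php).continuousAt
    exact (hca.congr hev).continuousWithinAt
  · have hg : ContinuousWithinAt (fun t => ((0:ℝ) - cz z) * php t) (Set.Ioi x) x :=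
      ((continuous_const.mul continuous_php).continuousAt).continuousWithinAt
    refine hg.congr (fun t ht => ?_) (by rw [rhoz, if_neg hxz])
    rw [rhoz, if_neg]
    simp only [Set.mem_Ioi] at ht
    push_neg at hxz
    exact not_lt.2 (hxz.trans ht.le)

lemma hasDeriv_Gz (z x : ℝ) : HasDerivWithinAt (Gz z) (rhoz z x) (Set.Ici x) x := by
  have meas : StronglyMeasurableAtFilter (rhoz z) (𝓝[Set.Ioi x] x) volume :=
    ⟨Set.univ, Filter.univ_mem, (measurable_rhoz z).aestronglyMeasurable⟩
  have hd := intervalIntegral.integral_hasDerivWithinAt_right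
    (a := 0) (b := x) (s := Set.Ici x) (t := Set.Ioi x)
    ((integrable_rhoz z).intervalIntegrable) meas (continuousWithinAt_rhoz z x)
  have hd2 := hd.const_add (Gz z 0)
  refine hd2.congr (fun u _ => Gz_eq_primitive z u) (Gz_eq_primitive z x)

lemma hasDeriv_fz (z x : ℝ) : HasDerivWithinAt (fz z) (fz' z x) (Set.Ioi x) x := by
  have he : HasDerivAt (fun u : ℝ => Real.exp ((1/2)*u^2)) (x * Real.exp ((1/2)*x^2)) x := by
    have h1 : HasDerivAt (fun u : ℝ => (1/2:ℝ)*u^2) x x := by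
      have this : HasDerivAt (fun y : ℝ => (1/2:ℝ) * y^2) ((1/2:ℝ) * (↑2 * x^(2-1))) x :=
        (hasDerivAt_pow 2 x).const_mul (1/2:ℝ)
      convert this using 1
      push_cast; ring
    have h2 := h1.exp
    convert h2 using 1
    ring
  have hmul : HasDerivWithinAt (fun u => Real.exp ((1/2)*u^2) * Gz z u)
      (x * Real.exp ((1/2)*x^2) * Gz z x + Real.exp ((1/2)*x^2) * rhoz z x) (Set.Ioi x) x :=
    he.hasDerivWithinAt.mul ((hasDeriv_Gz z x).mono Set.Ioi_subset_Ici_self)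
  convert hmul using 1
  · rfl
  rw [fz', fz, rhoz]
  have h1 : Real.exp ((1/2)*x^2) * php x = 1 := exp_mul_php x
  linear_combination (cz z - (if x < z then (1:ℝ) else 0)) * h1

lemma measurable_fz' (z : ℝ) : Measurable (fz' z) := by
  rw [show fz' z = fun x => x * fz z x + ((if x < z then (1:ℝ) else 0) - cz z) from rfl]
  exact (measurable_id.mul (continuous_fz z).measurable).add
    ((Measurable.ite (measurableSet_Iio (a := z)) measurable_const measurable_const).sub
      measurable_const)

lemma intervalIntegrable_fz' (z a b : ℝ) : IntervalIntegrable (fz' z) volume a b := by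
  rw [intervalIntegrable_iff]
  have hc : IntegrableOn (fun _ : ℝ => Bz z + 1) (Set.uIoc a b) volume :=
    integrableOn_const measure_Ioc_lt_top.ne
  refine hc.mono' (measurable_fz' z).aestronglyMeasurable
    (Filter.Eventually.of_forall fun t => ?_)
  simpa [Real.norm_eq_abs] using abs_fz'_le z t

lemma fz_ftc (z a b : ℝ) : fz z b - fz z a = ∫ t in a..b, fz' z t :=
  (intervalIntegral.integral_eq_sub_of_hasDeriv_right
    (continuous_fz z).continuousOn (fun t _ => hasDeriv_fz z t)
    (intervalIntegrable_fz' z a b)).symm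

end SteinAux

/-- Stein's lemma (sufficiency): if `E[f'(W) - W f(W)] = 0` for every absolutely
continuous `f` with a.e. derivative `f'` satisfying `E|f'(Z)| < ∞` (for which the
expectations exist), then `W` is standard normal. -/
theorem stein_characterization_normal
    {Ω : Type*} [MeasureSpace Ω] [IsProbabilityMeasure (ℙ : Measure Ω)]
    (W : Ω → ℝ) (hWmeas : Measurable W)
    (h : ∀ f f' : ℝ → ℝ, Measurable f' →
      (∀ a b : ℝ, f b - f a = ∫ t in a..b, f' t) →
      Integrable f' (gaussianReal 0 1) →
      Integrable (fun ω => f' (W ω)) ℙ →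
      Integrable (fun ω => W ω * f (W ω)) ℙ →
      ∫ ω, (f' (W ω) - W ω * f (W ω)) ∂ℙ = 0) :
    Measure.map W ℙ = gaussianReal 0 1 := by
  have main : ∀ z : ℝ, (Measure.map W ℙ) (Set.Iio z) = (gaussianReal 0 1) (Set.Iio z) := by
    intro z
    have hmeasf' := measurable_fz' z
    have hbdd := abs_fz'_le z
    have hint1 : Integrable (fz' z) (gaussianReal 0 1) :=
      (integrable_const (Bz z + 1)).mono' hmeasf'.aestronglyMeasurable
        (Filter.Eventually.of_forall fun t => by simpa [Real.norm_eq_abs] using hbdd t)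
    have hint2 : Integrable (fun ω => fz' z (W ω)) ℙ :=
      (integrable_const (Bz z + 1)).mono' (hmeasf'.comp hWmeas).aestronglyMeasurable
        (Filter.Eventually.of_forall fun ω => by simpa [Real.norm_eq_abs] using hbdd (W ω))
    have hint3 : Integrable (fun ω => W ω * fz z (W ω)) ℙ :=
      (integrable_const (Bz z)).mono'
        (hWmeas.mul ((continuous_fz z).measurable.comp hWmeas)).aestronglyMeasurable
        (Filter.Eventually.of_forall fun ω => by
          rw [Real.norm_eq_abs]; exact abs_mul_fz_le z (W ω))
    have key := h (fz z) (fz' z) hmeasf' (fz_ftc z) hint1 hint2 hint3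
    have heq : (fun ω => fz' z (W ω) - W ω * fz z (W ω))
        = fun ω => Set.indicator (W ⁻¹' Set.Iio z) (fun _ => (1:ℝ)) ω - cz z := by
      funext ω
      simp only [fz', Set.indicator, Set.mem_preimage, Set.mem_Iio, Pi.one_apply]
      by_cases hω : W ω < z <;> simp [hω] <;> ring
    rw [heq] at key
    have hmeass : MeasurableSet (W ⁻¹' Set.Iio z) := hWmeas measurableSet_Iio
    have hval : ∫ ω, (Set.indicator (W ⁻¹' Set.Iio z) (fun _ => (1:ℝ)) ω - cz z) ∂ℙ
        = (ℙ (W ⁻¹' Set.Iio z)).toReal - cz z := by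
      rw [integral_sub ((integrable_const (1:ℝ)).indicator hmeass) (integrable_const _),
        integral_indicator hmeass, setIntegral_const, integral_const]
      simp
      rfl
    rw [hval] at key
    have htR : (ℙ (W ⁻¹' Set.Iio z)).toReal = ((gaussianReal 0 1) (Set.Iio z)).toReal := by
      rw [show ((gaussianReal 0 1) (Set.Iio z)).toReal = cz z from rfl]
      linarith
    rw [Measure.map_apply hWmeas measurableSet_Iio]
    exact (ENNReal.toReal_eq_toReal_iff' (measure_ne_top _ _) (measure_ne_top _ _)).1 htR
  haveI : IsProbabilityMeasure (Measure.map W ℙ) :=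
    Measure.isProbabilityMeasure_map hWmeas.aemeasurable
  refine Measure.ext_of_Ico (Measure.map W ℙ) (gaussianReal 0 1) (fun a b hab => ?_)
  rw [show Set.Ico a b = Set.Iio b \ Set.Iio a by ext t; simp [and_comm],
    measure_diff (Set.Iio_subset_Iio hab.le) measurableSet_Iio.nullMeasurableSet
      (measure_ne_top _ _),
    measure_diff (Set.Iio_subset_Iio hab.le) measurableSet_Iio.nullMeasurableSet
      (measure_ne_top _ _),
    main a, main b]
end

section
/- For fixed x ∈ ℝ, the function f_x defined as the unique bounded solution of f'(w) - w·f(w) = 1_{w ≤ x} - Φ(x) satisfies ‖f_x‖_∞ ≤ 1 and ‖f_x'‖_∞ ≤ 1, where Φ is the standard normal CDF. -/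
open MeasureTheory ProbabilityTheory Real Set Filter

noncomputable def steinG (t : ℝ) : ℝ := Real.exp (-t ^ 2 / 2)

lemma steinG_pos (t : ℝ) : 0 < steinG t := Real.exp_pos _

-- translation
lemma translate_Ioi (w : ℝ) (h : ℝ → ℝ) :
    ∫ t in Ioi w, h (t - w) = ∫ s in Ioi (0:ℝ), h s := by
  have A : MeasurableEmbedding fun s : ℝ => s + w :=
    (Homeomorph.addRight w).isClosedEmbedding.measurableEmbedding
  have h2 := A.setIntegral_map (μ := volume) (fun t => h (t - w)) (Ioi w)
  rw [map_add_right_eq_self] at h2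
  rw [h2]
  have : (fun s : ℝ => s + w) ⁻¹' Ioi w = Ioi 0 := by
    ext s; simp [Set.mem_Ioi]
  rw [this]
  simp

-- symmetry
lemma steinG_neg (t : ℝ) : steinG (-t) = steinG t := by simp [steinG, neg_sq]

-- integrability of moments
lemma tgg_int : Integrable (fun t : ℝ => t * steinG t) := by
  have hb : Integrable (fun t : ℝ => Real.exp (-(1/4) * t ^ 2)) :=
    integrable_exp_neg_mul_sq (by norm_num)
  refine hb.mono' ?_ (ae_of_all _ fun t => ?_)
  · exact (continuous_id.mul (by unfold steinG; fun_prop)).aestronglyMeasurable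
  · have h1 : |t| ≤ 1 + t ^ 2 / 4 := by nlinarith [sq_abs t, abs_nonneg t, sq_nonneg (|t| - 2)]
    have h2 : 1 + t ^ 2 / 4 ≤ Real.exp (t ^ 2 / 4) := by
      have := Real.add_one_le_exp (t ^ 2 / 4); linarith
    have : ‖t * steinG t‖ = |t| * Real.exp (-t ^ 2 / 2) := by
      rw [norm_mul, Real.norm_eq_abs, Real.norm_eq_abs, abs_of_pos (steinG_pos t)]; rfl
    rw [this]
    calc |t| * Real.exp (-t ^ 2 / 2) ≤ Real.exp (t ^ 2 / 4) * Real.exp (-t ^ 2 / 2) := by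
          apply mul_le_mul_of_nonneg_right (h1.trans h2) (Real.exp_pos _).le
      _ = Real.exp (-(1/4) * t ^ 2) := by rw [← Real.exp_add]; ring_nf

lemma t2gg_int : Integrable (fun t : ℝ => t ^ 2 * steinG t) := by
  have hb : Integrable (fun t : ℝ => 2 * Real.exp (-(1/4) * t ^ 2)) :=
    (integrable_exp_neg_mul_sq (by norm_num)).const_mul 2
  refine hb.mono' ?_ (ae_of_all _ fun t => ?_)
  · exact ((continuous_pow 2).mul (by unfold steinG; fun_prop)).aestronglyMeasurable
  · have h2 : 1 + t ^ 2 / 4 + (t ^ 2 / 4) ^ 2 / 2 ≤ Real.exp (t ^ 2 / 4) := by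
      have h3 := Real.sum_le_exp_of_nonneg (by positivity : (0:ℝ) ≤ t ^ 2 / 4) 3
      have : ∑ i ∈ Finset.range 3, (t ^ 2 / 4) ^ i / (Nat.factorial i) =
          1 + t ^ 2 / 4 + (t ^ 2 / 4) ^ 2 / 2 := by
        simp [Finset.sum_range_succ, Nat.factorial]
        try ring
      linarith [this ▸ h3]
    have h1 : t ^ 2 ≤ 2 * Real.exp (t ^ 2 / 4) := by nlinarith [sq_nonneg (t ^ 2 / 4)]
    have : ‖t ^ 2 * steinG t‖ = t ^ 2 * Real.exp (-t ^ 2 / 2) := by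
      rw [norm_mul, Real.norm_eq_abs, Real.norm_eq_abs, abs_of_pos (steinG_pos t),
        abs_of_nonneg (sq_nonneg t)]; rfl
    rw [this]
    calc t ^ 2 * Real.exp (-t ^ 2 / 2) ≤ 2 * Real.exp (t ^ 2 / 4) * Real.exp (-t ^ 2 / 2) := by
          apply mul_le_mul_of_nonneg_right h1 (Real.exp_pos _).le
      _ = 2 * Real.exp (-(1/4) * t ^ 2) := by rw [mul_assoc, ← Real.exp_add]; ring_nf

-- FTC: ∫_{Ioi w} t exp(-t²/2) = exp(-w²/2)
lemma steinG_deriv (t : ℝ) : HasDerivAt (fun t => -steinG t) (t * steinG t) t := by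
  have hu : HasDerivAt (fun t : ℝ => -t ^ 2 / 2) (-t) t := by
    have h0 := ((hasDerivAt_pow 2 t).div_const 2).neg
    norm_num [neg_div] at h0
    exact h0.congr_of_eventuallyEq (by filter_upwards with y; simp only [Pi.neg_apply]; ring)
  have := (Real.hasDerivAt_exp (-t ^ 2 / 2)).comp t hu
  have h2 := this.neg
  exact h2.congr_deriv (by unfold steinG; ring)

lemma steinG_tendsto : Tendsto (fun t => -steinG t) atTop (nhds 0) := by
  rw [show (0:ℝ) = -0 by ring]
  apply Tendsto.neg
  apply Real.tendsto_exp_atBot.comp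
  have : Tendsto (fun t : ℝ => t ^ 2 / 2) atTop atTop :=
    (tendsto_pow_atTop (by norm_num)).atTop_div_const (by norm_num)
  exact tendsto_neg_atBot_iff.mpr this |>.congr fun t => by ring

lemma steinG_cont : Continuous steinG := by
  have : Continuous fun t : ℝ => -t ^ 2 / 2 := by continuity
  exact Real.continuous_exp.comp this

lemma steinG_int : Integrable steinG := by
  have h := integrable_exp_neg_mul_sq (by norm_num : (0:ℝ) < 1/2)
  refine h.congr (ae_of_all _ fun t => ?_)
  unfold steinG; ring_nf

lemma integral_tgg_Ioi (w : ℝ) : ∫ t in Ioi w, t * steinG t = steinG w := by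
  have h := integral_Ioi_of_hasDerivAt_of_tendsto
    (f := fun t => -steinG t) (f' := fun t => t * steinG t) (a := w) (m := 0)
    (steinG_cont.neg.continuousWithinAt) (fun t _ => steinG_deriv t)
    tgg_int.integrableOn steinG_tendsto
  rw [h]; ring

noncomputable def steinA (w : ℝ) : ℝ := ∫ t in Iic w, steinG t
noncomputable def steinB (w : ℝ) : ℝ := ∫ t in Ioi w, steinG t

lemma steinA_eq (w : ℝ) : steinA w = steinB (-w) := by
  have h := integral_comp_neg_Ioi (-w) steinG
  rw [neg_neg] at h
  rw [steinA, steinB, ← h]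
  exact setIntegral_congr_fun measurableSet_Ioi fun t _ => steinG_neg t

lemma millsB (w : ℝ) : w * (Real.exp (w ^ 2 / 2) * steinB w) ≤ 1 := by
  rcases le_or_gt w 0 with hw | hw
  · have hB : 0 ≤ steinB w := setIntegral_nonneg measurableSet_Ioi fun t _ => (steinG_pos t).le
    have : w * (Real.exp (w ^ 2 / 2) * steinB w) ≤ 0 :=
      mul_nonpos_of_nonpos_of_nonneg hw (by positivity)
    linarith
  · have hmono : steinB w ≤ (1 / w) * steinG w := by
      have h1 : steinB w ≤ ∫ t in Ioi w, (1 / w) * (t * steinG t) := by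
        rw [steinB]
        refine setIntegral_mono_on steinG_int.integrableOn
          ((tgg_int.integrableOn).const_mul _) measurableSet_Ioi fun t ht => ?_
        have htw : w ≤ t := le_of_lt ht
        have : 1 ≤ t / w := (one_le_div hw).mpr htw
        have := mul_le_mul_of_nonneg_right this (steinG_pos t).le
        rw [one_mul] at this
        calc steinG t ≤ t / w * steinG t := this
          _ = 1 / w * (t * steinG t) := by ring
      rwa [MeasureTheory.integral_const_mul, integral_tgg_Ioi] at h1
    have h2 : w * (Real.exp (w ^ 2 / 2) * steinB w) ≤
        w * (Real.exp (w ^ 2 / 2) * ((1 / w) * steinG w)) := by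
      have : Real.exp (w ^ 2 / 2) * steinB w ≤ Real.exp (w ^ 2 / 2) * ((1 / w) * steinG w) :=
        mul_le_mul_of_nonneg_left hmono (Real.exp_pos _).le
      exact mul_le_mul_of_nonneg_left this hw.le
    have h3 : w * (Real.exp (w ^ 2 / 2) * ((1 / w) * steinG w)) = 1 := by
      have he : Real.exp (w ^ 2 / 2) * steinG w = 1 := by
        unfold steinG
        rw [← Real.exp_add, show w ^ 2 / 2 + -w ^ 2 / 2 = 0 by ring, Real.exp_zero]
      calc w * (Real.exp (w ^ 2 / 2) * (1 / w * steinG w))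
          = (Real.exp (w ^ 2 / 2) * steinG w) * (w * (1 / w)) := by ring
        _ = 1 := by rw [mul_one_div_cancel hw.ne', mul_one, he]
    linarith

lemma millsA (w : ℝ) : -w * (Real.exp (w ^ 2 / 2) * steinA w) ≤ 1 := by
  rw [steinA_eq]
  have h := millsB (-w)
  rw [show (-w) ^ 2 = w ^ 2 by ring] at h
  exact h

lemma steinG_total : ∫ t, steinG t = Real.sqrt (2 * Real.pi) := by
  rw [show (fun t => steinG t) = fun t => Real.exp (-(1/2) * t ^ 2) from
    funext fun t => by unfold steinG; ring_nf]
  rw [integral_gaussian, show Real.pi / (1/2) = 2 * Real.pi by ring]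

lemma steinAB (w : ℝ) : steinA w + steinB w = Real.sqrt (2 * Real.pi) := by
  rw [steinA, steinB, intervalIntegral.integral_Iic_add_Ioi (steinG_int.integrableOn)
    (steinG_int.integrableOn), steinG_total]

lemma steinB_nonneg (w : ℝ) : 0 ≤ steinB w :=
  setIntegral_nonneg measurableSet_Ioi fun t _ => (steinG_pos t).le

lemma steinA_nonneg (w : ℝ) : 0 ≤ steinA w :=
  setIntegral_nonneg measurableSet_Iic fun t _ => (steinG_pos t).le

lemma steinA_pos (w : ℝ) : 0 < steinA w := by
  rw [steinA, setIntegral_pos_iff_support_of_nonneg_ae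
    (ae_of_all _ fun t => (steinG_pos t).le) steinG_int.integrableOn]
  have : Function.support steinG = Set.univ := by
    ext t; simp [Function.support, (steinG_pos t).ne']
  rw [this, Set.univ_inter]
  simp

lemma steinB_pos (w : ℝ) : 0 < steinB w := by
  rw [steinB, setIntegral_pos_iff_support_of_nonneg_ae
    (ae_of_all _ fun t => (steinG_pos t).le) steinG_int.integrableOn]
  have : Function.support steinG = Set.univ := by
    ext t; simp [Function.support, (steinG_pos t).ne']
  rw [this, Set.univ_inter]
  simp

lemma steinB_zero : steinB 0 = Real.sqrt (2 * Real.pi) / 2 := by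
  have h := steinA_eq 0
  rw [neg_zero] at h
  have h2 := steinAB 0
  linarith

lemma steinG_inv (w : ℝ) : Real.exp (w ^ 2 / 2) * steinG w = 1 := by
  unfold steinG
  rw [← Real.exp_add, show w ^ 2 / 2 + -w ^ 2 / 2 = 0 by ring, Real.exp_zero]

-- translated moment integrals
lemma T0 (w : ℝ) : ∫ t in Ioi w, steinG (t - w) = steinB 0 := by
  rw [translate_Ioi w steinG]; rfl

lemma T1 (w : ℝ) : ∫ t in Ioi w, (t - w) * steinG (t - w) = 1 := by
  rw [translate_Ioi w (fun s => s * steinG s), integral_tgg_Ioi]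
  unfold steinG; norm_num

lemma steinG_hasDeriv (t : ℝ) : HasDerivAt steinG (-t * steinG t) t := by
  have h := (steinG_deriv t).neg
  simp only [Pi.neg_def, neg_neg] at h
  exact h.congr_deriv (by ring)

lemma tgg_norm_bound (t : ℝ) : ‖t * steinG t‖ ≤ Real.exp (-(1/4) * t ^ 2) := by
  have h1 : |t| ≤ 1 + t ^ 2 / 4 := by nlinarith [sq_abs t, abs_nonneg t, sq_nonneg (|t| - 2)]
  have h2 : 1 + t ^ 2 / 4 ≤ Real.exp (t ^ 2 / 4) := by
    have := Real.add_one_le_exp (t ^ 2 / 4); linarith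
  have : ‖t * steinG t‖ = |t| * Real.exp (-t ^ 2 / 2) := by
    rw [norm_mul, Real.norm_eq_abs, Real.norm_eq_abs, abs_of_pos (steinG_pos t)]; rfl
  rw [this]
  calc |t| * Real.exp (-t ^ 2 / 2) ≤ Real.exp (t ^ 2 / 4) * Real.exp (-t ^ 2 / 2) := by
        apply mul_le_mul_of_nonneg_right (h1.trans h2) (Real.exp_pos _).le
    _ = Real.exp (-(1/4) * t ^ 2) := by rw [← Real.exp_add]; ring_nf

lemma tgg_tendsto : Tendsto (fun t => -(t * steinG t)) atTop (nhds 0) := by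
  apply squeeze_zero_norm (fun t => by simpa using tgg_norm_bound t)
  apply Real.tendsto_exp_atBot.comp
  have : Tendsto (fun t : ℝ => (1/4) * t ^ 2) atTop atTop :=
    (tendsto_pow_atTop (by norm_num)).const_mul_atTop (by norm_num)
  exact tendsto_neg_atBot_iff.mpr this |>.congr fun t => by ring

lemma J2 : ∫ t in Ioi (0:ℝ), t ^ 2 * steinG t = steinB 0 := by
  have hderiv : ∀ t : ℝ, HasDerivAt (fun t => -(t * steinG t))
      (t ^ 2 * steinG t - steinG t) t := by
    intro t
    have h := ((hasDerivAt_id t).mul (steinG_hasDeriv t)).neg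
    exact h.congr_deriv (by simp only [id]; ring)
  have hint : IntegrableOn (fun t : ℝ => t ^ 2 * steinG t - steinG t) (Ioi 0) :=
    (t2gg_int.sub steinG_int).integrableOn
  have h := integral_Ioi_of_hasDerivAt_of_tendsto (a := (0:ℝ)) (m := 0)
    (Continuous.continuousWithinAt ((continuous_id.mul steinG_cont).neg))
    (fun t _ => hderiv t) hint tgg_tendsto
  rw [integral_sub t2gg_int.integrableOn steinG_int.integrableOn] at h
  have : ∫ t in Ioi (0:ℝ), steinG t = steinB 0 := rfl
  rw [this] at h
  simp at h
  linarith

lemma T2 (w : ℝ) : ∫ t in Ioi w, (t - w) ^ 2 * steinG (t - w) = steinB 0 := by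
  rw [translate_Ioi w (fun s => s ^ 2 * steinG s), J2]

lemma quad_pos (y : ℝ) : 0 ≤ 1 - y + y ^ 2 / 2 := by nlinarith [sq_nonneg (y - 1)]

lemma exp_neg_le_quad {y : ℝ} (hy : 0 ≤ y) : Real.exp (-y) ≤ 1 - y + y ^ 2 / 2 := by
  have h1 : 1 + y + y ^ 2 / 2 ≤ Real.exp y := by
    have h3 := Real.sum_le_exp_of_nonneg hy 3
    have he : ∑ i ∈ Finset.range 3, y ^ i / (Nat.factorial i) = 1 + y + y ^ 2 / 2 := by
      simp [Finset.sum_range_succ, Nat.factorial]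
      try ring
    linarith [he ▸ h3]
  have h2 : Real.exp (-y) * Real.exp y = 1 := by rw [← Real.exp_add]; simp
  have h4 := mul_le_mul_of_nonneg_left h1 (quad_pos y)
  nlinarith [Real.exp_pos y, Real.exp_pos (-y), sq_nonneg (y ^ 2)]

lemma steinG_factor (w t : ℝ) :
    steinG t = steinG w * (steinG (t - w) * Real.exp (-(w * (t - w)))) := by
  unfold steinG
  rw [← Real.exp_add, ← Real.exp_add]
  congr 1
  ring

lemma steinm_lower (w : ℝ) : steinB 0 - w ≤ Real.exp (w ^ 2 / 2) * steinB w := by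
  have i1 : Integrable (fun t : ℝ => steinG (t - w)) := steinG_int.comp_sub_right w
  have i2 : Integrable (fun t : ℝ => w * ((t - w) * steinG (t - w))) := by
    have h := (tgg_int.comp_sub_right w).const_mul w
    exact h
  have i12 : Integrable (fun t : ℝ => steinG (t - w) - w * ((t - w) * steinG (t - w))) :=
    i1.sub i2
  have key : steinG w * (steinB 0 - w) ≤ steinB w := by
    have hmono : ∫ t in Ioi w, steinG w * (steinG (t - w) - w * ((t - w) * steinG (t - w)))
        ≤ steinB w := by
      rw [steinB]
      refine setIntegral_mono_on ?_ steinG_int.integrableOn measurableSet_Ioi fun t ht => ?_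
      · exact (i12.const_mul (steinG w)).integrableOn
      · rw [steinG_factor w t]
        have h1 : 1 - w * (t - w) ≤ Real.exp (-(w * (t - w))) := by
          have := Real.add_one_le_exp (-(w * (t - w))); linarith
        have h2 : steinG w * (steinG (t - w) * (1 - w * (t - w))) ≤
            steinG w * (steinG (t - w) * Real.exp (-(w * (t - w)))) := by
          apply mul_le_mul_of_nonneg_left _ (steinG_pos w).le
          apply mul_le_mul_of_nonneg_left h1 (steinG_pos (t - w)).le
        calc steinG w * (steinG (t - w) - w * ((t - w) * steinG (t - w)))
            = steinG w * (steinG (t - w) * (1 - w * (t - w))) := by ring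
          _ ≤ _ := h2
    have hval : ∫ t in Ioi w, steinG w * (steinG (t - w) - w * ((t - w) * steinG (t - w)))
        = steinG w * (steinB 0 - w) := by
      rw [MeasureTheory.integral_const_mul,
        integral_sub i1.integrableOn i2.integrableOn,
        MeasureTheory.integral_const_mul, T0, T1]
      ring
    linarith [hval ▸ hmono]
  have := mul_le_mul_of_nonneg_left key (Real.exp_pos (w ^ 2 / 2)).le
  calc steinB 0 - w = (Real.exp (w ^ 2 / 2) * steinG w) * (steinB 0 - w) := by
        rw [steinG_inv]; ring
    _ = Real.exp (w ^ 2 / 2) * (steinG w * (steinB 0 - w)) := by ring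
    _ ≤ Real.exp (w ^ 2 / 2) * steinB w := this

lemma steinm_upper {w : ℝ} (hw : 0 ≤ w) :
    Real.exp (w ^ 2 / 2) * steinB w ≤ steinB 0 - w + w ^ 2 / 2 * steinB 0 := by
  have i1 : Integrable (fun t : ℝ => steinG (t - w)) := steinG_int.comp_sub_right w
  have i2 : Integrable (fun t : ℝ => w * ((t - w) * steinG (t - w))) := by
    have h := (tgg_int.comp_sub_right w).const_mul w
    exact h
  have i3 : Integrable (fun t : ℝ => w ^ 2 / 2 * ((t - w) ^ 2 * steinG (t - w))) := by
    have h := (t2gg_int.comp_sub_right w).const_mul (w ^ 2 / 2)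
    exact h
  have i12 : Integrable (fun t : ℝ => steinG (t - w) - w * ((t - w) * steinG (t - w))) :=
    i1.sub i2
  have i123 : Integrable (fun t : ℝ => steinG (t - w) - w * ((t - w) * steinG (t - w))
      + w ^ 2 / 2 * ((t - w) ^ 2 * steinG (t - w))) := i12.add i3
  have key : steinB w ≤ steinG w * (steinB 0 - w + w ^ 2 / 2 * steinB 0) := by
    have hmono : steinB w ≤ ∫ t in Ioi w, steinG w * (steinG (t - w)
        - w * ((t - w) * steinG (t - w)) + w ^ 2 / 2 * ((t - w) ^ 2 * steinG (t - w))) := by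
      rw [steinB]
      refine setIntegral_mono_on steinG_int.integrableOn ?_ measurableSet_Ioi fun t ht => ?_
      · exact (i123.const_mul (steinG w)).integrableOn
      · rw [steinG_factor w t]
        have hy : 0 ≤ w * (t - w) := mul_nonneg hw (by simp at ht; linarith)
        have h1 := exp_neg_le_quad hy
        have h2 : steinG w * (steinG (t - w) * Real.exp (-(w * (t - w)))) ≤
            steinG w * (steinG (t - w) * (1 - w * (t - w) + (w * (t - w)) ^ 2 / 2)) := by
          apply mul_le_mul_of_nonneg_left _ (steinG_pos w).le
          apply mul_le_mul_of_nonneg_left h1 (steinG_pos (t - w)).le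
        calc steinG w * (steinG (t - w) * Real.exp (-(w * (t - w)))) ≤ _ := h2
          _ = steinG w * (steinG (t - w) - w * ((t - w) * steinG (t - w))
              + w ^ 2 / 2 * ((t - w) ^ 2 * steinG (t - w))) := by ring
    have hval : ∫ t in Ioi w, steinG w * (steinG (t - w)
        - w * ((t - w) * steinG (t - w)) + w ^ 2 / 2 * ((t - w) ^ 2 * steinG (t - w)))
        = steinG w * (steinB 0 - w + w ^ 2 / 2 * steinB 0) := by
      rw [MeasureTheory.integral_const_mul,
        integral_add i12.integrableOn i3.integrableOn,
        integral_sub i1.integrableOn i2.integrableOn,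
        MeasureTheory.integral_const_mul, MeasureTheory.integral_const_mul, T0, T1, T2]
      ring
    linarith [hval ▸ hmono]
  have := mul_le_mul_of_nonneg_left key (Real.exp_pos (w ^ 2 / 2)).le
  calc Real.exp (w ^ 2 / 2) * steinB w
      ≤ Real.exp (w ^ 2 / 2) * (steinG w * (steinB 0 - w + w ^ 2 / 2 * steinB 0)) := this
    _ = (Real.exp (w ^ 2 / 2) * steinG w) * (steinB 0 - w + w ^ 2 / 2 * steinB 0) := by ring
    _ = steinB 0 - w + w ^ 2 / 2 * steinB 0 := by rw [steinG_inv]; ring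

set_option maxHeartbeats 1600000 in
lemma product_le_aux {w : ℝ} (hw : 0 ≤ w) :
    steinA w * (Real.exp (w ^ 2 / 2) * steinB w) ≤ Real.sqrt (2 * Real.pi) := by
  set c := Real.sqrt (2 * Real.pi) with hc
  have hc2 : c ^ 2 = 2 * Real.pi := Real.sq_sqrt (by positivity)
  have hcpos : 0 < c := Real.sqrt_pos.mpr (by positivity)
  have hclb : (2.5 : ℝ) ≤ c := by nlinarith [Real.pi_gt_d6]
  have hcub : c ≤ 2.51 := by nlinarith [Real.pi_lt_d2]
  have hB0 : steinB 0 = c / 2 := steinB_zero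
  set m := Real.exp (w ^ 2 / 2) * steinB w with hm
  have hmpos : 0 < m := mul_pos (Real.exp_pos _) (steinB_pos w)
  have hA : steinA w = c - Real.exp (-w ^ 2 / 2) * m := by
    have h1 := steinAB w
    have h2 : Real.exp (-w ^ 2 / 2) * m = steinB w := by
      rw [hm, ← mul_assoc, ← Real.exp_add, show -w ^ 2 / 2 + w ^ 2 / 2 = 0 by ring,
        Real.exp_zero, one_mul]
    linarith
  rcases le_or_gt 1 w with h1 | h1
  · have hm1 : m ≤ 1 := by
      have h := millsB w
      nlinarith
    have hA' : steinA w ≤ c := by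
      have := steinB_pos w; have := steinAB w; linarith
    calc steinA w * m ≤ steinA w * 1 :=
          mul_le_mul_of_nonneg_left hm1 (steinA_nonneg w)
      _ ≤ c := by rw [mul_one]; exact hA'
  · have hu : m ≤ c / 2 - w + w ^ 2 / 2 * (c / 2) := by
      have := steinm_upper hw; rw [hB0] at this; linarith
    have hl : c / 2 - w ≤ m := by
      have := steinm_lower w; rw [hB0] at this; linarith
    have hlpos : 0 ≤ c / 2 - w := by linarith
    have hexp : 1 - w ^ 2 / 2 ≤ Real.exp (-w ^ 2 / 2) := by
      have := Real.add_one_le_exp (-w ^ 2 / 2); linarith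
    have hexppos : 0 ≤ 1 - w ^ 2 / 2 := by nlinarith
    have hprod : steinA w * m = c * m - Real.exp (-w ^ 2 / 2) * m ^ 2 := by rw [hA]; ring
    have h2 : (1 - w ^ 2 / 2) * (c / 2 - w) ^ 2 ≤ Real.exp (-w ^ 2 / 2) * m ^ 2 := by
      have hm2 : (c / 2 - w) ^ 2 ≤ m ^ 2 := by nlinarith
      nlinarith [Real.exp_pos (-w ^ 2 / 2)]
    have h3 : c * m ≤ c * (c / 2 - w + w ^ 2 / 2 * (c / 2)) :=
      mul_le_mul_of_nonneg_left hu hcpos.le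
    rw [hprod]
    have expand : c * (c / 2 - w + w ^ 2 / 2 * (c / 2)) - (1 - w ^ 2 / 2) * (c / 2 - w) ^ 2
        = c ^ 2 / 4 + (3 * c ^ 2 / 8 - 1) * w ^ 2 - c / 2 * w ^ 3 + w ^ 4 / 2 := by ring
    have key : c ^ 2 / 4 + (3 * c ^ 2 / 8 - 1) * w ^ 2 - c / 2 * w ^ 3 + w ^ 4 / 2 ≤ c := by
      rw [hc2]
      have hw1 : w ≤ 1 := h1.le
      have e1 : Real.pi ≤ 3.15 := by linarith [Real.pi_lt_d2]
      have hw3 : (0:ℝ) ≤ w ^ 3 := by positivity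
      have t3 : w ^ 4 ≤ w ^ 3 := by
        nlinarith [mul_nonneg (mul_nonneg (mul_nonneg hw hw) hw) (sub_nonneg.2 hw1)]
      have hc' : 0 ≤ (c - 2.5) * w ^ 3 := mul_nonneg (by linarith) hw3
      have hpi' : 0 ≤ (3.15 - Real.pi) * w ^ 2 := mul_nonneg (by linarith) (sq_nonneg w)
      have hq : 0 ≤ (w - w ^ 2) * (1.3625 - 0.75 * w) := by
        apply mul_nonneg
        · nlinarith [mul_nonneg hw (sub_nonneg.2 hw1)]
        · linarith
      nlinarith [sq_nonneg (w - 10901/12000)]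
    linarith [expand ▸ (by linarith : c * m - Real.exp (-w ^ 2 / 2) * m ^ 2
      ≤ c * (c / 2 - w + w ^ 2 / 2 * (c / 2)) - (1 - w ^ 2 / 2) * (c / 2 - w) ^ 2)]

lemma product_le (w : ℝ) :
    steinA w * (Real.exp (w ^ 2 / 2) * steinB w) ≤ Real.sqrt (2 * Real.pi) := by
  rcases le_or_gt 0 w with hw | hw
  · exact product_le_aux hw
  · have h1 : steinA w = steinB (-w) := steinA_eq w
    have h2 : steinB w = steinA (-w) := by
      have h := steinA_eq (-w); rw [neg_neg] at h; exact h.symm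
    have h := product_le_aux (by linarith : (0:ℝ) ≤ -w)
    rw [show (-w) ^ 2 = w ^ 2 by ring] at h
    calc steinA w * (Real.exp (w ^ 2 / 2) * steinB w)
        = steinA (-w) * (Real.exp (w ^ 2 / 2) * steinB (-w)) := by rw [h1, h2]; ring
      _ ≤ _ := h

lemma sqrt2pi_pos : 0 < Real.sqrt (2 * Real.pi) := Real.sqrt_pos.mpr (by positivity)

lemma Phi_eq (y : ℝ) :
    ((gaussianReal 0 1) (Set.Iic y)).toReal = steinA y / Real.sqrt (2 * Real.pi) := by
  rw [gaussianReal_apply_eq_integral 0 (by norm_num) (Set.Iic y)]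
  rw [ENNReal.toReal_ofReal (setIntegral_nonneg measurableSet_Iic
    fun t _ => gaussianPDFReal_nonneg 0 1 t)]
  have hp : ∀ t : ℝ, gaussianPDFReal 0 1 t = (Real.sqrt (2 * Real.pi))⁻¹ * steinG t := by
    intro t
    unfold gaussianPDFReal steinG
    norm_num
  rw [setIntegral_congr_fun measurableSet_Iic fun t _ => hp t,
    MeasureTheory.integral_const_mul]
  rw [steinA, div_eq_inv_mul]

lemma steinA_mono {w y : ℝ} (h : w ≤ y) : steinA w ≤ steinA y := by
  rw [steinA, steinA]
  exact setIntegral_mono_set steinG_int.integrableOn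
    (ae_of_all _ fun t => (steinG_pos t).le)
    (HasSubset.Subset.eventuallyLE (Iic_subset_Iic.mpr h))

/-- Bounds on the solution of the Stein equation for the indicator test function
`h(w) = 1_{w ≤ x}`: the bounded solution `f_x` satisfies `‖f_x‖_∞ ≤ 1` and
`‖f_x'‖_∞ ≤ 1`, where the a.e. derivative is given via the Stein equation
`f_x'(w) = w f_x(w) + 1_{w ≤ x} - Φ(x)`. -/
theorem stein_solution_indicator_bounds (x : ℝ)
    (Φ : ℝ → ℝ) (hΦ : ∀ y, Φ y = ((gaussianReal 0 1) (Set.Iic y)).toReal)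
    (f : ℝ → ℝ)
    (hf : ∀ w, f w = Real.exp (w ^ 2 / 2) *
      ∫ t in Set.Iic w, ((if t ≤ x then (1 : ℝ) else 0) - Φ x) * Real.exp (-t ^ 2 / 2)) :
    (∀ w, |f w| ≤ 1) ∧
    (∀ w, |w * f w + ((if w ≤ x then (1 : ℝ) else 0) - Φ x)| ≤ 1) := by
  set c := Real.sqrt (2 * Real.pi) with hc
  have hcpos : 0 < c := sqrt2pi_pos
  have hPhi : ∀ y, Φ y = steinA y / c := fun y => (hΦ y).trans (Phi_eq y)
  have hPhix : Φ x = steinA x / c := hPhi x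
  have hPhi_nonneg : 0 ≤ Φ x := by
    rw [hPhix]; exact div_nonneg (steinA_nonneg x) hcpos.le
  have hABx := steinAB x
  have hPhi_le_one : Φ x ≤ 1 := by
    rw [hPhix, div_le_one hcpos]; linarith [steinB_pos x]
  have hPhixc : Φ x * c = steinA x := by
    rw [hPhix]; field_simp
  -- f values
  have hval1 : ∀ w, w ≤ x → f w = (1 - Φ x) * (Real.exp (w ^ 2 / 2) * steinA w) := by
    intro w hwx
    rw [hf w]
    have h : ∫ t in Set.Iic w, ((if t ≤ x then (1 : ℝ) else 0) - Φ x) * Real.exp (-t ^ 2 / 2)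
        = (1 - Φ x) * steinA w := by
      rw [show (1 - Φ x) * steinA w
          = ∫ t in Set.Iic w, (1 - Φ x) * steinG t from (MeasureTheory.integral_const_mul _ _).symm]
      refine setIntegral_congr_fun measurableSet_Iic fun t ht => ?_
      rw [if_pos (le_trans ht hwx)]
      rfl
    rw [h]; ring
  have hval2 : ∀ w, x < w → f w = Φ x * (Real.exp (w ^ 2 / 2) * steinB w) := by
    intro w hwx
    rw [hf w]
    have hind : Integrable (fun t : ℝ => (if t ≤ x then (1:ℝ) else 0) * steinG t) := by
      have h := steinG_int.indicator (measurableSet_Iic (a := x))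
      refine h.congr (ae_of_all _ fun t => ?_)
      by_cases ht : t ≤ x <;> simp [Set.indicator, ht]
    have hF : Integrable (fun t : ℝ => ((if t ≤ x then (1:ℝ) else 0) - Φ x) * steinG t) := by
      have h := hind.sub (steinG_int.const_mul (Φ x))
      refine h.congr (ae_of_all _ fun t => ?_)
      simp only [Pi.sub_apply]
      ring
    have htot : ∫ t, ((if t ≤ x then (1:ℝ) else 0) - Φ x) * steinG t = 0 := by
      have h1 : ∫ t, ((if t ≤ x then (1:ℝ) else 0) - Φ x) * steinG t
          = (∫ t, (if t ≤ x then (1:ℝ) else 0) * steinG t) - ∫ t, Φ x * steinG t := by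
        rw [← integral_sub hind (steinG_int.const_mul (Φ x))]
        congr 1; funext t; ring
      have h2 : ∫ t, (if t ≤ x then (1:ℝ) else 0) * steinG t = steinA x := by
        rw [show (fun t => (if t ≤ x then (1:ℝ) else 0) * steinG t)
            = Set.indicator (Set.Iic x) steinG from funext fun t => by
          by_cases ht : t ≤ x <;> simp [Set.indicator, ht]]
        rw [MeasureTheory.integral_indicator measurableSet_Iic]
        rfl
      have h3 : ∫ t, Φ x * steinG t = Φ x * c := by
        rw [MeasureTheory.integral_const_mul, steinG_total, ← hc]
      rw [h1, h2, h3, hPhixc]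
      ring
    have hsplit := intervalIntegral.integral_Iic_add_Ioi (b := w)
      hF.integrableOn hF.integrableOn
    have hIoi : ∫ t in Set.Ioi w, ((if t ≤ x then (1:ℝ) else 0) - Φ x) * steinG t
        = -(Φ x * steinB w) := by
      rw [show -(Φ x * steinB w) = ∫ t in Set.Ioi w, -(Φ x) * steinG t by
        rw [MeasureTheory.integral_const_mul, steinB]; ring]
      refine setIntegral_congr_fun measurableSet_Ioi fun t ht => ?_
      rw [if_neg (by simp only [Set.mem_Ioi] at ht; linarith : ¬ t ≤ x)]
      ring
    rw [htot, hIoi] at hsplit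
    have h4 : ∫ t in Set.Iic w, ((if t ≤ x then (1:ℝ) else 0) - Φ x) * Real.exp (-t ^ 2 / 2)
        = Φ x * steinB w := by
      have : ∫ t in Set.Iic w, ((if t ≤ x then (1:ℝ) else 0) - Φ x) * Real.exp (-t ^ 2 / 2)
          = ∫ t in Set.Iic w, ((if t ≤ x then (1:ℝ) else 0) - Φ x) * steinG t := rfl
      rw [this]; linarith
    rw [h4]; ring
  constructor
  · intro w
    rcases le_or_gt w x with hwx | hwx
    · rw [hval1 w hwx, abs_le]
      have hnn : 0 ≤ Real.exp (w ^ 2 / 2) * steinA w :=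
        mul_nonneg (Real.exp_pos _).le (steinA_nonneg w)
      constructor
      · nlinarith
      · have hm : 1 - Φ x ≤ 1 - Φ w := by
          rw [hPhix, hPhi w]
          have := steinA_mono hwx
          gcongr
        have hw0 : 1 - Φ w = steinB w / c := by
          rw [hPhi w]
          have := steinAB w
          field_simp
          linarith
        have step1 : (1 - Φ x) * (Real.exp (w ^ 2 / 2) * steinA w)
            ≤ (steinB w / c) * (Real.exp (w ^ 2 / 2) * steinA w) := by
          rw [← hw0]; exact mul_le_mul_of_nonneg_right hm hnn
        have step2 : (steinB w / c) * (Real.exp (w ^ 2 / 2) * steinA w)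
            = steinA w * (Real.exp (w ^ 2 / 2) * steinB w) / c := by ring
        have step3 : steinA w * (Real.exp (w ^ 2 / 2) * steinB w) / c ≤ 1 := by
          rw [div_le_one hcpos]; exact product_le w
        linarith
    · rw [hval2 w hwx, abs_le]
      have hnn : 0 ≤ Real.exp (w ^ 2 / 2) * steinB w :=
        mul_nonneg (Real.exp_pos _).le (steinB_nonneg w)
      constructor
      · nlinarith
      · have hm : Φ x ≤ Φ w := by
          rw [hPhix, hPhi w]
          have := steinA_mono hwx.le
          gcongr
        have step1 : Φ x * (Real.exp (w ^ 2 / 2) * steinB w)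
            ≤ (steinA w / c) * (Real.exp (w ^ 2 / 2) * steinB w) := by
          rw [← hPhi w]; exact mul_le_mul_of_nonneg_right hm hnn
        have step3 : steinA w * (Real.exp (w ^ 2 / 2) * steinB w) / c ≤ 1 := by
          rw [div_le_one hcpos]; exact product_le w
        have step2 : steinA w / c * (Real.exp (w ^ 2 / 2) * steinB w)
            = steinA w * (Real.exp (w ^ 2 / 2) * steinB w) / c := by ring
        linarith
  · intro w
    rcases le_or_gt w x with hwx | hwx
    · rw [if_pos hwx, hval1 w hwx]
      have hu1 : -1 ≤ w * (Real.exp (w ^ 2 / 2) * steinA w) := by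
        have := millsA w; linarith
      have hexpr : w * ((1 - Φ x) * (Real.exp (w ^ 2 / 2) * steinA w)) + (1 - Φ x)
          = (1 - Φ x) * (w * (Real.exp (w ^ 2 / 2) * steinA w) + 1) := by ring
      rw [hexpr, abs_le]
      constructor
      · nlinarith
      · have hm : 1 - Φ x ≤ 1 - Φ w := by
          rw [hPhix, hPhi w]
          have := steinA_mono hwx
          gcongr
        have step1 : (1 - Φ x) * (w * (Real.exp (w ^ 2 / 2) * steinA w) + 1)
            ≤ (1 - Φ w) * (w * (Real.exp (w ^ 2 / 2) * steinA w) + 1) :=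
          mul_le_mul_of_nonneg_right hm (by linarith)
        have key : (1 - Φ w) * (w * (Real.exp (w ^ 2 / 2) * steinA w) + 1) ≤ 1 := by
          have hw0 : 1 - Φ w = steinB w / c := by
            rw [hPhi w]
            have := steinAB w
            field_simp
            linarith
          rw [hw0, div_mul_eq_mul_div, div_le_one hcpos]
          have hBu : steinB w * (w * (Real.exp (w ^ 2 / 2) * steinA w)) ≤ steinA w := by
            have hmb := millsB w
            have h := mul_le_mul_of_nonneg_left hmb (steinA_pos w).le
            calc steinB w * (w * (Real.exp (w ^ 2 / 2) * steinA w))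
                = steinA w * (w * (Real.exp (w ^ 2 / 2) * steinB w)) := by ring
              _ ≤ steinA w * 1 := h
              _ = steinA w := mul_one _
          have := steinAB w
          nlinarith
        linarith
    · rw [if_neg (not_le.mpr hwx), hval2 w hwx]
      have hv1 : w * (Real.exp (w ^ 2 / 2) * steinB w) ≤ 1 := millsB w
      have hexpr : w * (Φ x * (Real.exp (w ^ 2 / 2) * steinB w)) + (0 - Φ x)
          = Φ x * (w * (Real.exp (w ^ 2 / 2) * steinB w) - 1) := by ring
      rw [hexpr, abs_le]
      constructor
      · have hm : Φ x ≤ Φ w := by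
          rw [hPhix, hPhi w]
          have := steinA_mono hwx.le
          gcongr
        have step1 : Φ x * (1 - w * (Real.exp (w ^ 2 / 2) * steinB w))
            ≤ Φ w * (1 - w * (Real.exp (w ^ 2 / 2) * steinB w)) :=
          mul_le_mul_of_nonneg_right hm (by linarith)
        have key : Φ w * (1 - w * (Real.exp (w ^ 2 / 2) * steinB w)) ≤ 1 := by
          rw [hPhi w, div_mul_eq_mul_div, div_le_one hcpos]
          have hAv : -(steinA w * (w * (Real.exp (w ^ 2 / 2) * steinB w))) ≤ steinB w := by
            have hma := millsA w
            have h := mul_le_mul_of_nonneg_left hma (steinB_pos w).le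
            calc -(steinA w * (w * (Real.exp (w ^ 2 / 2) * steinB w)))
                = steinB w * (-w * (Real.exp (w ^ 2 / 2) * steinA w)) := by ring
              _ ≤ steinB w * 1 := h
              _ = steinB w := mul_one _
          have := steinAB w
          nlinarith
        linarith
      · nlinarith
end

section
/- For a test function h : ℝ → ℝ that is continuously differentiable with ‖h'‖_∞ ≤ 1, the bounded solution f_h of the Stein equation f'(w) - w·f(w) = h(w) - E[h(Z)] is twice differentiable and satisfies ‖f_h''‖_∞ ≤ 2‖h'‖_∞. -/
open MeasureTheory ProbabilityTheory Real Set Filter Topology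
open scoped ENNReal NNReal

noncomputable def stE (t : ℝ) : ℝ := Real.exp (-t ^ 2 / 2)
noncomputable def stP (w : ℝ) : ℝ := ∫ s in Set.Iic w, stE s
noncomputable def stQ (w : ℝ) : ℝ := ∫ s in Set.Ioi w, stE s

lemma stE_eq : stE = fun t => Real.exp (-(1/2) * t ^ 2) := by
  funext t; unfold stE; ring_nf

lemma stE_pos (t : ℝ) : 0 < stE t := Real.exp_pos _
lemma stE_nonneg (t : ℝ) : 0 ≤ stE t := (stE_pos t).le
lemma stE_neg (t : ℝ) : stE (-t) = stE t := by simp [stE]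
lemma stE_le_one (t : ℝ) : stE t ≤ 1 := by
  rw [show (1:ℝ) = Real.exp 0 by simp]
  apply Real.exp_le_exp.2
  nlinarith [sq_nonneg t]

lemma continuous_stE : Continuous stE := by
  rw [stE_eq]; exact (continuous_const.mul (continuous_pow 2)).rexp

lemma integrable_stE : Integrable stE := by
  rw [stE_eq]; exact integrable_exp_neg_mul_sq (by norm_num)

lemma integral_stE : ∫ t, stE t = Real.sqrt (2 * π) := by
  rw [stE_eq, integral_gaussian]
  norm_num [mul_comm]

lemma sqrt_two_pi_pos : 0 < Real.sqrt (2 * π) :=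
  Real.sqrt_pos.2 (by positivity)

lemma hasDerivAt_stE (w : ℝ) : HasDerivAt stE (-w * stE w) w := by
  have h1 : HasDerivAt (fun t : ℝ => -t ^ 2 / 2) (-w) w := by
    have := ((hasDerivAt_pow 2 w).neg).div_const 2
    exact this.congr_deriv (by norm_num; ring)
  unfold stE
  simpa [mul_comm] using h1.exp

lemma hasDerivAt_setIntegral_Iic (φ : ℝ → ℝ) (hc : Continuous φ)
    (hint : ∀ a : ℝ, IntegrableOn φ (Set.Iic a)) (w : ℝ) :
    HasDerivAt (fun u => ∫ s in Set.Iic u, φ s) (φ w) w := by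
  have key : (fun u => ∫ s in Set.Iic u, φ s)
      = fun u => (∫ s in Set.Iic 0, φ s) + ∫ s in (0:ℝ)..u, φ s := by
    funext u
    rw [← intervalIntegral.integral_Iic_sub_Iic (hint 0) (hint u)]; ring
  rw [key]
  exact (intervalIntegral.integral_hasDerivAt_right
    (hc.intervalIntegrable 0 w)
    (hc.stronglyMeasurableAtFilter _ _)
    hc.continuousAt).const_add _

lemma hasDerivAt_setIntegral_Ioi (φ : ℝ → ℝ) (hc : Continuous φ)
    (hint : ∀ a : ℝ, IntegrableOn φ (Set.Ioi a)) (w : ℝ) :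
    HasDerivAt (fun u => ∫ s in Set.Ioi u, φ s) (-φ w) w := by
  have H : HasDerivAt
      (fun u => (∫ s in Set.Ioi (w-1), φ s) - ∫ s in (w-1)..u, φ s) (-φ w) w :=
    HasDerivAt.const_sub _ (intervalIntegral.integral_hasDerivAt_right
      (hc.intervalIntegrable _ _)
      (hc.stronglyMeasurableAtFilter _ _)
      hc.continuousAt)
  refine H.congr_of_eventuallyEq ?_
  filter_upwards [Ioi_mem_nhds (by linarith : w - 1 < w)] with u hu
  have hle : w - 1 ≤ u := le_of_lt hu
  rw [intervalIntegral.integral_of_le hle,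
    ← Set.Ioc_union_Ioi_eq_Ioi hle,
    setIntegral_union (Set.Ioc_disjoint_Ioi le_rfl) measurableSet_Ioi
      ((hint (w-1)).mono_set Set.Ioc_subset_Ioi_self) (hint u)]
  ring

lemma hasDerivAt_stP (w : ℝ) : HasDerivAt stP (stE w) w :=
  hasDerivAt_setIntegral_Iic _ continuous_stE (fun _ => integrable_stE.integrableOn) w

lemma hasDerivAt_stQ (w : ℝ) : HasDerivAt stQ (-stE w) w :=
  hasDerivAt_setIntegral_Ioi _ continuous_stE (fun _ => integrable_stE.integrableOn) w

lemma continuous_stP : Continuous stP :=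
  (Differentiable.continuous fun w => (hasDerivAt_stP w).differentiableAt)

lemma continuous_stQ : Continuous stQ :=
  (Differentiable.continuous fun w => (hasDerivAt_stQ w).differentiableAt)

lemma stP_nonneg (w : ℝ) : 0 ≤ stP w :=
  setIntegral_nonneg measurableSet_Iic fun t _ => stE_nonneg t

lemma stQ_nonneg (w : ℝ) : 0 ≤ stQ w :=
  setIntegral_nonneg measurableSet_Ioi fun t _ => stE_nonneg t

lemma stP_add_stQ (w : ℝ) : stP w + stQ w = Real.sqrt (2 * π) := by
  rw [stP, stQ, intervalIntegral.integral_Iic_add_Ioi integrable_stE.integrableOn integrable_stE.integrableOn,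
    integral_stE]

lemma stP_le_sqrt (w : ℝ) : stP w ≤ Real.sqrt (2 * π) := by
  have := stP_add_stQ w; have := stQ_nonneg w; linarith

lemma stQ_le_sqrt (w : ℝ) : stQ w ≤ Real.sqrt (2 * π) := by
  have := stP_add_stQ w; have := stP_nonneg w; linarith

lemma stQ_eq_stP_neg (w : ℝ) : stQ w = stP (-w) := by
  rw [stP, ← integral_comp_neg_Ioi, stQ]
  exact setIntegral_congr_fun measurableSet_Ioi fun x _ => (stE_neg x).symm

lemma stE_tendsto_atBot : Tendsto stE atBot (𝓝 0) := by
  rw [stE_eq]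
  apply Real.tendsto_exp_atBot.comp
  have hsq : Tendsto (fun t : ℝ => t ^ 2) atBot atTop := by
    have := (tendsto_pow_atTop (n := 2) two_ne_zero).comp
      (tendsto_neg_atBot_atTop (G := ℝ))
    refine this.congr fun t => ?_
    simp [Function.comp]
  exact hsq.const_mul_atTop_of_neg (by norm_num)

lemma stE_tendsto_atTop : Tendsto stE atTop (𝓝 0) := by
  rw [stE_eq]
  apply Real.tendsto_exp_atBot.comp
  exact (tendsto_pow_atTop (n := 2) two_ne_zero).const_mul_atTop_of_neg (by norm_num)

lemma integrable_id_mul_stE : Integrable (fun t : ℝ => t * stE t) := by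
  rw [stE_eq]
  have := integrable_rpow_mul_exp_neg_mul_sq (b := 1/2) (by norm_num) (s := 1) (by norm_num)
  simpa [Real.rpow_one] using this

lemma integrable_abs_mul_stE : Integrable (fun t : ℝ => |t| * stE t) := by
  have := integrable_id_mul_stE.abs
  refine this.congr (ae_of_all _ fun t => ?_)
  simp only [abs_mul, abs_of_nonneg (stE_nonneg t)]

lemma integrable_neg_id_mul_stE : Integrable (fun t : ℝ => -t * stE t) := by
  have := integrable_id_mul_stE.neg
  refine this.congr (ae_of_all _ fun t => by simp [neg_mul])

lemma stP_le_tail {w : ℝ} (hw : w < 0) : stP w ≤ stE w / (-w) := by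
  have key : ∫ z in Set.Iic w, (-z) * stE z = stE w := by
    have := integral_Iic_of_hasDerivAt_of_tendsto' (f := stE)
      (f' := fun z => (-z) * stE z) (a := w) (m := 0)
      (fun x _ => hasDerivAt_stE x)
      integrable_neg_id_mul_stE.integrableOn
      stE_tendsto_atBot
    simpa using this
  have h1 : (-w) * stP w ≤ stE w := by
    rw [stP, ← integral_const_mul, ← key]
    refine setIntegral_mono_on
      (integrable_stE.integrableOn.const_mul _)
      integrable_neg_id_mul_stE.integrableOn measurableSet_Iic ?_
    intro z hz
    have : z ≤ w := hz
    have := stE_nonneg z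
    nlinarith
  rw [le_div_iff₀ (by linarith : (0:ℝ) < -w)]
  linarith [mul_comm (stP w) (-w)]

lemma stQ_le_tail {w : ℝ} (hw : 0 < w) : stQ w ≤ stE w / w := by
  have := stP_le_tail (w := -w) (by linarith)
  rw [← stQ_eq_stP_neg] at this
  simpa [stE_neg] using this

lemma stP_le_stE {s : ℝ} (hs : s ≤ -1) : stP s ≤ stE s := by
  have h := stP_le_tail (by linarith : s < 0)
  have h2 : stE s / (-s) ≤ stE s := by
    rw [div_le_iff₀ (by linarith : (0:ℝ) < -s)]
    nlinarith [stE_nonneg s]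
  linarith

lemma stQ_le_stE {s : ℝ} (hs : 1 ≤ s) : stQ s ≤ stE s := by
  have := stP_le_stE (s := -s) (by linarith)
  rw [← stQ_eq_stP_neg] at this
  simpa [stE_neg] using this

lemma integrableOn_stP_Iic (a : ℝ) : IntegrableOn stP (Set.Iic a) := by
  have base : IntegrableOn stP (Set.Iic (-1)) := by
    refine Integrable.mono integrable_stE.integrableOn
      (continuous_stP.aestronglyMeasurable.restrict) ?_
    rw [ae_restrict_iff' measurableSet_Iic]
    refine ae_of_all _ fun s hs => ?_
    rw [Real.norm_eq_abs, Real.norm_eq_abs, abs_of_nonneg (stP_nonneg s),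
      abs_of_nonneg (stE_nonneg s)]
    exact stP_le_stE hs
  rcases le_or_gt a (-1) with hle | hlt
  · exact base.mono_set (Set.Iic_subset_Iic.2 hle)
  · have h2 : IntegrableOn stP (Set.Ioc (-1) a) := continuous_stP.integrableOn_Ioc
    have := base.union h2
    refine this.mono_set fun x hx => ?_
    rcases le_or_gt x (-1) with h | h
    · exact Or.inl h
    · exact Or.inr ⟨h, hx⟩

lemma integrableOn_stQ_Ioi (a : ℝ) : IntegrableOn stQ (Set.Ioi a) := by
  have base : IntegrableOn stQ (Set.Ici (1:ℝ)) := by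
    refine Integrable.mono integrable_stE.integrableOn
      (continuous_stQ.aestronglyMeasurable.restrict) ?_
    rw [ae_restrict_iff' measurableSet_Ici]
    refine ae_of_all _ fun s hs => ?_
    rw [Real.norm_eq_abs, Real.norm_eq_abs, abs_of_nonneg (stQ_nonneg s),
      abs_of_nonneg (stE_nonneg s)]
    exact stQ_le_stE hs
  rcases le_or_gt (1:ℝ) a with hle | hlt
  · exact base.mono_set fun x hx => le_trans hle (le_of_lt hx)
  · have h2 : IntegrableOn stQ (Set.Ioc a 1) := continuous_stQ.integrableOn_Ioc
    have := base.union h2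
    refine this.mono_set fun x hx => ?_
    rcases le_or_gt x 1 with h | h
    · exact Or.inr ⟨hx, h⟩
    · exact Or.inl (le_of_lt h)

lemma tendsto_mul_stP_atBot : Tendsto (fun s => s * stP s) atBot (𝓝 0) := by
  refine squeeze_zero_norm' ?_ stE_tendsto_atBot
  filter_upwards [Iic_mem_atBot (-1:ℝ)] with s hs
  have hs' : s ≤ -1 := hs
  have h1 := stP_le_tail (by linarith : s < 0)
  rw [Real.norm_eq_abs, abs_mul, abs_of_nonpos (by linarith : s ≤ 0),
    abs_of_nonneg (stP_nonneg s)]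
  rw [div_eq_mul_inv] at h1
  have h0 : (0:ℝ) < -s := by linarith
  calc -s * stP s ≤ -s * (stE s * (-s)⁻¹) :=
        mul_le_mul_of_nonneg_left h1 (by linarith)
    _ = stE s := by
        rw [mul_comm (stE s), ← mul_assoc, mul_inv_cancel₀ (ne_of_gt h0), one_mul]

lemma integral_stP_Iic (w : ℝ) : ∫ s in Set.Iic w, stP s = w * stP w + stE w := by
  have h1 : ∫ s in Set.Iic w, (stP s + s * stE s) = w * stP w := by
    have := integral_Iic_of_hasDerivAt_of_tendsto' (f := fun s => s * stP s)
      (f' := fun s => stP s + s * stE s) (a := w) (m := 0)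
      (fun x _ => by
        have := (hasDerivAt_id x).mul (hasDerivAt_stP x)
        simp only [id_eq, one_mul] at this; exact this)
      (((integrableOn_stP_Iic w).add integrable_id_mul_stE.integrableOn))
      tendsto_mul_stP_atBot
    simpa using this
  have h2 : ∫ s in Set.Iic w, s * stE s = -stE w := by
    have := integral_Iic_of_hasDerivAt_of_tendsto' (f := fun s => -stE s)
      (f' := fun s => s * stE s) (a := w) (m := 0)
      (fun x _ => by
        have := (hasDerivAt_stE x).neg
        simp only [neg_mul, neg_neg] at this; exact this)
      integrable_id_mul_stE.integrableOn
      (by simpa using stE_tendsto_atBot.neg)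
    simpa using this
  have h3 := integral_add (integrableOn_stP_Iic w) integrable_id_mul_stE.integrableOn
  rw [h1, h2] at h3
  linarith

lemma integral_stQ_Ioi (w : ℝ) : ∫ s in Set.Ioi w, stQ s = stE w - w * stQ w := by
  have h0 : ∫ s in Set.Ioi w, stQ s = ∫ s in Set.Ioi w, stP (-s) :=
    setIntegral_congr_fun measurableSet_Ioi fun x _ => stQ_eq_stP_neg x
  rw [h0, integral_comp_neg_Ioi, integral_stP_Iic, ← stQ_eq_stP_neg, stE_neg]
  ring

lemma stE_mul_exp (w : ℝ) : Real.exp (w ^ 2 / 2) * stE w = 1 := by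
  rw [stE, ← Real.exp_add]
  ring_nf
  exact Real.exp_zero

noncomputable def stR (z : ℝ) : ℝ := stE z * (z ^ 4 + 2 * z ^ 2 - 1) / (1 + z ^ 2) ^ 2

lemma continuous_stR : Continuous stR := by
  apply Continuous.div
  · exact continuous_stE.mul (by continuity)
  · continuity
  · intro x; positivity

lemma integrable_stR : Integrable stR := by
  refine integrable_stE.mono continuous_stR.aestronglyMeasurable (ae_of_all _ fun z => ?_)
  rw [Real.norm_eq_abs, Real.norm_eq_abs, abs_of_nonneg (stE_nonneg z), stR, abs_div, abs_mul,
    abs_of_nonneg (stE_nonneg z), abs_of_nonneg (by positivity : (0:ℝ) ≤ (1 + z ^ 2) ^ 2)]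
  rw [div_le_iff₀ (by positivity)]
  have h1 : |z ^ 4 + 2 * z ^ 2 - 1| ≤ (1 + z ^ 2) ^ 2 := by
    rw [abs_le]; constructor <;> nlinarith [sq_nonneg z, sq_nonneg (z^2)]
  nlinarith [stE_nonneg z, abs_nonneg (z ^ 4 + 2 * z ^ 2 - 1)]

lemma hasDerivAt_ratio (s : ℝ) :
    HasDerivAt (fun z => -z * stE z / (1 + z ^ 2)) (stR s) s := by
  have h0 : (1 : ℝ) + s ^ 2 ≠ 0 := by positivity
  have hnum : HasDerivAt (fun z : ℝ => -z * stE z)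
      ((-1) * stE s + (-s) * (-s * stE s)) s := by
    have := ((hasDerivAt_id s).neg).mul (hasDerivAt_stE s)
    exact this
  have hden : HasDerivAt (fun z : ℝ => 1 + z ^ 2) (2 * s) s := by
    have := (hasDerivAt_pow 2 s).const_add 1
    simpa using this
  have := hnum.div hden h0
  refine this.congr_deriv ?_
  unfold stR
  field_simp
  ring

lemma tendsto_ratio_abs : ∀ z : ℝ, ‖-z * stE z / (1 + z ^ 2)‖ ≤ stE z := by
  intro z
  rw [Real.norm_eq_abs, abs_div, abs_mul, abs_neg,
    abs_of_nonneg (stE_nonneg z), abs_of_nonneg (by positivity : (0:ℝ) ≤ 1 + z ^ 2),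
    div_le_iff₀ (by positivity)]
  nlinarith [sq_abs z, sq_nonneg (|z| - 1), stE_nonneg z, abs_nonneg z]

lemma tendsto_ratio_atBot : Tendsto (fun z : ℝ => -z * stE z / (1 + z ^ 2)) atBot (𝓝 0) :=
  squeeze_zero_norm tendsto_ratio_abs stE_tendsto_atBot

lemma stC2_nonneg (w : ℝ) : 0 ≤ (1 + w ^ 2) * Real.exp (w ^ 2 / 2) * stP w + w := by
  rcases le_or_gt 0 w with hw | hw
  · have h1 : 0 ≤ (1 + w ^ 2) * Real.exp (w ^ 2 / 2) * stP w :=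
      mul_nonneg (by positivity) (stP_nonneg w)
    linarith
  · have key : ∫ s in Set.Iic w, stR s = -w * stE w / (1 + w ^ 2) := by
      have := integral_Iic_of_hasDerivAt_of_tendsto'
        (f := fun z => -z * stE z / (1 + z ^ 2)) (f' := stR) (a := w) (m := 0)
        (fun x _ => hasDerivAt_ratio x) integrable_stR.integrableOn tendsto_ratio_atBot
      simpa using this
    have hmono : ∫ s in Set.Iic w, stR s ≤ stP w := by
      refine setIntegral_mono_on integrable_stR.integrableOn
        integrable_stE.integrableOn measurableSet_Iic fun s _ => ?_
      rw [stR, div_le_iff₀ (by positivity)]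
      nlinarith [stE_nonneg s, sq_nonneg s, sq_nonneg (s ^ 2)]
    have hP : -w * stE w / (1 + w ^ 2) ≤ stP w := key ▸ hmono
    rw [div_le_iff₀ (by positivity)] at hP
    have hK := (Real.exp_pos (w ^ 2 / 2)).le
    have h2 := mul_le_mul_of_nonneg_left hP hK
    have hE := stE_mul_exp w
    nlinarith [h2, hE]

lemma stC1_nonneg (w : ℝ) : 0 ≤ (1 + w ^ 2) * Real.exp (w ^ 2 / 2) * stQ w - w := by
  have := stC2_nonneg (-w)
  rw [stQ_eq_stP_neg]
  simp only [neg_sq] at this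
  linarith

lemma gauss_mean (h : ℝ → ℝ) :
    Real.sqrt (2 * π) * ∫ z, h z ∂(gaussianReal 0 1) = ∫ z, h z * stE z := by
  rw [gaussianReal_of_var_ne_zero 0 one_ne_zero]
  have heq : (volume.withDensity (gaussianPDF 0 1))
      = volume.withDensity (fun x => ((gaussianPDFReal 0 1 x).toNNReal : ℝ≥0∞)) := rfl
  rw [heq, integral_withDensity_eq_integral_smul
    ((measurable_gaussianPDFReal 0 1).real_toNNReal)]
  have hpt : ∀ x : ℝ, ((gaussianPDFReal 0 1 x).toNNReal : ℝ) • h x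
      = (Real.sqrt (2 * π))⁻¹ * (h x * stE x) := by
    intro x
    rw [smul_eq_mul, Real.coe_toNNReal _ (gaussianPDFReal_nonneg 0 1 x)]
    simp only [gaussianPDFReal, NNReal.coe_one, mul_one, sub_zero, stE]
    ring
  calc Real.sqrt (2 * π) * ∫ x, ((gaussianPDFReal 0 1 x).toNNReal : ℝ≥0) • h x
      = Real.sqrt (2 * π) * ∫ x, (Real.sqrt (2 * π))⁻¹ * (h x * stE x) := by
        congr 1
        exact integral_congr_ae (ae_of_all _ hpt)
    _ = ∫ z, h z * stE z := by
        rw [integral_const_mul, ← mul_assoc, mul_inv_cancel₀ (ne_of_gt sqrt_two_pi_pos), one_mul]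

lemma tendsto_setIntegral_Iic_atTop {g : ℝ → ℝ} (hg : Integrable g) :
    Tendsto (fun w => ∫ t in Set.Iic w, g t) atTop (𝓝 (∫ t, g t)) := by
  have hind : ∀ w : ℝ, ∫ t in Set.Iic w, g t = ∫ t, Set.indicator (Set.Iic w) g t := fun w =>
    (integral_indicator measurableSet_Iic).symm
  simp_rw [hind]
  apply tendsto_integral_filter_of_dominated_convergence (fun t => ‖g t‖)
  · exact Eventually.of_forall fun w => hg.aestronglyMeasurable.indicator measurableSet_Iic
  · exact Eventually.of_forall fun w => ae_of_all _ fun t => norm_indicator_le_norm_self g t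
  · exact hg.norm
  · refine ae_of_all _ fun t => ?_
    refine tendsto_const_nhds.congr' ?_
    filter_upwards [Ici_mem_atTop t] with w hw
    exact (Set.indicator_of_mem (show t ∈ Set.Iic w from hw) g).symm

section SteinMain

variable {h : ℝ → ℝ} {d : ℝ → ℝ} {M : ℝ}

noncomputable def stA (d : ℝ → ℝ) (w : ℝ) : ℝ := ∫ s in Set.Iic w, d s * stP s
noncomputable def stB (d : ℝ → ℝ) (w : ℝ) : ℝ := ∫ s in Set.Ioi w, d s * stQ s

lemma M_nonneg (hM : ∀ x, |d x| ≤ M) : 0 ≤ M := le_trans (abs_nonneg _) (hM 0)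

lemma integrableOn_dP (hdc : Continuous d) (hM : ∀ x, |d x| ≤ M) (a : ℝ) :
    IntegrableOn (fun s => d s * stP s) (Set.Iic a) := by
  refine Integrable.mono ((integrableOn_stP_Iic a).const_mul M)
    ((hdc.mul continuous_stP).aestronglyMeasurable.restrict) (ae_of_all _ fun s => ?_)
  rw [Real.norm_eq_abs, Real.norm_eq_abs, abs_mul, abs_mul,
    abs_of_nonneg (stP_nonneg s), abs_of_nonneg (M_nonneg hM)]
  exact mul_le_mul_of_nonneg_right (hM s) (stP_nonneg s)

lemma integrableOn_dQ (hdc : Continuous d) (hM : ∀ x, |d x| ≤ M) (a : ℝ) :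
    IntegrableOn (fun s => d s * stQ s) (Set.Ioi a) := by
  refine Integrable.mono ((integrableOn_stQ_Ioi a).const_mul M)
    ((hdc.mul continuous_stQ).aestronglyMeasurable.restrict) (ae_of_all _ fun s => ?_)
  rw [Real.norm_eq_abs, Real.norm_eq_abs, abs_mul, abs_mul,
    abs_of_nonneg (stQ_nonneg s), abs_of_nonneg (M_nonneg hM)]
  exact mul_le_mul_of_nonneg_right (hM s) (stQ_nonneg s)

lemma hasDerivAt_stA (hdc : Continuous d) (hM : ∀ x, |d x| ≤ M) (w : ℝ) :
    HasDerivAt (stA d) (d w * stP w) w :=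
  hasDerivAt_setIntegral_Iic _ (hdc.mul continuous_stP) (integrableOn_dP hdc hM) w

lemma hasDerivAt_stB (hdc : Continuous d) (hM : ∀ x, |d x| ≤ M) (w : ℝ) :
    HasDerivAt (stB d) (-(d w * stQ w)) w :=
  hasDerivAt_setIntegral_Ioi _ (hdc.mul continuous_stQ) (integrableOn_dQ hdc hM) w

lemma abs_stA_le (hdc : Continuous d) (hM : ∀ x, |d x| ≤ M) (w : ℝ) :
    |stA d w| ≤ M * (w * stP w + stE w) := by
  have h1 : |stA d w| ≤ ∫ s in Set.Iic w, M * stP s := by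
    rw [stA, ← Real.norm_eq_abs]
    refine le_trans (norm_integral_le_integral_norm _) ?_
    refine setIntegral_mono_on ((integrableOn_dP hdc hM w).norm)
      ((integrableOn_stP_Iic w).const_mul M) measurableSet_Iic fun s _ => ?_
    rw [Real.norm_eq_abs, abs_mul, abs_of_nonneg (stP_nonneg s)]
    exact mul_le_mul_of_nonneg_right (hM s) (stP_nonneg s)
  rwa [integral_const_mul, integral_stP_Iic] at h1

lemma abs_stB_le (hdc : Continuous d) (hM : ∀ x, |d x| ≤ M) (w : ℝ) :
    |stB d w| ≤ M * (stE w - w * stQ w) := by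
  have h1 : |stB d w| ≤ ∫ s in Set.Ioi w, M * stQ s := by
    rw [stB, ← Real.norm_eq_abs]
    refine le_trans (norm_integral_le_integral_norm _) ?_
    refine setIntegral_mono_on ((integrableOn_dQ hdc hM w).norm)
      ((integrableOn_stQ_Ioi w).const_mul M) measurableSet_Ioi fun s _ => ?_
    rw [Real.norm_eq_abs, abs_mul, abs_of_nonneg (stQ_nonneg s)]
    exact mul_le_mul_of_nonneg_right (hM s) (stQ_nonneg s)
  rwa [integral_const_mul, integral_stQ_Ioi] at h1

end SteinMain

section SteinMain2

variable {h : ℝ → ℝ} {d : ℝ → ℝ} {M : ℝ}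

lemma st_lip (hd : ∀ x, HasDerivAt h (d x) x) (hM : ∀ x, |d x| ≤ M) (a b : ℝ) :
    |h a - h b| ≤ M * |a - b| := by
  have := Convex.norm_image_sub_le_of_norm_deriv_le (s := Set.univ) (f := h) (C := M)
    (fun x _ => (hd x).differentiableAt)
    (fun x _ => by rw [Real.norm_eq_abs, (hd x).deriv]; exact hM x)
    convex_univ (Set.mem_univ b) (Set.mem_univ a)
  simpa [Real.norm_eq_abs] using this

lemma integrable_hE (hd : ∀ x, HasDerivAt h (d x) x) (hM : ∀ x, |d x| ≤ M) (c : ℝ) :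
    Integrable (fun z => (h z - c) * stE z) := by
  have hcont : Continuous h := continuous_iff_continuousAt.2 fun x => (hd x).continuousAt
  have hbnd : Integrable (fun z => (M * |z| + |h 0 - c|) * stE z) := by
    have hb := (integrable_abs_mul_stE.const_mul M).add (integrable_stE.const_mul (|h 0 - c|))
    exact hb.congr (ae_of_all _ fun z => by simp only [Pi.add_apply]; ring)
  refine Integrable.mono hbnd
    (((hcont.sub continuous_const).mul continuous_stE).aestronglyMeasurable)
    (ae_of_all _ fun z => ?_)
  rw [Real.norm_eq_abs, Real.norm_eq_abs, abs_mul, abs_of_nonneg (stE_nonneg z)]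
  have h1 : |h z - c| ≤ M * |z| + |h 0 - c| := by
    have := st_lip hd hM z 0
    simp only [sub_zero] at this
    calc |h z - c| = |(h z - h 0) + (h 0 - c)| := by ring_nf
      _ ≤ |h z - h 0| + |h 0 - c| := abs_add_le _ _
      _ ≤ M * |z| + |h 0 - c| := by linarith
  have hnn : (0:ℝ) ≤ (M * |z| + |h 0 - c|) * stE z := by
    have := stE_nonneg z
    have := M_nonneg hM
    positivity
  rw [abs_of_nonneg hnn]
  exact mul_le_mul_of_nonneg_right h1 (stE_nonneg z)

lemma st_key (hd : ∀ x, HasDerivAt h (d x) x) (hdc : Continuous d) (hM : ∀ x, |d x| ≤ M)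
    (t : ℝ) :
    Real.sqrt (2 * π) * (h t - ∫ z, h z ∂(gaussianReal 0 1)) = stA d t - stB d t := by
  set c : ℝ := ∫ z, h z ∂(gaussianReal 0 1) with hc
  -- the function R is constant
  set R : ℝ → ℝ := fun t => Real.sqrt (2 * π) * h t - stA d t + stB d t with hR
  have hR' : ∀ x, HasDerivAt R 0 x := by
    intro x
    have h1 := ((hd x).const_mul (Real.sqrt (2 * π))).sub (hasDerivAt_stA hdc hM x)
    have h2 := h1.add (hasDerivAt_stB hdc hM x)
    have h3 : Real.sqrt (2 * π) * d x - d x * stP x + -(d x * stQ x) = 0 := by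
      linear_combination (-(d x)) * stP_add_stQ x
    rw [h3] at h2
    exact h2
  have hconst : ∀ x, R x = R 0 := by
    intro x
    exact is_const_of_deriv_eq_zero (fun y => (hR' y).differentiableAt)
      (fun y => (hR' y).deriv) x 0
  -- integration by parts at 0
  have hint0 : Integrable (fun z => (h z - h 0) * stE z) := integrable_hE hd hM (h 0)
  have parts1 : ∫ s in Set.Ioi (0:ℝ), d s * stQ s
      = ∫ s in Set.Ioi (0:ℝ), (h s - h 0) * stE s := by
    have key := integral_Ioi_of_hasDerivAt_of_tendsto'
      (f := fun s => (h s - h 0) * stQ s)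
      (f' := fun s => d s * stQ s - (h s - h 0) * stE s) (a := 0) (m := 0)
      (fun x _ => by
        have := ((hd x).sub_const (h 0)).mul (hasDerivAt_stQ x)
        exact this.congr_deriv (by ring))
      ((integrableOn_dQ hdc hM 0).sub hint0.integrableOn)
      (by
        refine squeeze_zero_norm' ?_ (by simpa using (stE_tendsto_atTop.const_mul M))
        filter_upwards [Ici_mem_atTop (1:ℝ)] with s hs
        have hs' : (1:ℝ) ≤ s := hs
        have hq := stQ_le_tail (by linarith : (0:ℝ) < s)
        have hlip := st_lip hd hM s 0
        simp only [sub_zero] at hlip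
        rw [Real.norm_eq_abs, abs_mul, abs_of_nonneg (stQ_nonneg s)]
        calc |h s - h 0| * stQ s ≤ (M * |s|) * stQ s :=
              mul_le_mul_of_nonneg_right hlip (stQ_nonneg s)
          _ ≤ (M * s) * (stE s / s) := by
              rw [abs_of_nonneg (by linarith : (0:ℝ) ≤ s)]
              exact mul_le_mul_of_nonneg_left hq (mul_nonneg (M_nonneg hM) (by linarith))
          _ = M * (stE s / s * s) := by ring
          _ = M * stE s := by
              rw [div_mul_cancel₀ _ (by linarith : s ≠ 0)])
    simp only [sub_self, zero_mul, sub_zero, zero_sub] at key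
    have hsub := integral_sub (integrableOn_dQ hdc hM 0) (hint0.integrableOn (s := Set.Ioi 0))
    rw [hsub] at key
    have : (h 0 - h 0) * stQ 0 = 0 := by ring
    linarith [key]
  have parts2 : ∫ s in Set.Iic (0:ℝ), d s * stP s
      = -∫ s in Set.Iic (0:ℝ), (h s - h 0) * stE s := by
    have key := integral_Iic_of_hasDerivAt_of_tendsto'
      (f := fun s => (h s - h 0) * stP s)
      (f' := fun s => d s * stP s + (h s - h 0) * stE s) (a := 0) (m := 0)
      (fun x _ => ((hd x).sub_const (h 0)).mul (hasDerivAt_stP x))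
      ((integrableOn_dP hdc hM 0).add hint0.integrableOn)
      (by
        refine squeeze_zero_norm' ?_ (by simpa using (stE_tendsto_atBot.const_mul M))
        filter_upwards [Iic_mem_atBot (-1:ℝ)] with s hs
        have hs' : s ≤ -1 := hs
        have hq := stP_le_tail (by linarith : s < 0)
        have hlip := st_lip hd hM s 0
        simp only [sub_zero] at hlip
        rw [Real.norm_eq_abs, abs_mul, abs_of_nonneg (stP_nonneg s)]
        calc |h s - h 0| * stP s ≤ (M * |s|) * stP s :=
              mul_le_mul_of_nonneg_right hlip (stP_nonneg s)
          _ ≤ (M * (-s)) * (stE s / (-s)) := by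
              rw [abs_of_nonpos (by linarith : s ≤ 0)]
              exact mul_le_mul_of_nonneg_left hq (mul_nonneg (M_nonneg hM) (by linarith))
          _ = M * (stE s / (-s) * (-s)) := by ring
          _ = M * stE s := by
              rw [div_mul_cancel₀ _ (by linarith : -s ≠ 0)])
    simp only [sub_self, zero_mul, sub_zero] at key
    have hsub := integral_add (integrableOn_dP hdc hM 0) (hint0.integrableOn (s := Set.Iic 0))
    rw [hsub] at key
    linarith [key]
  have hItot : (∫ s in Set.Iic (0:ℝ), (h s - h 0) * stE s)
      + (∫ s in Set.Ioi (0:ℝ), (h s - h 0) * stE s)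
      = ∫ s, (h s - h 0) * stE s :=
    intervalIntegral.integral_Iic_add_Ioi hint0.integrableOn hint0.integrableOn
  have hhE : Integrable (fun z => h z * stE z) := by
    have := hint0.add (integrable_stE.const_mul (h 0))
    refine this.congr (ae_of_all _ fun z => by simp only [Pi.add_apply]; ring)
  have htot : ∫ s, (h s - h 0) * stE s
      = Real.sqrt (2 * π) * c - Real.sqrt (2 * π) * h 0 := by
    have hsplit : ∀ s : ℝ, (h s - h 0) * stE s = h s * stE s - h 0 * stE s := fun s => by ring
    simp_rw [hsplit]
    rw [integral_sub hhE (integrable_stE.const_mul (h 0)), integral_const_mul, integral_stE,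
      hc, ← gauss_mean h]
    ring
  have hR0 := hconst t
  simp only [hR] at hR0
  have hBA : stB d 0 - stA d 0 = Real.sqrt (2 * π) * c - Real.sqrt (2 * π) * h 0 := by
    rw [stB, stA, parts1, parts2, ← htot, ← hItot]
    ring
  rw [stA, stB] at hR0 ⊢
  linarith [hR0, hBA]

end SteinMain2

section SteinMain3

variable {h : ℝ → ℝ} {d : ℝ → ℝ} {M : ℝ}

lemma st_int_zero (hd : ∀ x, HasDerivAt h (d x) x) (hM : ∀ x, |d x| ≤ M) :
    ∫ z, (h z - ∫ x, h x ∂(gaussianReal 0 1)) * stE z = 0 := by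
  set c : ℝ := ∫ x, h x ∂(gaussianReal 0 1) with hc
  have hint0 : Integrable (fun z => (h z - h 0) * stE z) := integrable_hE hd hM (h 0)
  have hhE : Integrable (fun z => h z * stE z) := by
    have := hint0.add (integrable_stE.const_mul (h 0))
    refine this.congr (ae_of_all _ fun z => by simp only [Pi.add_apply]; ring)
  have hsplit : ∀ s : ℝ, (h s - c) * stE s = h s * stE s - c * stE s := fun s => by ring
  simp_rw [hsplit]
  rw [integral_sub hhE (integrable_stE.const_mul c), integral_const_mul, integral_stE,
    hc, ← gauss_mean h]
  ring

lemma st_rep (hd : ∀ x, HasDerivAt h (d x) x) (hdc : Continuous d) (hM : ∀ x, |d x| ≤ M)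
    (w : ℝ) :
    Real.sqrt (2 * π) * ∫ t in Set.Iic w, (h t - ∫ z, h z ∂(gaussianReal 0 1)) * stE t
      = -(stQ w * stA d w + stP w * stB d w) := by
  set c : ℝ := ∫ z, h z ∂(gaussianReal 0 1) with hc
  have hcont : Continuous h := continuous_iff_continuousAt.2 fun x => (hd x).continuousAt
  have hg : Integrable (fun t => (h t - c) * stE t) := integrable_hE hd hM c
  set F : ℝ → ℝ := fun u => ∫ t in Set.Iic u, (h t - c) * stE t with hF
  have hF' : ∀ x, HasDerivAt F ((h x - c) * stE x) x := fun x =>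
    hasDerivAt_setIntegral_Iic _ ((hcont.sub continuous_const).mul continuous_stE)
      (fun _ => hg.integrableOn) x
  set U : ℝ → ℝ := fun u => Real.sqrt (2 * π) * F u + stQ u * stA d u + stP u * stB d u
    with hU
  have hU' : ∀ x, HasDerivAt U 0 x := by
    intro x
    have h1 := ((hF' x).const_mul (Real.sqrt (2 * π))).add
      ((hasDerivAt_stQ x).mul (hasDerivAt_stA hdc hM x))
    have h2 := h1.add ((hasDerivAt_stP x).mul (hasDerivAt_stB hdc hM x))
    have hkey := st_key hd hdc hM x
    rw [← hc] at hkey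
    have h3 : Real.sqrt (2 * π) * ((h x - c) * stE x)
        + (-stE x * stA d x + stQ x * (d x * stP x))
        + (stE x * stB d x + stP x * -(d x * stQ x)) = 0 := by
      linear_combination stE x * hkey
    rw [h3] at h2
    exact h2
  have hconst : ∀ x y, U x = U y := fun x y =>
    is_const_of_deriv_eq_zero (fun z => (hU' z).differentiableAt)
      (fun z => (hU' z).deriv) x y
  have hlim : Tendsto U atTop (𝓝 0) := by
    have T1 : Tendsto (fun u => Real.sqrt (2 * π) * F u) atTop (𝓝 0) := by
      have := (tendsto_setIntegral_Iic_atTop hg).const_mul (Real.sqrt (2 * π))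
      rw [st_int_zero hd hM, mul_zero] at this
      exact this
    have T2 : Tendsto (fun u => stQ u * stA d u) atTop (𝓝 0) := by
      refine squeeze_zero_norm' ?_
        (by simpa only [mul_zero] using (stE_tendsto_atTop.const_mul (M * (Real.sqrt (2 * π) + 1))))
      filter_upwards [Ici_mem_atTop (1:ℝ)] with u hu
      have hu' : (1:ℝ) ≤ u := hu
      have hQ := stQ_le_tail (by linarith : (0:ℝ) < u)
      have hA := abs_stA_le hdc hM u
      have hA2 : |stA d u| ≤ M * (Real.sqrt (2 * π) * u + 1) := by
        have e1 : u * stP u ≤ u * Real.sqrt (2 * π) :=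
          mul_le_mul_of_nonneg_left (stP_le_sqrt u) (by linarith)
        have e2 : stE u ≤ 1 := stE_le_one u
        have := M_nonneg hM
        nlinarith
      rw [Real.norm_eq_abs, abs_mul]
      have hQabs : |stQ u| ≤ stE u / u := by
        rw [abs_of_nonneg (stQ_nonneg u)]; exact hQ
      calc |stQ u| * |stA d u| ≤ (stE u / u) * (M * (Real.sqrt (2 * π) * u + 1)) := by
            exact mul_le_mul hQabs hA2 (abs_nonneg _)
              (div_nonneg (stE_nonneg u) (by linarith))
        _ = M * (Real.sqrt (2 * π) + 1 / u) * stE u := by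
            have hune : u ≠ 0 := by linarith
            field_simp
        _ ≤ M * (Real.sqrt (2 * π) + 1) * stE u := by
            have h1u : 1 / u ≤ 1 := by
              rw [div_le_one (by linarith)]; linarith
            have hstep : Real.sqrt (2 * π) + 1 / u ≤ Real.sqrt (2 * π) + 1 := by linarith
            exact mul_le_mul_of_nonneg_right
              (mul_le_mul_of_nonneg_left hstep (M_nonneg hM)) (stE_nonneg u)
    have T3 : Tendsto (fun u => stP u * stB d u) atTop (𝓝 0) := by
      refine squeeze_zero_norm' ?_
        (by simpa only [mul_zero] using (stE_tendsto_atTop.const_mul (Real.sqrt (2 * π) * M)))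
      filter_upwards [Ici_mem_atTop (0:ℝ)] with u hu
      have hu' : (0:ℝ) ≤ u := hu
      have hB := abs_stB_le hdc hM u
      have hB2 : |stB d u| ≤ M * stE u := by
        have e1 : 0 ≤ u * stQ u := mul_nonneg hu' (stQ_nonneg u)
        have := M_nonneg hM
        nlinarith
      rw [Real.norm_eq_abs, abs_mul]
      have hPabs : |stP u| ≤ Real.sqrt (2 * π) := by
        rw [abs_of_nonneg (stP_nonneg u)]; exact stP_le_sqrt u
      calc |stP u| * |stB d u| ≤ Real.sqrt (2 * π) * (M * stE u) :=
            mul_le_mul hPabs hB2 (abs_nonneg _) (le_of_lt sqrt_two_pi_pos)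
        _ = Real.sqrt (2 * π) * M * stE u := by ring
    have := (T1.add T2).add T3
    simpa only [add_zero] using this
  have hUw : U w = 0 := by
    have h1 : Tendsto U atTop (𝓝 (U w)) := by
      refine Tendsto.congr (fun x => (hconst w x)) tendsto_const_nhds
    exact tendsto_nhds_unique h1 hlim
  have : Real.sqrt (2 * π) * F w + stQ w * stA d w + stP w * stB d w = 0 := hUw
  rw [hF] at this
  linarith [this]

end SteinMain3


open MeasureTheory ProbabilityTheory Real

/-- For a `C¹` test function `h` with `‖h'‖_∞ ≤ 1`, the bounded solution `f_h` of the
Stein equation `f'(w) - w f(w) = h(w) - E h(Z)` is twice differentiable and satisfies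
`‖f_h''‖_∞ ≤ 2 ‖h'‖_∞`. -/
theorem stein_solution_second_derivative_bound
    (h : ℝ → ℝ) (hh : ContDiff ℝ 1 h) (hh' : ∀ w, |deriv h w| ≤ 1)
    (f : ℝ → ℝ)
    (hf : ∀ w, f w = Real.exp (w ^ 2 / 2) *
      ∫ t in Set.Iic w, (h t - ∫ z, h z ∂(gaussianReal 0 1)) * Real.exp (-t ^ 2 / 2)) :
    (∀ w, DifferentiableAt ℝ f w) ∧ (∀ w, DifferentiableAt ℝ (deriv f) w) ∧
    (∀ w, |deriv (deriv f) w| ≤ 2 * ⨆ v, |deriv h v|) := by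
  set M : ℝ := ⨆ v, |deriv h v| with hMdef
  set c : ℝ := ∫ z, h z ∂(gaussianReal 0 1) with hc
  have hd : ∀ x, HasDerivAt h (deriv h x) x := fun x =>
    ((hh.differentiable one_ne_zero) x).hasDerivAt
  have hdc : Continuous (deriv h) := hh.continuous_deriv le_rfl
  have hbdd : BddAbove (Set.range fun v => |deriv h v|) := by
    refine ⟨1, ?_⟩
    rintro y ⟨v, rfl⟩
    exact hh' v
  have hM : ∀ x, |deriv h x| ≤ M := fun x => le_ciSup hbdd x
  have hM0 : 0 ≤ M := le_trans (abs_nonneg _) (hM 0)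
  have hcont : Continuous h := hh.continuous
  have hg : Integrable (fun t => (h t - c) * stE t) := integrable_hE hd hM c
  set F : ℝ → ℝ := fun u => ∫ t in Set.Iic u, (h t - c) * stE t with hFdef
  have hF' : ∀ x, HasDerivAt F ((h x - c) * stE x) x := fun x =>
    hasDerivAt_setIntegral_Iic _ ((hcont.sub continuous_const).mul continuous_stE)
      (fun _ => hg.integrableOn) x
  have hfw : ∀ w, f w = Real.exp (w ^ 2 / 2) * F w := hf
  have hfd : ∀ w, HasDerivAt f (w * f w + (h w - c)) w := by
    intro w
    have hexp : HasDerivAt (fun u : ℝ => Real.exp (u ^ 2 / 2))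
        (w * Real.exp (w ^ 2 / 2)) w := by
      have hp : HasDerivAt (fun u : ℝ => u ^ 2 / 2) w w := by
        have := (hasDerivAt_pow 2 w).div_const 2
        simpa using this
      have := hp.exp
      simpa [mul_comm] using this
    have hprod := hexp.mul (hF' w)
    have hfeq : f = fun u => Real.exp (u ^ 2 / 2) * F u := funext hfw
    rw [hfeq]
    refine hprod.congr_deriv ?_
    symm
    rw [← hfeq, hfw w]
    linear_combination (-(h w - c)) * stE_mul_exp w
  have conj1 : ∀ w, DifferentiableAt ℝ f w := fun w => (hfd w).differentiableAt
  have hderiv1 : deriv f = fun w => w * f w + (h w - c) := funext fun w => (hfd w).deriv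
  have hfd2 : ∀ w, HasDerivAt (deriv f)
      ((1 + w ^ 2) * f w + w * (h w - c) + deriv h w) w := by
    intro w
    rw [hderiv1]
    have h1 := ((hasDerivAt_id w).mul (hfd w)).add ((hd w).sub_const c)
    refine h1.congr_deriv ?_
    have := hderiv1
    simp only [id_eq]
    ring
  have conj2 : ∀ w, DifferentiableAt ℝ (deriv f) w := fun w => (hfd2 w).differentiableAt
  refine ⟨conj1, conj2, ?_⟩
  intro w
  have hderiv2 : deriv (deriv f) w = (1 + w ^ 2) * f w + w * (h w - c) + deriv h w :=
    (hfd2 w).deriv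
  -- the key estimate
  set K : ℝ := Real.exp (w ^ 2 / 2) with hK
  set A : ℝ := stA (deriv h) w
  set B : ℝ := stB (deriv h) w
  have hrep : Real.sqrt (2 * π) * F w = -(stQ w * A + stP w * B) := by
    have := st_rep hd hdc hM w
    rw [← hc] at this
    exact this
  have hkey : Real.sqrt (2 * π) * (h w - c) = A - B := by
    have := st_key hd hdc hM w
    rw [← hc] at this
    exact this
  have hc1 : 0 ≤ (1 + w ^ 2) * K * stQ w - w := stC1_nonneg w
  have hc2 : 0 ≤ (1 + w ^ 2) * K * stP w + w := stC2_nonneg w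
  have hA := abs_stA_le hdc hM w
  have hB := abs_stB_le hdc hM w
  have hKE : K * stE w = 1 := stE_mul_exp w
  have hPQ := stP_add_stQ w
  set c1 : ℝ := (1 + w ^ 2) * K * stQ w - w with hc1def
  set c2 : ℝ := (1 + w ^ 2) * K * stP w + w with hc2def
  have hiden : (w * stP w + stE w) * c1 + (stE w - w * stQ w) * c2 = Real.sqrt (2 * π) := by
    rw [hc1def, hc2def]
    linear_combination ((1 + w ^ 2) * (stP w + stQ w)) * hKE + hPQ
  have hT : Real.sqrt (2 * π) * ((1 + w ^ 2) * f w + w * (h w - c)) = -(A * c1) - B * c2 := by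
    have hfF : f w = K * F w := hfw w
    rw [hc1def, hc2def]
    have e1 : Real.sqrt (2 * π) * f w = -(K * (stQ w * A + stP w * B)) := by
      rw [hfF]
      calc Real.sqrt (2 * π) * (K * F w) = K * (Real.sqrt (2 * π) * F w) := by ring
        _ = -(K * (stQ w * A + stP w * B)) := by rw [hrep]; ring
    linear_combination (1 + w ^ 2) * e1 + w * hkey
  have hTabs : Real.sqrt (2 * π) * |(1 + w ^ 2) * f w + w * (h w - c)|
      ≤ M * Real.sqrt (2 * π) := by
    have habs : |Real.sqrt (2 * π) * ((1 + w ^ 2) * f w + w * (h w - c))|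
        ≤ |A| * c1 + |B| * c2 := by
      rw [hT]
      calc |(-(A * c1) - B * c2)| ≤ |A * c1| + |B * c2| := by
            rw [show -(A * c1) - B * c2 = (-(A * c1)) + (-(B * c2)) by ring]
            refine le_trans (abs_add_le _ _) ?_
            rw [abs_neg, abs_neg]
        _ = |A| * c1 + |B| * c2 := by
            rw [abs_mul, abs_mul, abs_of_nonneg hc1, abs_of_nonneg hc2]
    have hA1 : |A| * c1 ≤ M * (w * stP w + stE w) * c1 :=
      mul_le_mul_of_nonneg_right hA hc1
    have hB1 : |B| * c2 ≤ M * (stE w - w * stQ w) * c2 :=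
      mul_le_mul_of_nonneg_right hB hc2
    rw [abs_mul, abs_of_nonneg (le_of_lt sqrt_two_pi_pos)] at habs
    calc Real.sqrt (2 * π) * |(1 + w ^ 2) * f w + w * (h w - c)|
        ≤ |A| * c1 + |B| * c2 := habs
      _ ≤ M * (w * stP w + stE w) * c1 + M * (stE w - w * stQ w) * c2 := by linarith
      _ = M * ((w * stP w + stE w) * c1 + (stE w - w * stQ w) * c2) := by ring
      _ = M * Real.sqrt (2 * π) := by rw [hiden]
  have hTfin : |(1 + w ^ 2) * f w + w * (h w - c)| ≤ M := by
    have hs := sqrt_two_pi_pos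
    nlinarith [hTabs]
  rw [hderiv2]
  calc |(1 + w ^ 2) * f w + w * (h w - c) + deriv h w|
      ≤ |(1 + w ^ 2) * f w + w * (h w - c)| + |deriv h w| := abs_add_le _ _
    _ ≤ M + M := add_le_add hTfin (hM w)
    _ = 2 * M := by ring
end

section
/- For bounded measurable h : ℝ → ℝ with 0 ≤ h ≤ 1, the bounded solution f_h of the Stein equation satisfies ‖f_h'‖_∞ ≤ 2‖h‖_∞. -/
open MeasureTheory ProbabilityTheory Real
open scoped ENNReal NNReal

lemma my_exp_integrable : Integrable (fun t : ℝ => Real.exp (-t ^ 2 / 2)) := by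
  have h := integrable_exp_neg_mul_sq (by norm_num : (0:ℝ) < 1/2)
  have he : (fun t : ℝ => Real.exp (-t ^ 2 / 2)) = fun t => Real.exp (-(1/2) * t ^ 2) := by
    funext t; congr 1; ring
  rw [he]; exact h

lemma my_mul_exp_integrable : Integrable (fun t : ℝ => t * Real.exp (-t ^ 2 / 2)) := by
  have h := integrable_mul_exp_neg_mul_sq (by norm_num : (0:ℝ) < 1/2)
  have he : (fun t : ℝ => t * Real.exp (-t ^ 2 / 2)) = fun t => t * Real.exp (-(1/2) * t ^ 2) := by
    funext t; congr 2; ring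
  rw [he]; exact h

lemma my_integral_exp : ∫ t : ℝ, Real.exp (-t ^ 2 / 2) = Real.sqrt (2 * π) := by
  have he : (fun t : ℝ => Real.exp (-t ^ 2 / 2)) = fun t => Real.exp (-(1/2) * t ^ 2) := by
    funext t; congr 1; ring
  rw [he, integral_gaussian]
  norm_num
  ring

lemma my_hasDerivAt (t : ℝ) :
    HasDerivAt (fun t : ℝ => -Real.exp (-t ^ 2 / 2)) (t * Real.exp (-t ^ 2 / 2)) t := by
  have h1 : HasDerivAt (fun t : ℝ => -t ^ 2 / 2) (-t) t := by
    have := ((hasDerivAt_pow 2 t).neg).div_const 2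
    refine this.congr_deriv ?_
    simp; ring
  have h2 := (h1.exp).neg
  refine h2.congr_deriv ?_
  ring

lemma my_tendsto_top : Filter.Tendsto (fun t : ℝ => -Real.exp (-t ^ 2 / 2)) Filter.atTop (nhds 0) := by
  have h1 : Filter.Tendsto (fun t : ℝ => -t ^ 2 / 2) Filter.atTop Filter.atBot := by
    apply Filter.Tendsto.atBot_div_const (by norm_num : (0:ℝ) < 2)
    exact Filter.tendsto_neg_atBot_iff.mpr (Filter.tendsto_pow_atTop (by norm_num))
  have := (Real.tendsto_exp_atBot.comp h1).neg
  simpa using this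

lemma my_tendsto_bot : Filter.Tendsto (fun t : ℝ => -Real.exp (-t ^ 2 / 2)) Filter.atBot (nhds 0) := by
  have hsq : Filter.Tendsto (fun t : ℝ => t ^ 2) Filter.atBot Filter.atTop := by
    have heq : (fun t : ℝ => t ^ 2) = fun t : ℝ => (-t) ^ 2 := by funext t; ring
    rw [heq]
    exact (Filter.tendsto_pow_atTop (n := 2) (by norm_num)).comp
      Filter.tendsto_neg_atBot_atTop
  have h1 : Filter.Tendsto (fun t : ℝ => -t ^ 2 / 2) Filter.atBot Filter.atBot := by
    apply Filter.Tendsto.atBot_div_const (by norm_num : (0:ℝ) < 2)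
    exact Filter.tendsto_neg_atBot_iff.mpr hsq
  have := (Real.tendsto_exp_atBot.comp h1).neg
  simpa using this

lemma my_integral_Ioi (w : ℝ) :
    ∫ t in Set.Ioi w, t * Real.exp (-t ^ 2 / 2) = Real.exp (-w ^ 2 / 2) := by
  have := integral_Ioi_of_hasDerivAt_of_tendsto
    (f := fun t : ℝ => -Real.exp (-t ^ 2 / 2)) (f' := fun t : ℝ => t * Real.exp (-t ^ 2 / 2))
    (a := w) (m := 0)
    (my_hasDerivAt w).continuousAt.continuousWithinAt
    (fun x _ => my_hasDerivAt x)
    my_mul_exp_integrable.integrableOn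
    my_tendsto_top
  rw [this]; ring

lemma my_integral_Iic (w : ℝ) :
    ∫ t in Set.Iic w, t * Real.exp (-t ^ 2 / 2) = -Real.exp (-w ^ 2 / 2) := by
  have := integral_Iic_of_hasDerivAt_of_tendsto
    (f := fun t : ℝ => -Real.exp (-t ^ 2 / 2)) (f' := fun t : ℝ => t * Real.exp (-t ^ 2 / 2))
    (a := w) (m := 0)
    (my_hasDerivAt w).continuousAt.continuousWithinAt
    (fun x _ => my_hasDerivAt x)
    my_mul_exp_integrable.integrableOn
    my_tendsto_bot
  rw [this]; ring

lemma my_tail_Iic {w : ℝ} (hw : w < 0) :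
    ∫ t in Set.Iic w, Real.exp (-t ^ 2 / 2) ≤ Real.exp (-w ^ 2 / 2) / (-w) := by
  have hint2 : Integrable (fun t : ℝ => t / w * Real.exp (-t ^ 2 / 2)) := by
    simpa [div_mul_eq_mul_div] using my_mul_exp_integrable.div_const w
  have h1 : ∫ t in Set.Iic w, Real.exp (-t ^ 2 / 2)
      ≤ ∫ t in Set.Iic w, t / w * Real.exp (-t ^ 2 / 2) := by
    refine setIntegral_mono_on my_exp_integrable.integrableOn hint2.integrableOn
      measurableSet_Iic (fun t ht => ?_)
    have hinv : w⁻¹ < 0 := inv_lt_zero.mpr hw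
    have h1t : (1 : ℝ) ≤ t / w := by
      rw [div_eq_mul_inv]
      calc (1:ℝ) = w * w⁻¹ := (mul_inv_cancel₀ (ne_of_lt hw)).symm
      _ ≤ t * w⁻¹ := mul_le_mul_of_nonpos_right ht hinv.le
    nlinarith [Real.exp_pos (-t ^ 2 / 2)]
  have h2 : ∫ t in Set.Iic w, t / w * Real.exp (-t ^ 2 / 2)
      = (∫ t in Set.Iic w, t * Real.exp (-t ^ 2 / 2)) / w := by
    simp_rw [div_mul_eq_mul_div]
    exact integral_div w _
  rw [h2, my_integral_Iic] at h1
  calc ∫ t in Set.Iic w, Real.exp (-t ^ 2 / 2) ≤ -Real.exp (-w ^ 2 / 2) / w := h1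
  _ = Real.exp (-w ^ 2 / 2) / (-w) := by ring

lemma my_tail_Ioi {w : ℝ} (hw : 0 < w) :
    ∫ t in Set.Ioi w, Real.exp (-t ^ 2 / 2) ≤ Real.exp (-w ^ 2 / 2) / w := by
  have hint2 : Integrable (fun t : ℝ => t / w * Real.exp (-t ^ 2 / 2)) := by
    simpa [div_mul_eq_mul_div] using my_mul_exp_integrable.div_const w
  have h1 : ∫ t in Set.Ioi w, Real.exp (-t ^ 2 / 2)
      ≤ ∫ t in Set.Ioi w, t / w * Real.exp (-t ^ 2 / 2) := by
    refine setIntegral_mono_on my_exp_integrable.integrableOn hint2.integrableOn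
      measurableSet_Ioi (fun t ht => ?_)
    have h1t : (1 : ℝ) ≤ t / w := (one_le_div hw).mpr (le_of_lt ht)
    nlinarith [Real.exp_pos (-t ^ 2 / 2)]
  have h2 : ∫ t in Set.Ioi w, t / w * Real.exp (-t ^ 2 / 2)
      = (∫ t in Set.Ioi w, t * Real.exp (-t ^ 2 / 2)) / w := by
    simp_rw [div_mul_eq_mul_div]
    exact integral_div w _
  rw [h2, my_integral_Ioi] at h1
  exact h1

/-- For bounded measurable `h` with `0 ≤ h ≤ 1`, the bounded solution `f_h` of the
Stein equation satisfies `‖f_h'‖_∞ ≤ 2 ‖h‖_∞`, where the a.e. derivative is given via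
the Stein equation `f_h'(w) = w f_h(w) + h(w) - E h(Z)`. -/
theorem stein_solution_first_derivative_bound
    (h : ℝ → ℝ) (hmeas : Measurable h) (hh : ∀ w, 0 ≤ h w ∧ h w ≤ 1)
    (f : ℝ → ℝ)
    (hf : ∀ w, f w = Real.exp (w ^ 2 / 2) *
      ∫ t in Set.Iic w, (h t - ∫ z, h z ∂(gaussianReal 0 1)) * Real.exp (-t ^ 2 / 2)) :
    ∀ w, |w * f w + (h w - ∫ z, h z ∂(gaussianReal 0 1))| ≤ 2 * ⨆ v, |h v| := by
  -- notation
  set c : ℝ := ∫ z, h z ∂(gaussianReal 0 1) with hc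
  set M : ℝ := ⨆ v, |h v| with hM
  have hbdd : BddAbove (Set.range fun v => |h v|) := by
    refine ⟨1, ?_⟩
    rintro x ⟨v, rfl⟩
    exact abs_le.mpr ⟨by linarith [(hh v).1], (hh v).2⟩
  have habs : ∀ t, |h t| ≤ M := fun t => le_ciSup hbdd t
  have hM0 : 0 ≤ M := (abs_nonneg _).trans (habs 0)
  have hint : Integrable h (gaussianReal 0 1) := by
    refine (integrable_const (1:ℝ)).mono' hmeas.aestronglyMeasurable (ae_of_all _ fun x => ?_)
    rw [Real.norm_eq_abs]
    exact abs_le.mpr ⟨by linarith [(hh x).1], (hh x).2⟩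
  have hc0 : 0 ≤ c := integral_nonneg fun x => (hh x).1
  have hcM : c ≤ M := by
    calc c ≤ ∫ _, M ∂(gaussianReal 0 1) :=
        integral_mono hint (integrable_const M) fun t => (le_abs_self _).trans (habs t)
    _ = M := by simp
  have hdiff : ∀ t, |h t - c| ≤ M := fun t => by
    have h1 := (hh t).1
    have h2 := (le_abs_self (h t)).trans (habs t)
    exact abs_le.mpr ⟨by linarith, by linarith⟩
  -- the integrand
  set g : ℝ → ℝ := fun t => (h t - c) * Real.exp (-t ^ 2 / 2) with hg
  have hgmeas : Measurable g := ((hmeas.sub measurable_const).mul (by fun_prop))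
  have hgbound : ∀ t, |g t| ≤ M * Real.exp (-t ^ 2 / 2) := fun t => by
    rw [hg]
    simp only [abs_mul, abs_of_pos (Real.exp_pos _)]
    exact mul_le_mul_of_nonneg_right (hdiff t) (Real.exp_pos _).le
  have hgint : Integrable g := by
    refine (my_exp_integrable.const_mul M).mono' hgmeas.aestronglyMeasurable
      (ae_of_all _ fun t => ?_)
    rw [Real.norm_eq_abs]
    exact hgbound t
  -- total integral of g is zero
  have hhe_int : Integrable (fun t => h t * Real.exp (-t ^ 2 / 2)) := by
    refine my_exp_integrable.mono' ((hmeas.mul (by fun_prop)).aestronglyMeasurable)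
      (ae_of_all _ fun t => ?_)
    rw [Real.norm_eq_abs, abs_mul, abs_of_pos (Real.exp_pos _)]
    exact mul_le_of_le_one_left (Real.exp_pos _).le
      (abs_le.mpr ⟨by linarith [(hh t).1], (hh t).2⟩)
  have hcval : c = (Real.sqrt (2 * π))⁻¹ * ∫ t, h t * Real.exp (-t ^ 2 / 2) := by
    rw [hc, gaussianReal_of_var_ne_zero 0 one_ne_zero]
    have hpdf : (gaussianPDF 0 1) = fun x => ((gaussianPDFReal 0 1 x).toNNReal : ℝ≥0∞) := by
      funext x; rfl
    rw [hpdf]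
    rw [integral_withDensity_eq_integral_smul
      ((measurable_gaussianPDFReal 0 1).real_toNNReal)]
    rw [← integral_const_mul]
    congr 1
    funext x
    have hnn := gaussianPDFReal_nonneg 0 1 x
    rw [NNReal.smul_def, smul_eq_mul, Real.coe_toNNReal _ hnn]
    rw [gaussianPDFReal]
    norm_num
    ring
  have htotal : ∫ t, g t = 0 := by
    rw [hg]
    simp_rw [sub_mul]
    rw [integral_sub hhe_int (my_exp_integrable.const_mul c), integral_const_mul,
      my_integral_exp, hcval]
    have hsqrt : Real.sqrt (2 * π) ≠ 0 := by
      positivity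
    field_simp
    simp
  -- generic bound on set integrals of g
  have hsetbound : ∀ s : Set ℝ, MeasurableSet s →
      |∫ t in s, g t| ≤ M * ∫ t in s, Real.exp (-t ^ 2 / 2) := by
    intro s hs
    calc |∫ t in s, g t| ≤ ∫ t in s, |g t| := by
          simpa [Real.norm_eq_abs] using norm_integral_le_integral_norm (μ := volume.restrict s) g
    _ ≤ ∫ t in s, M * Real.exp (-t ^ 2 / 2) := by
        refine setIntegral_mono_on (hgint.abs.integrableOn)
          ((my_exp_integrable.const_mul M).integrableOn) hs (fun t _ => hgbound t)
    _ = M * ∫ t in s, Real.exp (-t ^ 2 / 2) := integral_const_mul M _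
  intro w
  have hexp01 : Real.exp (w ^ 2 / 2) * Real.exp (-w ^ 2 / 2) = 1 := by
    rw [← Real.exp_add]; ring_nf; exact Real.exp_zero
  have key : |w * f w| ≤ M := by
    rcases lt_trichotomy w 0 with hw | hw | hw
    · -- w < 0
      have hwne : w ≠ 0 := ne_of_lt hw
      have hb := hsetbound (Set.Iic w) measurableSet_Iic
      have htail := my_tail_Iic hw
      have hI : |∫ t in Set.Iic w, g t| ≤ M * (Real.exp (-w ^ 2 / 2) / (-w)) :=
        hb.trans (mul_le_mul_of_nonneg_left htail hM0)
      rw [hf w]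
      rw [abs_mul, abs_mul, abs_of_neg hw, abs_of_pos (Real.exp_pos _)]
      calc -w * (Real.exp (w ^ 2 / 2) * |∫ t in Set.Iic w, g t|)
          ≤ -w * (Real.exp (w ^ 2 / 2) * (M * (Real.exp (-w ^ 2 / 2) / (-w)))) := by
            apply mul_le_mul_of_nonneg_left _ (by linarith)
            exact mul_le_mul_of_nonneg_left hI (Real.exp_pos _).le
      _ = M * (Real.exp (w ^ 2 / 2) * Real.exp (-w ^ 2 / 2)) := by
            field_simp
      _ = M := by rw [hexp01, mul_one]
    · simp [hw, hM0]
    · -- w > 0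
      have hswitch : ∫ t in Set.Iic w, g t = -∫ t in Set.Ioi w, g t := by
        have := intervalIntegral.integral_Iic_add_Ioi (f := g) (μ := volume) (b := w)
          hgint.integrableOn hgint.integrableOn
        rw [htotal] at this
        linarith
      have hwne : w ≠ 0 := ne_of_gt hw
      have hb := hsetbound (Set.Ioi w) measurableSet_Ioi
      have htail := my_tail_Ioi hw
      have hI : |∫ t in Set.Iic w, g t| ≤ M * (Real.exp (-w ^ 2 / 2) / w) := by
        rw [hswitch, abs_neg]
        exact hb.trans (mul_le_mul_of_nonneg_left htail hM0)
      rw [hf w]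
      rw [abs_mul, abs_mul, abs_of_pos hw, abs_of_pos (Real.exp_pos _)]
      calc w * (Real.exp (w ^ 2 / 2) * |∫ t in Set.Iic w, g t|)
          ≤ w * (Real.exp (w ^ 2 / 2) * (M * (Real.exp (-w ^ 2 / 2) / w))) := by
            apply mul_le_mul_of_nonneg_left _ (by linarith)
            exact mul_le_mul_of_nonneg_left hI (Real.exp_pos _).le
      _ = M * (Real.exp (w ^ 2 / 2) * Real.exp (-w ^ 2 / 2)) := by
            field_simp
      _ = M := by rw [hexp01, mul_one]
  calc |w * f w + (h w - c)| ≤ |w * f w| + |h w - c| := abs_add_le _ _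
  _ ≤ M + M := add_le_add key (hdiff w)
  _ = 2 * M := by ring
end

section
/- Let W be a real random variable with E W = 0 and Var(W) = B² > 0. Then there exists an absolutely continuous random variable W* with density function x ↦ E[W·1_{W > x}]/B² such that E[W f(W)] = B² E[f'(W*)] for every absolutely continuous f with E|W f(W)| < ∞ and E|f'(W*)| < ∞. -/
open MeasureTheory ProbabilityTheory
open scoped ENNReal NNReal

/-- Existence of the zero-bias transform: for `W` with mean `0` and variance `B² > 0`,
the function `x ↦ E[W 1_{W > x}]/B²` is a probability density on `ℝ`, and a random
variable `W*` with this density satisfies `E[W f(W)] = B² E[f'(W*)]` for all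
absolutely continuous `f` with the relevant expectations existing. -/
theorem zero_bias_transform_exists
    {Ω : Type*} [MeasureSpace Ω] [IsProbabilityMeasure (ℙ : Measure Ω)]
    (W : Ω → ℝ) (hmeas : Measurable W) (B : ℝ) (hB : 0 < B)
    (hmean : ∫ ω, W ω ∂ℙ = 0)
    (hvar : ∫ ω, (W ω) ^ 2 ∂ℙ = B ^ 2)
    (hL2 : Integrable (fun ω => (W ω) ^ 2) ℙ)
    (p : ℝ → ℝ)
    (hp : ∀ x, p x = (∫ ω, W ω * (if x < W ω then (1 : ℝ) else 0) ∂ℙ) / B ^ 2) :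
    (∀ x, 0 ≤ p x) ∧
    IsProbabilityMeasure (volume.withDensity (fun x => ENNReal.ofReal (p x))) ∧
    (∀ f f' : ℝ → ℝ, Measurable f' →
      (∀ a b : ℝ, f b - f a = ∫ t in a..b, f' t) →
      Integrable (fun ω => W ω * f (W ω)) ℙ →
      Integrable f' (volume.withDensity (fun x => ENNReal.ofReal (p x))) →
      ∫ ω, W ω * f (W ω) ∂ℙ =
        B ^ 2 * ∫ x, f' x ∂(volume.withDensity (fun x => ENNReal.ofReal (p x)))) := by
  have hB2 : (0:ℝ) < B ^ 2 := by positivity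
  -- W is integrable
  have hW1 : Integrable W ℙ := by
    have h1 : Integrable (fun ω => (W ω) ^ 2 + 1) ℙ := hL2.add (integrable_const 1)
    refine h1.mono hmeas.aestronglyMeasurable ?_
    filter_upwards with ω
    rw [Real.norm_eq_abs, Real.norm_eq_abs,
      abs_of_nonneg (by positivity : (0:ℝ) ≤ W ω ^ 2 + 1)]
    nlinarith [sq_nonneg (|W ω| - 1), sq_abs (W ω), abs_nonneg (W ω)]
  -- the two kernels
  set kco : ℝ → Ω → ℝ :=
    fun x ω => if min 0 (W ω) ≤ x ∧ x < max 0 (W ω) then |W ω| else 0 with hkco_def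
  set koc : ℝ → Ω → ℝ :=
    fun x ω => if min 0 (W ω) < x ∧ x ≤ max 0 (W ω) then |W ω| else 0 with hkoc_def
  have hkco_meas : Measurable (fun z : ℝ × Ω => kco z.1 z.2) := by
    refine Measurable.ite ?_ ((hmeas.comp measurable_snd).abs) measurable_const
    have : {z : ℝ × Ω | min 0 (W z.2) ≤ z.1 ∧ z.1 < max 0 (W z.2)} =
        {z : ℝ × Ω | min 0 (W z.2) ≤ z.1} ∩ {z : ℝ × Ω | z.1 < max 0 (W z.2)} := rfl
    rw [this]
    exact (measurableSet_le (measurable_const.min (hmeas.comp measurable_snd))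
        measurable_fst).inter
      (measurableSet_lt measurable_fst (measurable_const.max (hmeas.comp measurable_snd)))
  have hkoc_meas : Measurable (fun z : ℝ × Ω => koc z.1 z.2) := by
    refine Measurable.ite ?_ ((hmeas.comp measurable_snd).abs) measurable_const
    have : {z : ℝ × Ω | min 0 (W z.2) < z.1 ∧ z.1 ≤ max 0 (W z.2)} =
        {z : ℝ × Ω | min 0 (W z.2) < z.1} ∩ {z : ℝ × Ω | z.1 ≤ max 0 (W z.2)} := rfl
    rw [this]
    exact (measurableSet_lt (measurable_const.min (hmeas.comp measurable_snd))
        measurable_fst).inter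
      (measurableSet_le measurable_fst (measurable_const.max (hmeas.comp measurable_snd)))
  have hkco_meas1 : ∀ x, Measurable (kco x) := fun x =>
    hkco_meas.comp (measurable_const.prodMk measurable_id)
  have hkoc_meas1 : ∀ x, Measurable (koc x) := fun x =>
    hkoc_meas.comp (measurable_const.prodMk measurable_id)
  have hkco_nn : ∀ x ω, 0 ≤ kco x ω := by
    intro x ω; simp only [hkco_def]; split <;> simp [abs_nonneg]
  have hkoc_nn : ∀ x ω, 0 ≤ koc x ω := by
    intro x ω; simp only [hkoc_def]; split <;> simp [abs_nonneg]
  have hkco_int : ∀ x, Integrable (kco x) ℙ := by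
    intro x
    refine hW1.abs.mono (hkco_meas1 x).aestronglyMeasurable ?_
    filter_upwards with ω
    rw [Real.norm_eq_abs, Real.norm_eq_abs, abs_abs]
    simp only [hkco_def]; split <;> simp [abs_nonneg, abs_of_nonneg (abs_nonneg (W ω))]
  have hkoc_int : ∀ x, Integrable (koc x) ℙ := by
    intro x
    refine hW1.abs.mono (hkoc_meas1 x).aestronglyMeasurable ?_
    filter_upwards with ω
    rw [Real.norm_eq_abs, Real.norm_eq_abs, abs_abs]
    simp only [hkoc_def]; split <;> simp [abs_nonneg, abs_of_nonneg (abs_nonneg (W ω))]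
  -- the key pointwise identity for the density
  have L1 : ∀ x, (∫ ω, W ω * (if x < W ω then (1 : ℝ) else 0) ∂ℙ) = ∫ ω, kco x ω ∂ℙ := by
    intro x
    rcases le_or_gt 0 x with hx | hx
    · refine integral_congr_ae (Filter.Eventually.of_forall fun ω => ?_)
      simp only [hkco_def]
      by_cases hxw : x < W ω
      · have h1 : min 0 (W ω) ≤ x := le_trans (min_le_left _ _) hx
        have h2 : x < max 0 (W ω) := lt_of_lt_of_le hxw (le_max_right _ _)
        have h3 : 0 < W ω := lt_of_le_of_lt hx hxw
        rw [if_pos hxw, if_pos ⟨h1, h2⟩, mul_one, abs_of_pos h3]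
      · have h2 : ¬ (min 0 (W ω) ≤ x ∧ x < max 0 (W ω)) := by
          rintro ⟨-, h⟩
          exact absurd h (not_lt.mpr (max_le hx (le_of_not_gt hxw)))
        rw [if_neg hxw, if_neg h2, mul_zero]
    · -- x < 0 case
      have hint2 : Integrable (fun ω => W ω * (if W ω ≤ x then (1:ℝ) else 0)) ℙ := by
        refine hW1.mono (Measurable.aestronglyMeasurable ?_) ?_
        · exact hmeas.mul (Measurable.ite (measurableSet_le hmeas measurable_const)
            measurable_const measurable_const)
        filter_upwards with ω
        rw [Real.norm_eq_abs, Real.norm_eq_abs]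
        split <;> simp [abs_nonneg]
      have hsplit : (fun ω => W ω * (if x < W ω then (1 : ℝ) else 0)) =
          fun ω => W ω - W ω * (if W ω ≤ x then (1:ℝ) else 0) := by
        funext ω
        rcases le_or_gt (W ω) x with h | h
        · simp [h, not_lt.mpr h]
        · simp [h, not_le.mpr h]
      rw [hsplit, integral_sub hW1 hint2, hmean, zero_sub, ← integral_neg]
      refine integral_congr_ae (Filter.Eventually.of_forall fun ω => ?_)
      simp only [hkco_def]
      by_cases hwx : W ω ≤ x
      · have h1 : min 0 (W ω) ≤ x := le_trans (min_le_right _ _) hwx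
        have h2 : x < max 0 (W ω) := lt_of_lt_of_le hx (le_max_left _ _)
        have h3 : W ω < 0 := lt_of_le_of_lt hwx hx
        rw [if_pos hwx, if_pos ⟨h1, h2⟩, mul_one, abs_of_neg h3]
      · have h2 : ¬ (min 0 (W ω) ≤ x ∧ x < max 0 (W ω)) := by
          rintro ⟨h, -⟩
          rcases min_le_iff.mp h with h' | h'
          · exact absurd hx (not_lt.mpr h')
          · exact hwx h'
        rw [if_neg hwx, mul_zero, neg_zero, if_neg h2]
  have hqnn : ∀ x, 0 ≤ ∫ ω, kco x ω ∂ℙ := fun x => integral_nonneg (hkco_nn x)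
  have hp' : ∀ x, p x = (∫ ω, kco x ω ∂ℙ) / B ^ 2 := fun x => by rw [hp x, L1 x]
  have part1 : ∀ x, 0 ≤ p x := fun x => by
    rw [hp' x]; exact div_nonneg (hqnn x) hB2.le
  -- lintegral version of the density numerator
  set Q : ℝ → ℝ≥0∞ := fun x => ∫⁻ ω, ENNReal.ofReal (kco x ω) ∂ℙ with hQ_def
  have hQ_eq : ∀ x, Q x = ENNReal.ofReal (∫ ω, kco x ω ∂ℙ) := fun x =>
    (ofReal_integral_eq_lintegral_ofReal (hkco_int x)
      (Filter.Eventually.of_forall (hkco_nn x))).symm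
  have hQmeas : Measurable Q := by
    apply Measurable.lintegral_prod_right (f := fun x ω => ENNReal.ofReal (kco x ω))
    exact ENNReal.measurable_ofReal.comp hkco_meas
  -- Tonelli computation
  have hQtot : ∫⁻ x, Q x ∂volume = ENNReal.ofReal (B ^ 2) := by
    have hswap : ∫⁻ x, Q x ∂volume
        = ∫⁻ ω, ∫⁻ x, ENNReal.ofReal (kco x ω) ∂volume ∂ℙ := by
      exact lintegral_lintegral_swap
        ((ENNReal.measurable_ofReal.comp hkco_meas).aemeasurable)
    have hinner : ∀ ω, ∫⁻ x, ENNReal.ofReal (kco x ω) ∂volume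
        = ENNReal.ofReal ((W ω) ^ 2) := by
      intro ω
      have heq : (fun x => ENNReal.ofReal (kco x ω)) =
          Set.indicator (Set.Ico (min 0 (W ω)) (max 0 (W ω)))
            (fun _ => ENNReal.ofReal (|W ω|)) := by
        funext x
        simp only [hkco_def]
        by_cases h : min 0 (W ω) ≤ x ∧ x < max 0 (W ω)
        · rw [if_pos h, Set.indicator_of_mem (Set.mem_Ico.mpr h)]
        · rw [if_neg h, Set.indicator_of_notMem (fun hc => h (Set.mem_Ico.mp hc)),
            ENNReal.ofReal_zero]
      rw [heq, lintegral_indicator measurableSet_Ico, setLIntegral_const,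
        Real.volume_Ico]
      have : max 0 (W ω) - min 0 (W ω) = |W ω| := by
        rw [max_sub_min_eq_abs]; simp [abs_sub_comm]
      rw [this, ← ENNReal.ofReal_mul (abs_nonneg _), abs_mul_abs_self, sq]
    rw [hswap]
    simp_rw [hinner]
    rw [← ofReal_integral_eq_lintegral_ofReal hL2
      (Filter.Eventually.of_forall fun ω => sq_nonneg _), hvar]
  have hofp : ∀ x, ENNReal.ofReal (p x) = Q x * (ENNReal.ofReal (B ^ 2))⁻¹ := by
    intro x
    rw [hp' x, ENNReal.ofReal_div_of_pos hB2, hQ_eq x, div_eq_mul_inv]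
  have part2 : IsProbabilityMeasure
      (volume.withDensity (fun x => ENNReal.ofReal (p x))) := by
    constructor
    rw [withDensity_apply _ MeasurableSet.univ, setLIntegral_univ]
    calc ∫⁻ x, ENNReal.ofReal (p x) ∂volume
        = ∫⁻ x, Q x * (ENNReal.ofReal (B ^ 2))⁻¹ ∂volume := by simp_rw [hofp]
      _ = (∫⁻ x, Q x ∂volume) * (ENNReal.ofReal (B ^ 2))⁻¹ :=
          lintegral_mul_const'' _ hQmeas.aemeasurable
      _ = 1 := by
          rw [hQtot]
          exact ENNReal.mul_inv_cancel (ENNReal.ofReal_pos.mpr hB2).ne'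
            ENNReal.ofReal_ne_top
  refine ⟨part1, part2, ?_⟩
  -- the main identity
  intro f f' hf'm hFTC hint1 hint2
  have hpmeas : Measurable p := by
    have : p = fun x => (Q x).toReal / B ^ 2 := by
      funext x
      rw [hp' x, hQ_eq x, ENNReal.toReal_ofReal (hqnn x)]
    rw [this]
    exact hQmeas.ennreal_toReal.div_const _
  -- a.e. bridge between the two kernels
  have hbridge : ∀ᵐ x ∂(volume : Measure ℝ),
      (koc x) =ᵐ[ℙ] (kco x) := by
    have hcnt : Set.Countable (insert (0:ℝ) {t : ℝ | 0 < ℙ {ω | W ω = t}}) :=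
      (Measure.countable_meas_level_set_pos hmeas).insert 0
    have hvol0 : (volume : Measure ℝ) (insert (0:ℝ) {t : ℝ | 0 < ℙ {ω | W ω = t}}) = 0 :=
      hcnt.measure_zero _
    filter_upwards [measure_eq_zero_iff_ae_notMem.mp hvol0] with x hx
    have hx0 : x ≠ 0 := fun h => hx (by simp [h])
    have hatom : ℙ {ω | W ω = x} = 0 := by
      by_contra h
      exact hx (Set.mem_insert_iff.mpr (Or.inr (pos_iff_ne_zero.mpr h)))
    filter_upwards [measure_eq_zero_iff_ae_notMem.mp hatom] with ω hω
    have hne : W ω ≠ x := hω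
    simp only [hkco_def, hkoc_def]
    rcases hx0.lt_or_gt with hxneg | hxpos
    · -- x < 0
      have h1 : x < max 0 (W ω) := lt_of_lt_of_le hxneg (le_max_left _ _)
      by_cases hw : W ω ≤ x
      · have hw' : W ω < x := lt_of_le_of_ne hw hne
        have a1 : min 0 (W ω) < x := lt_of_le_of_lt (min_le_right _ _) hw'
        have a2 : min 0 (W ω) ≤ x := le_trans (min_le_right _ _) hw
        simp [a1, a2, h1, h1.le]
      · have hw' : x < W ω := not_le.mp hw
        have a1 : ¬ min 0 (W ω) < x := by
          rw [not_lt, le_min_iff]; exact ⟨hxneg.le, hw'.le⟩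
        have a2 : ¬ min 0 (W ω) ≤ x := by
          rw [not_le, lt_min_iff]; exact ⟨hxneg, hw'⟩
        simp [a1, a2]
    · -- 0 < x
      have h1 : min 0 (W ω) < x := lt_of_le_of_lt (min_le_left _ _) hxpos
      by_cases hw : x ≤ W ω
      · have hw' : x < W ω := lt_of_le_of_ne hw (Ne.symm hne)
        have a1 : x ≤ max 0 (W ω) := le_trans hw (le_max_right _ _)
        have a2 : x < max 0 (W ω) := lt_of_lt_of_le hw' (le_max_right _ _)
        simp [h1, h1.le, a1, a2]
      · have hw' : W ω < x := not_le.mp hw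
        have a1 : ¬ x ≤ max 0 (W ω) := by
          rw [not_le, max_lt_iff]; exact ⟨hxpos, hw'⟩
        have a2 : ¬ x < max 0 (W ω) := by
          rw [not_lt, max_le_iff]; exact ⟨hxpos.le, hw'.le⟩
        simp [a1, a2]
  -- step A: subtract f 0
  have hA : ∫ ω, W ω * f (W ω) ∂ℙ = ∫ ω, W ω * (f (W ω) - f 0) ∂ℙ := by
    have heq : (fun ω => W ω * (f (W ω) - f 0)) =
        fun ω => W ω * f (W ω) - W ω * f 0 := by
      funext ω; ring
    rw [heq, integral_sub hint1 (hW1.mul_const (f 0)), integral_mul_const, hmean,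
      zero_mul, sub_zero]
  -- step B: pointwise rewriting via FTC
  have hB1 : ∀ ω, W ω * (f (W ω) - f 0) = ∫ x, f' x * koc x ω ∂volume := by
    intro ω
    rw [hFTC 0 (W ω)]
    rcases le_or_gt 0 (W ω) with h | h
    · rw [intervalIntegral.integral_of_le h, ← integral_indicator measurableSet_Ioc,
        ← integral_const_mul]
      refine integral_congr_ae (Filter.Eventually.of_forall fun x => ?_)
      simp only [hkoc_def]
      by_cases hx : x ∈ Set.Ioc 0 (W ω)
      · have hx' := Set.mem_Ioc.mp hx
        have a1 : min 0 (W ω) < x := lt_of_le_of_lt (min_le_left _ _) hx'.1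
        have a2 : x ≤ max 0 (W ω) := le_trans hx'.2 (le_max_right _ _)
        rw [Set.indicator_of_mem hx, if_pos ⟨a1, a2⟩, abs_of_nonneg h]
        ring
      · have a1 : ¬ (min 0 (W ω) < x ∧ x ≤ max 0 (W ω)) := by
          rintro ⟨h1, h2⟩
          rw [min_eq_left h] at h1
          rw [max_eq_right h] at h2
          exact hx (Set.mem_Ioc.mpr ⟨h1, h2⟩)
        rw [Set.indicator_of_notMem hx, mul_zero, if_neg a1, mul_zero]
    · rw [intervalIntegral.integral_of_ge h.le, ← integral_indicator measurableSet_Ioc,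
        mul_neg, ← neg_mul, ← integral_const_mul]
      refine integral_congr_ae (Filter.Eventually.of_forall fun x => ?_)
      simp only [hkoc_def]
      by_cases hx : x ∈ Set.Ioc (W ω) 0
      · have hx' := Set.mem_Ioc.mp hx
        have a1 : min 0 (W ω) < x := by rw [min_eq_right h.le]; exact hx'.1
        have a2 : x ≤ max 0 (W ω) := by rw [max_eq_left h.le]; exact hx'.2
        rw [Set.indicator_of_mem hx, if_pos ⟨a1, a2⟩, abs_of_neg h]
        ring
      · have a1 : ¬ (min 0 (W ω) < x ∧ x ≤ max 0 (W ω)) := by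
          rintro ⟨h1, h2⟩
          rw [min_eq_right h.le] at h1
          rw [max_eq_left h.le] at h2
          exact hx (Set.mem_Ioc.mpr ⟨h1, h2⟩)
        rw [Set.indicator_of_notMem hx, mul_zero, if_neg a1, mul_zero]
  -- integrability on the product space
  have hkmeas : Measurable (fun z : Ω × ℝ => f' z.2 * koc z.2 z.1) := by
    have : Measurable (fun z : Ω × ℝ => koc z.2 z.1) :=
      hkoc_meas.comp measurable_swap
    exact (hf'm.comp measurable_snd).mul this
  have hprod : Integrable (fun z : Ω × ℝ => f' z.2 * koc z.2 z.1)
      ((ℙ : Measure Ω).prod volume) := by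
    refine ⟨hkmeas.aestronglyMeasurable, ?_⟩
    rw [hasFiniteIntegral_iff_norm]
    have hmeasE : AEMeasurable
        (fun z : Ω × ℝ => ENNReal.ofReal ‖f' z.2 * koc z.2 z.1‖)
        ((ℙ : Measure Ω).prod volume) :=
      (ENNReal.measurable_ofReal.comp hkmeas.norm).aemeasurable
    have hpr : ∫⁻ z : Ω × ℝ, ENNReal.ofReal ‖f' z.2 * koc z.2 z.1‖
          ∂((ℙ : Measure Ω).prod volume)
        = ∫⁻ x, ∫⁻ ω, ENNReal.ofReal ‖f' x * koc x ω‖ ∂ℙ ∂volume := by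
      rw [lintegral_prod _ hmeasE]
      exact lintegral_lintegral_swap
        (f := fun (ω : Ω) (x : ℝ) => ENNReal.ofReal ‖f' x * koc x ω‖)
        (by exact (ENNReal.measurable_ofReal.comp hkmeas.norm).aemeasurable)
    rw [hpr]
    have hxeq : ∀ᵐ x ∂(volume : Measure ℝ),
        ∫⁻ ω, ENNReal.ofReal ‖f' x * koc x ω‖ ∂ℙ =
          ENNReal.ofReal (B ^ 2) * (ENNReal.ofReal (p x) * ENNReal.ofReal |f' x|) := by
      filter_upwards [hbridge] with x hx
      have step1 : ∫⁻ ω, ENNReal.ofReal ‖f' x * koc x ω‖ ∂ℙ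
          = ENNReal.ofReal |f' x| * ∫⁻ ω, ENNReal.ofReal (koc x ω) ∂ℙ := by
        rw [← lintegral_const_mul (ENNReal.ofReal |f' x|)
          (f := fun ω => ENNReal.ofReal (koc x ω)) (hkoc_meas1 x).ennreal_ofReal]
        refine lintegral_congr fun ω => ?_
        rw [Real.norm_eq_abs, abs_mul, abs_of_nonneg (hkoc_nn x ω),
          ENNReal.ofReal_mul (abs_nonneg _)]
      have step2 : ∫⁻ ω, ENNReal.ofReal (koc x ω) ∂ℙ = Q x := by
        exact lintegral_congr_ae (hx.mono fun ω h => congrArg ENNReal.ofReal h)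
      have step3 : Q x = ENNReal.ofReal (B ^ 2) * ENNReal.ofReal (p x) := by
        rw [hQ_eq x, ← ENNReal.ofReal_mul hB2.le]
        congr 1
        rw [hp' x]
        field_simp
      rw [step1, step2, step3]
      ring
    rw [lintegral_congr_ae hxeq]
    rw [lintegral_const_mul (ENNReal.ofReal (B ^ 2))
      (f := fun x => ENNReal.ofReal (p x) * ENNReal.ofReal |f' x|)
      (hpmeas.ennreal_ofReal.mul hf'm.abs.ennreal_ofReal)]
    refine ENNReal.mul_lt_top ENNReal.ofReal_lt_top ?_
    have hfin := hint2.2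
    rw [HasFiniteIntegral] at hfin
    rw [lintegral_withDensity_eq_lintegral_mul volume
      hpmeas.ennreal_ofReal hf'm.enorm] at hfin
    refine lt_of_le_of_lt (le_of_eq (lintegral_congr fun x => ?_)) hfin
    rw [Pi.mul_apply, Real.enorm_eq_ofReal_abs]
  -- main chain
  calc ∫ ω, W ω * f (W ω) ∂ℙ
      = ∫ ω, ∫ x, f' x * koc x ω ∂volume ∂ℙ := by
        rw [hA]; exact integral_congr_ae (Filter.Eventually.of_forall hB1)
    _ = ∫ x, ∫ ω, f' x * koc x ω ∂ℙ ∂volume := integral_integral_swap hprod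
    _ = ∫ x, f' x * ∫ ω, koc x ω ∂ℙ ∂volume := by
        refine integral_congr_ae (Filter.Eventually.of_forall fun x => ?_)
        exact integral_const_mul _ _
    _ = ∫ x, f' x * (B ^ 2 * p x) ∂volume := by
        refine integral_congr_ae ?_
        filter_upwards [hbridge] with x hx
        rw [integral_congr_ae hx, hp' x]
        field_simp
    _ = B ^ 2 * ∫ x, p x * f' x ∂volume := by
        rw [← integral_const_mul]
        refine integral_congr_ae (Filter.Eventually.of_forall fun x => ?_)
        ring
    _ = B ^ 2 * ∫ x, f' x ∂(volume.withDensity (fun x => ENNReal.ofReal (p x))) := by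
        congr 1
        have hdens : (fun x => ENNReal.ofReal (p x))
            = (fun x => ((fun x => (p x).toNNReal) x : ℝ≥0∞)) := rfl
        rw [hdens, integral_withDensity_eq_integral_smul
          (f := fun x => (p x).toNNReal)
          (by exact measurable_real_toNNReal.comp hpmeas) f']
        refine integral_congr_ae (Filter.Eventually.of_forall fun x => ?_)
        show p x * f' x = (p x).toNNReal • f' x
        rw [NNReal.smul_def, smul_eq_mul, Real.coe_toNNReal _ (part1 x)]
end

section
/- If W has mean 0, variance 1, and W* is a zero-bias transform of W defined on the same probability space, then the Wasserstein distance between the law of W and the standard normal satisfies d_W(W, Z) ≤ 2 E|W* - W|. -/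
open MeasureTheory ProbabilityTheory Real Set Filter Topology
open scoped NNReal ENNReal
noncomputable def sphi (x : ℝ) : ℝ := (Real.sqrt (2 * Real.pi))⁻¹ * Real.exp (-x ^ 2 / 2)

lemma sphi_eq_gaussianPDFReal : sphi = gaussianPDFReal 0 1 := by
  ext x
  simp [sphi, gaussianPDFReal]

lemma sphi_pos (x : ℝ) : 0 < sphi x := by
  unfold sphi; positivity

lemma sphi_ne_zero (x : ℝ) : sphi x ≠ 0 := (sphi_pos x).ne'

lemma sphi_even (x : ℝ) : sphi (-x) = sphi x := by simp [sphi]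

lemma continuous_sphi : Continuous sphi := by
  unfold sphi; continuity

lemma integrable_sphi : Integrable sphi := by
  rw [sphi_eq_gaussianPDFReal]; exact integrable_gaussianPDFReal 0 1

lemma integral_sphi : ∫ x, sphi x = 1 := by
  rw [sphi_eq_gaussianPDFReal]; exact integral_gaussianPDFReal_eq_one 0 one_ne_zero

lemma hasDerivAt_sphi (x : ℝ) : HasDerivAt sphi (-x * sphi x) x := by
  have h1 : HasDerivAt (fun x : ℝ => -x ^ 2 / 2) (-x) x := by
    have := ((hasDerivAt_pow 2 x).neg).div_const 2
    simpa using this.congr_deriv (by ring)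
  have h2 := (h1.exp).const_mul ((Real.sqrt (2 * Real.pi))⁻¹)
  unfold sphi
  exact h2.congr_deriv (by ring)

lemma integrable_mul_sphi : Integrable (fun x => x * sphi x) := by
  have h := (integrable_mul_exp_neg_mul_sq (show (0:ℝ) < 1/2 by norm_num)).const_mul
    ((Real.sqrt (2 * Real.pi))⁻¹)
  refine h.congr (Eventually.of_forall fun x => ?_)
  unfold sphi
  simp only [show -(1/2 : ℝ) * x ^ 2 = -x ^ 2 / 2 by ring]
  ring

lemma integrable_abs_mul_sphi : Integrable (fun x => |x| * sphi x) := by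
  have := integrable_mul_sphi.abs
  refine this.congr (Eventually.of_forall fun x => ?_)
  simp only [abs_mul, abs_of_nonneg (sphi_pos x).le]

noncomputable def Phicdf (w : ℝ) : ℝ := ∫ t in Iic w, sphi t
noncomputable def Psicdf (w : ℝ) : ℝ := ∫ t in Ioi w, sphi t

lemma Phicdf_nonneg (w : ℝ) : 0 ≤ Phicdf w :=
  setIntegral_nonneg measurableSet_Iic fun t _ => (sphi_pos t).le

lemma Psicdf_nonneg (w : ℝ) : 0 ≤ Psicdf w :=
  setIntegral_nonneg measurableSet_Ioi fun t _ => (sphi_pos t).le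

lemma Phicdf_add_Psicdf (w : ℝ) : Phicdf w + Psicdf w = 1 := by
  rw [Phicdf, Psicdf, intervalIntegral.integral_Iic_add_Ioi integrable_sphi.integrableOn
    integrable_sphi.integrableOn, integral_sphi]

lemma Phicdf_reflect (w : ℝ) : Psicdf (-w) = Phicdf w := by
  rw [Phicdf, Psicdf]
  rw [show (∫ t in Iic w, sphi t) = ∫ t in Iic w, sphi (-t) by
    refine setIntegral_congr_fun measurableSet_Iic fun t _ => (sphi_even t).symm]
  rw [integral_comp_neg_Iic]

lemma tendsto_sq_half_atBot : Tendsto (fun x : ℝ => -x ^ 2 / 2) atBot atBot := by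
  have h0 : Tendsto (fun x : ℝ => x ^ 2) atBot atTop := by
    have h1 : Tendsto (fun x : ℝ => |x| ^ 2) atBot atTop :=
      (tendsto_pow_atTop (two_ne_zero)).comp tendsto_abs_atBot_atTop
    exact h1.congr fun x => sq_abs x
  have := tendsto_neg_atBot_iff.mpr (h0.atTop_div_const two_pos)
  exact this.congr fun x => by ring

lemma tendsto_sq_half_atTop : Tendsto (fun x : ℝ => -x ^ 2 / 2) atTop atBot := by
  have h0 : Tendsto (fun x : ℝ => x ^ 2) atTop atTop := tendsto_pow_atTop two_ne_zero
  have := tendsto_neg_atBot_iff.mpr (h0.atTop_div_const two_pos)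
  exact this.congr fun x => by ring

lemma tendsto_sphi_atBot : Tendsto sphi atBot (𝓝 0) := by
  have h := (Real.tendsto_exp_atBot.comp tendsto_sq_half_atBot).const_mul
    ((Real.sqrt (2 * Real.pi))⁻¹)
  rw [mul_zero] at h
  exact h.congr fun x => rfl

lemma tendsto_sphi_atTop : Tendsto sphi atTop (𝓝 0) := by
  have h := (Real.tendsto_exp_atBot.comp tendsto_sq_half_atTop).const_mul
    ((Real.sqrt (2 * Real.pi))⁻¹)
  rw [mul_zero] at h
  exact h.congr fun x => rfl

lemma integral_Iic_id_mul_sphi (w : ℝ) : ∫ t in Iic w, t * sphi t = -sphi w := by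
  have key : ∫ x in Iic w, x * sphi x = (fun x => -sphi x) w - 0 :=
    integral_Iic_of_hasDerivAt_of_tendsto'
      (fun x _ => by simpa using (hasDerivAt_sphi x).neg)
      integrable_mul_sphi.integrableOn (by have := tendsto_sphi_atBot.neg; rwa [neg_zero] at this)
  simpa using key

lemma integral_Ioi_id_mul_sphi (w : ℝ) : ∫ t in Ioi w, t * sphi t = sphi w := by
  have h := intervalIntegral.integral_Iic_add_Ioi (f := fun t => t * sphi t) (b := w)
    integrable_mul_sphi.integrableOn integrable_mul_sphi.integrableOn
  have h2 : ∫ t : ℝ, t * sphi t = 0 := by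
    have h3 := integral_neg_eq_self (fun t => t * sphi t) (μ := volume)
    have h4 : (∫ t : ℝ, (-t) * sphi (-t)) = ∫ t : ℝ, -(t * sphi t) := by
      congr 1; ext t; rw [sphi_even]; ring
    rw [h4, integral_neg] at h3
    linarith
  rw [integral_Iic_id_mul_sphi, h2] at h
  linarith

lemma integrableOn_sphi (s : Set ℝ) : IntegrableOn sphi s := integrable_sphi.integrableOn

lemma Phicdf_sub_Phicdf (a b : ℝ) : Phicdf b - Phicdf a = ∫ t in a..b, sphi t :=
  intervalIntegral.integral_Iic_sub_Iic (integrableOn_sphi _) (integrableOn_sphi _)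

lemma hasDerivAt_Phicdf (w : ℝ) : HasDerivAt Phicdf (sphi w) w := by
  have key : HasDerivAt (fun u => Phicdf 0 + ∫ t in (0:ℝ)..u, sphi t) (sphi w) w := by
    apply HasDerivAt.const_add
    exact intervalIntegral.integral_hasDerivAt_right
      (continuous_sphi.intervalIntegrable 0 w)
      (continuous_sphi.stronglyMeasurableAtFilter _ _)
      continuous_sphi.continuousAt
  have : (fun u => Phicdf 0 + ∫ t in (0:ℝ)..u, sphi t) = Phicdf := by
    ext u
    rw [← Phicdf_sub_Phicdf 0 u]; ring
  rwa [this] at key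

lemma hasDerivAt_Psicdf (w : ℝ) : HasDerivAt Psicdf (-sphi w) w := by
  have : Psicdf = fun u => 1 - Phicdf u := by
    ext u; have := Phicdf_add_Psicdf u; linarith
  rw [this]
  simpa using (hasDerivAt_Phicdf w).const_sub 1

lemma mills_aux (w : ℝ) : w * Psicdf w ≤ sphi w := by
  rcases le_or_gt w 0 with hw | hw
  · have := mul_nonpos_of_nonpos_of_nonneg hw (Psicdf_nonneg w)
    linarith [sphi_pos w]
  · have h1 : w * Psicdf w = ∫ t in Ioi w, w * sphi t := by
      rw [Psicdf, integral_const_mul]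
    have h2 : (∫ t in Ioi w, w * sphi t) ≤ ∫ t in Ioi w, t * sphi t := by
      apply setIntegral_mono_on ((integrable_sphi.const_mul w).integrableOn)
        integrable_mul_sphi.integrableOn measurableSet_Ioi
      intro t ht
      exact mul_le_mul_of_nonneg_right (le_of_lt ht) (sphi_pos t).le
    rw [h1]
    calc (∫ t in Ioi w, w * sphi t) ≤ ∫ t in Ioi w, t * sphi t := h2
      _ = sphi w := integral_Ioi_id_mul_sphi w

lemma mills_aux' (w : ℝ) : -(w * Phicdf w) ≤ sphi w := by
  have := mills_aux (-w)
  rw [Phicdf_reflect w, sphi_even] at this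
  linarith

lemma tendsto_Psicdf_atTop : Tendsto Psicdf atTop (𝓝 0) := by
  apply squeeze_zero' (Eventually.of_forall fun w => Psicdf_nonneg w) _ tendsto_sphi_atTop
  filter_upwards [eventually_ge_atTop (1:ℝ)] with w hw
  have h1 := mills_aux w
  nlinarith [Psicdf_nonneg w]

lemma tendsto_mul_sphi_atTop : Tendsto (fun w : ℝ => w * sphi w) atTop (𝓝 0) := by
  have hbase : Tendsto (fun w : ℝ => Real.exp 1 * ((Real.sqrt (2 * Real.pi))⁻¹ *
      (w ^ 1 * Real.exp (-w)))) atTop (𝓝 0) := by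
    have := (tendsto_pow_mul_exp_neg_atTop_nhds_zero 1).const_mul ((Real.sqrt (2 * Real.pi))⁻¹)
    rw [mul_zero] at this
    have := this.const_mul (Real.exp 1)
    rw [mul_zero] at this
    exact this
  apply squeeze_zero' _ _ hbase
  · filter_upwards [eventually_ge_atTop (0:ℝ)] with w hw
    exact mul_nonneg hw (sphi_pos w).le
  · filter_upwards [eventually_ge_atTop (0:ℝ)] with w hw
    have hexp : Real.exp (-w ^ 2 / 2) ≤ Real.exp 1 * Real.exp (-w) := by
      rw [← Real.exp_add]
      apply Real.exp_le_exp.mpr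
      nlinarith [sq_nonneg (w - 1)]
    have : w * sphi w = w * ((Real.sqrt (2 * Real.pi))⁻¹ * Real.exp (-w ^ 2 / 2)) := rfl
    rw [this]
    have hs : (0:ℝ) < (Real.sqrt (2 * Real.pi))⁻¹ := by positivity
    calc w * ((Real.sqrt (2 * Real.pi))⁻¹ * Real.exp (-w ^ 2 / 2))
        ≤ w * ((Real.sqrt (2 * Real.pi))⁻¹ * (Real.exp 1 * Real.exp (-w))) := by
          apply mul_le_mul_of_nonneg_left _ hw
          exact mul_le_mul_of_nonneg_left hexp hs.le
      _ = Real.exp 1 * ((Real.sqrt (2 * Real.pi))⁻¹ * (w ^ 1 * Real.exp (-w))) := by ring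

lemma tendsto_sq_mul_Psicdf_atTop : Tendsto (fun w : ℝ => w ^ 2 * Psicdf w) atTop (𝓝 0) := by
  apply squeeze_zero' _ _ tendsto_mul_sphi_atTop
  · filter_upwards [eventually_ge_atTop (0:ℝ)] with w hw
    exact mul_nonneg (sq_nonneg w) (Psicdf_nonneg w)
  · filter_upwards [eventually_ge_atTop (0:ℝ)] with w hw
    have h1 := mills_aux w
    nlinarith [Psicdf_nonneg w]

lemma millsP (w : ℝ) : 0 ≤ (1 + w ^ 2) * Psicdf w - w * sphi w := by
  set D : ℝ → ℝ := fun w => (1 + w ^ 2) * Psicdf w - w * sphi w with hD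
  have hderiv : ∀ x : ℝ, HasDerivAt D (2 * (x * Psicdf x - sphi x)) x := by
    intro x
    have h1 : HasDerivAt (fun y : ℝ => (1 + y ^ 2) * Psicdf y)
        (2 * x * Psicdf x + (1 + x ^ 2) * (-sphi x)) x := by
      have ha : HasDerivAt (fun y : ℝ => 1 + y ^ 2) (2 * x) x := by
        simpa using ((hasDerivAt_pow 2 x).const_add 1)
      exact (ha.mul (hasDerivAt_Psicdf x)).congr_deriv (by ring)
    have h2 : HasDerivAt (fun y : ℝ => y * sphi y) (sphi x + x * (-x * sphi x)) x := by
      exact ((hasDerivAt_id x).mul (hasDerivAt_sphi x)).congr_deriv (by simp only [id]; ring)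
    have := h1.sub h2
    exact this.congr_deriv (by ring)
  have hanti : Antitone D := by
    apply antitone_of_deriv_nonpos
    · exact fun x => (hderiv x).differentiableAt
    · intro x
      rw [(hderiv x).deriv]
      have := mills_aux x
      linarith
  have htend : Tendsto D atTop (𝓝 0) := by
    have h1 : Tendsto (fun w : ℝ => Psicdf w + w ^ 2 * Psicdf w - w * sphi w) atTop (𝓝 0) := by
      have := (tendsto_Psicdf_atTop.add tendsto_sq_mul_Psicdf_atTop).sub tendsto_mul_sphi_atTop
      simpa using this
    exact h1.congr fun w => by simp [hD]; ring
  exact le_of_tendsto htend (Filter.eventually_atTop.mpr ⟨w, fun y hy => hanti hy⟩)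

lemma millsQ (w : ℝ) : 0 ≤ (1 + w ^ 2) * Phicdf w + w * sphi w := by
  have := millsP (-w)
  rw [Phicdf_reflect w] at this  -- careful: Psicdf (-w) = Phicdf w
  rw [sphi_even] at this
  nlinarith [this]

section Stein
variable {H : ℝ → ℝ}

lemma lip_abs (lipH : LipschitzWith 1 H) (s t : ℝ) : |H s - H t| ≤ |s - t| := by
  have := lipH.dist_le_mul s t
  simpa [Real.dist_eq] using this

lemma H_growth (lipH : LipschitzWith 1 H) (t : ℝ) : |H t| ≤ |H 0| + |t| := by
  have h := lip_abs lipH t 0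
  simp only [sub_zero] at h
  calc |H t| = |(H t - H 0) + H 0| := by ring_nf
    _ ≤ |H t - H 0| + |H 0| := abs_add_le _ _
    _ ≤ |t| + |H 0| := by linarith
    _ = |H 0| + |t| := by ring

noncomputable def FF (H : ℝ → ℝ) (w : ℝ) : ℝ := ∫ t in Iic w, H t * sphi t
noncomputable def ff (H : ℝ → ℝ) (w : ℝ) : ℝ := FF H w / sphi w
noncomputable def gg (H : ℝ → ℝ) (w : ℝ) : ℝ := w * ff H w + H w

lemma integrable_H_mul_sphi (lipH : LipschitzWith 1 H) :
    Integrable (fun t => H t * sphi t) := by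
  refine Integrable.mono' ((integrable_sphi.const_mul |H 0|).add integrable_abs_mul_sphi)
    ((lipH.continuous.mul continuous_sphi).aestronglyMeasurable)
    (Eventually.of_forall fun t => ?_)
  simp only [Pi.add_apply]
  rw [Real.norm_eq_abs, abs_mul, abs_of_pos (sphi_pos t)]
  nlinarith [H_growth lipH t, sphi_pos t, abs_nonneg (H t)]

lemma FF_sub (lipH : LipschitzWith 1 H) (a b : ℝ) :
    FF H b - FF H a = ∫ t in a..b, H t * sphi t :=
  intervalIntegral.integral_Iic_sub_Iic (integrable_H_mul_sphi lipH).integrableOn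
    (integrable_H_mul_sphi lipH).integrableOn

lemma hasDerivAt_FF (lipH : LipschitzWith 1 H) (w : ℝ) :
    HasDerivAt (FF H) (H w * sphi w) w := by
  have key : HasDerivAt (fun u => FF H 0 + ∫ t in (0:ℝ)..u, H t * sphi t)
      (H w * sphi w) w := by
    apply HasDerivAt.const_add
    exact intervalIntegral.integral_hasDerivAt_right
      ((lipH.continuous.mul continuous_sphi).intervalIntegrable 0 w)
      ((lipH.continuous.mul continuous_sphi).stronglyMeasurableAtFilter _ _)
      (lipH.continuous.mul continuous_sphi).continuousAt
  have : (fun u => FF H 0 + ∫ t in (0:ℝ)..u, H t * sphi t) = FF H := by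
    ext u
    rw [← FF_sub lipH 0 u]; ring
  rwa [this] at key

lemma FF_Ioi (lipH : LipschitzWith 1 H) (hH0 : ∫ t, H t * sphi t = 0) (w : ℝ) :
    ∫ t in Ioi w, H t * sphi t = -FF H w := by
  have h := intervalIntegral.integral_Iic_add_Ioi (b := w)
    (integrable_H_mul_sphi lipH).integrableOn (integrable_H_mul_sphi lipH).integrableOn
  rw [hH0] at h
  have : FF H w = ∫ t in Iic w, H t * sphi t := rfl
  linarith [this ▸ h]

lemma Jm_eq (lipH : LipschitzWith 1 H) (w : ℝ) :
    ∫ t in Iic w, (H t - H w) * sphi t = FF H w - H w * Phicdf w := by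
  have e : (fun t => (H t - H w) * sphi t) = fun t => H t * sphi t - H w * sphi t :=
    funext fun t => by ring
  rw [e, integral_sub (integrable_H_mul_sphi lipH).integrableOn
    ((integrable_sphi.const_mul (H w)).integrableOn), integral_const_mul]
  rfl

lemma Jp_eq (lipH : LipschitzWith 1 H) (hH0 : ∫ t, H t * sphi t = 0) (w : ℝ) :
    ∫ t in Ioi w, (H t - H w) * sphi t = -FF H w - H w * Psicdf w := by
  have e : (fun t => (H t - H w) * sphi t) = fun t => H t * sphi t - H w * sphi t :=
    funext fun t => by ring
  rw [e, integral_sub (integrable_H_mul_sphi lipH).integrableOn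
    ((integrable_sphi.const_mul (H w)).integrableOn), integral_const_mul,
    FF_Ioi lipH hH0 w]
  rfl

lemma Jm_bound (lipH : LipschitzWith 1 H) (w : ℝ) :
    |∫ t in Iic w, (H t - H w) * sphi t| ≤ w * Phicdf w + sphi w := by
  have hmaj : IntegrableOn (fun t => (w - t) * sphi t) (Iic w) := by
    have : (fun t : ℝ => (w - t) * sphi t) = fun t => w * sphi t - t * sphi t :=
      funext fun t => by ring
    rw [this]
    exact ((integrable_sphi.const_mul w).sub integrable_mul_sphi).integrableOn
  have hint : IntegrableOn (fun t => (H t - H w) * sphi t) (Iic w) := by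
    have : (fun t => (H t - H w) * sphi t) = fun t => H t * sphi t - H w * sphi t :=
      funext fun t => by ring
    rw [this]
    exact ((integrable_H_mul_sphi lipH).sub (integrable_sphi.const_mul (H w))).integrableOn
  calc |∫ t in Iic w, (H t - H w) * sphi t|
      ≤ ∫ t in Iic w, |(H t - H w) * sphi t| := by
        simpa only [Real.norm_eq_abs] using
          norm_integral_le_integral_norm (μ := volume.restrict (Iic w))
            (fun t => (H t - H w) * sphi t)
    _ ≤ ∫ t in Iic w, (w - t) * sphi t := by
        apply setIntegral_mono_on hint.abs hmaj measurableSet_Iic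
        intro t ht
        rw [abs_mul, abs_of_pos (sphi_pos t)]
        apply mul_le_mul_of_nonneg_right _ (sphi_pos t).le
        have h := lip_abs lipH t w
        have : |t - w| = w - t := by
          rw [abs_of_nonpos (by simpa using ht : t - w ≤ 0)]; ring
        linarith [this ▸ h]
    _ = w * Phicdf w + sphi w := by
        have e : (fun t : ℝ => (w - t) * sphi t) = fun t => w * sphi t - t * sphi t :=
          funext fun t => by ring
        rw [e, integral_sub ((integrable_sphi.const_mul w).integrableOn)
          integrable_mul_sphi.integrableOn, integral_const_mul, integral_Iic_id_mul_sphi]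
        rw [Phicdf]; ring

lemma Jp_bound (lipH : LipschitzWith 1 H) (w : ℝ) :
    |∫ t in Ioi w, (H t - H w) * sphi t| ≤ sphi w - w * Psicdf w := by
  have hmaj : IntegrableOn (fun t => (t - w) * sphi t) (Ioi w) := by
    have : (fun t : ℝ => (t - w) * sphi t) = fun t => t * sphi t - w * sphi t :=
      funext fun t => by ring
    rw [this]
    exact (integrable_mul_sphi.sub (integrable_sphi.const_mul w)).integrableOn
  have hint : IntegrableOn (fun t => (H t - H w) * sphi t) (Ioi w) := by
    have : (fun t => (H t - H w) * sphi t) = fun t => H t * sphi t - H w * sphi t :=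
      funext fun t => by ring
    rw [this]
    exact ((integrable_H_mul_sphi lipH).sub (integrable_sphi.const_mul (H w))).integrableOn
  calc |∫ t in Ioi w, (H t - H w) * sphi t|
      ≤ ∫ t in Ioi w, |(H t - H w) * sphi t| := by
        simpa only [Real.norm_eq_abs] using
          norm_integral_le_integral_norm (μ := volume.restrict (Ioi w))
            (fun t => (H t - H w) * sphi t)
    _ ≤ ∫ t in Ioi w, (t - w) * sphi t := by
        apply setIntegral_mono_on hint.abs hmaj measurableSet_Ioi
        intro t ht
        rw [abs_mul, abs_of_pos (sphi_pos t)]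
        apply mul_le_mul_of_nonneg_right _ (sphi_pos t).le
        have h := lip_abs lipH t w
        have : |t - w| = t - w := abs_of_nonneg (by simp only [mem_Ioi] at ht; linarith)
        linarith [this ▸ h]
    _ = sphi w - w * Psicdf w := by
        have e : (fun t : ℝ => (t - w) * sphi t) = fun t => t * sphi t - w * sphi t :=
          funext fun t => by ring
        rw [e, integral_sub (integrable_mul_sphi.integrableOn)
          ((integrable_sphi.const_mul w).integrableOn), integral_const_mul,
          integral_Ioi_id_mul_sphi]
        rw [Psicdf]

lemma abs_FF_le (lipH : LipschitzWith 1 H) (hH0 : ∫ t, H t * sphi t = 0) (w : ℝ) :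
    |FF H w| ≤ sphi w := by
  have hm := Jm_eq lipH w
  have hp := Jp_eq lipH hH0 w
  have hs := Phicdf_add_Psicdf w
  have bm := Jm_bound lipH w
  have bp := Jp_bound lipH w
  set Jm := ∫ t in Iic w, (H t - H w) * sphi t with hJm
  set Jp := ∫ t in Ioi w, (H t - H w) * sphi t with hJp
  have e : FF H w = Psicdf w * Jm - Phicdf w * Jp := by
    linear_combination (-(Psicdf w)) * hm + (Phicdf w) * hp + (-(FF H w)) * hs
  rw [e]
  have h1 : |Psicdf w * Jm| ≤ Psicdf w * (w * Phicdf w + sphi w) := by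
    rw [abs_mul, abs_of_nonneg (Psicdf_nonneg w)]
    exact mul_le_mul_of_nonneg_left bm (Psicdf_nonneg w)
  have h2 : |Phicdf w * Jp| ≤ Phicdf w * (sphi w - w * Psicdf w) := by
    rw [abs_mul, abs_of_nonneg (Phicdf_nonneg w)]
    exact mul_le_mul_of_nonneg_left bp (Phicdf_nonneg w)
  calc |Psicdf w * Jm - Phicdf w * Jp| ≤ |Psicdf w * Jm| + |Phicdf w * Jp| := abs_sub _ _
    _ ≤ Psicdf w * (w * Phicdf w + sphi w) + Phicdf w * (sphi w - w * Psicdf w) :=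
        add_le_add h1 h2
    _ = sphi w := by linear_combination (sphi w) * hs

lemma abs_ff_le (lipH : LipschitzWith 1 H) (hH0 : ∫ t, H t * sphi t = 0) (w : ℝ) :
    |ff H w| ≤ 1 := by
  rw [ff, abs_div, abs_of_pos (sphi_pos w)]
  rw [div_le_one (sphi_pos w)]
  exact abs_FF_le lipH hH0 w

lemma abs_A_le (lipH : LipschitzWith 1 H) (hH0 : ∫ t, H t * sphi t = 0) (w : ℝ) :
    |(1 + w ^ 2) * ff H w + w * H w| ≤ 1 := by
  have hm := Jm_eq lipH w
  have hp := Jp_eq lipH hH0 w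
  have hs := Phicdf_add_Psicdf w
  have bm := Jm_bound lipH w
  have bp := Jp_bound lipH w
  have hp0 := millsP w
  have hq0 := millsQ w
  set Jm := ∫ t in Iic w, (H t - H w) * sphi t with hJm
  set Jp := ∫ t in Ioi w, (H t - H w) * sphi t with hJp
  have hff : sphi w * ff H w = FF H w := by
    rw [ff, mul_div_assoc', mul_comm, mul_div_assoc, div_self (sphi_ne_zero w), mul_one]
  have e : sphi w * ((1 + w ^ 2) * ff H w + w * H w) =
      ((1 + w ^ 2) * Psicdf w - w * sphi w) * Jm -
        ((1 + w ^ 2) * Phicdf w + w * sphi w) * Jp := by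
    have egoal : (1 + w ^ 2) * FF H w + w * H w * sphi w =
        ((1 + w ^ 2) * Psicdf w - w * sphi w) * Jm -
          ((1 + w ^ 2) * Phicdf w + w * sphi w) * Jp := by
      linear_combination (-((1 + w ^ 2) * Psicdf w - w * sphi w)) * hm +
        (((1 + w ^ 2) * Phicdf w + w * sphi w)) * hp +
        (-((1 + w ^ 2) * FF H w + w * sphi w * H w)) * hs
    calc sphi w * ((1 + w ^ 2) * ff H w + w * H w)
        = (1 + w ^ 2) * (sphi w * ff H w) + w * H w * sphi w := by ring
      _ = (1 + w ^ 2) * FF H w + w * H w * sphi w := by rw [hff]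
      _ = _ := egoal
  have habs : |sphi w * ((1 + w ^ 2) * ff H w + w * H w)| ≤ sphi w := by
    rw [e]
    have h1 : |((1 + w ^ 2) * Psicdf w - w * sphi w) * Jm| ≤
        ((1 + w ^ 2) * Psicdf w - w * sphi w) * (w * Phicdf w + sphi w) := by
      rw [abs_mul, abs_of_nonneg hp0]
      exact mul_le_mul_of_nonneg_left bm hp0
    have h2 : |((1 + w ^ 2) * Phicdf w + w * sphi w) * Jp| ≤
        ((1 + w ^ 2) * Phicdf w + w * sphi w) * (sphi w - w * Psicdf w) := by
      rw [abs_mul, abs_of_nonneg hq0]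
      exact mul_le_mul_of_nonneg_left bp hq0
    calc |((1 + w ^ 2) * Psicdf w - w * sphi w) * Jm -
          ((1 + w ^ 2) * Phicdf w + w * sphi w) * Jp|
        ≤ |((1 + w ^ 2) * Psicdf w - w * sphi w) * Jm| +
          |((1 + w ^ 2) * Phicdf w + w * sphi w) * Jp| := abs_sub _ _
      _ ≤ ((1 + w ^ 2) * Psicdf w - w * sphi w) * (w * Phicdf w + sphi w) +
          ((1 + w ^ 2) * Phicdf w + w * sphi w) * (sphi w - w * Psicdf w) :=
            add_le_add h1 h2
      _ = sphi w := by linear_combination (sphi w) * hs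
  rw [abs_mul, abs_of_pos (sphi_pos w)] at habs
  have := sphi_pos w
  nlinarith [abs_nonneg ((1 + w ^ 2) * ff H w + w * H w)]

lemma hasDerivAt_ff (lipH : LipschitzWith 1 H) (hH0 : ∫ t, H t * sphi t = 0) (w : ℝ) :
    HasDerivAt (ff H) (gg H w) w := by
  have h1 := hasDerivAt_FF lipH w
  have h2 : HasDerivAt (fun x => (sphi x)⁻¹) (-(-w * sphi w) / sphi w ^ 2) w :=
    (hasDerivAt_sphi w).inv (sphi_ne_zero w)
  have h3 := h1.mul h2
  have he : ff H = fun w => FF H w * (sphi w)⁻¹ := funext fun w => div_eq_mul_inv _ _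
  rw [he]
  refine h3.congr_deriv ?_
  rw [gg, ff]
  have := sphi_ne_zero w
  field_simp
  ring

lemma continuous_ff (lipH : LipschitzWith 1 H) (hH0 : ∫ t, H t * sphi t = 0) :
    Continuous (ff H) :=
  continuous_iff_continuousAt.mpr fun w => (hasDerivAt_ff lipH hH0 w).continuousAt

lemma continuous_gg (lipH : LipschitzWith 1 H) (hH0 : ∫ t, H t * sphi t = 0) :
    Continuous (gg H) := by
  have : gg H = fun w => w * ff H w + H w := rfl
  rw [this]
  exact (continuous_id.mul (continuous_ff lipH hH0)).add lipH.continuous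

lemma ftc_ff (lipH : LipschitzWith 1 H) (hH0 : ∫ t, H t * sphi t = 0) (a b : ℝ) :
    ff H b - ff H a = ∫ t in a..b, gg H t :=
  (intervalIntegral.integral_eq_sub_of_hasDerivAt (fun t _ => hasDerivAt_ff lipH hH0 t)
    ((continuous_gg lipH hH0).intervalIntegrable a b)).symm

lemma hasDerivAt_idff (lipH : LipschitzWith 1 H) (hH0 : ∫ t, H t * sphi t = 0) (w : ℝ) :
    HasDerivAt (fun x => x * ff H x) ((1 + w ^ 2) * ff H w + w * H w) w := by
  have h := (hasDerivAt_id w).mul (hasDerivAt_ff lipH hH0 w)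
  refine h.congr_deriv ?_
  rw [gg]
  simp only [id]
  ring

lemma lip_gg (lipH : LipschitzWith 1 H) (hH0 : ∫ t, H t * sphi t = 0) :
    LipschitzWith 2 (gg H) := by
  apply LipschitzWith.of_dist_le_mul
  intro a b
  rw [Real.dist_eq, Real.dist_eq]
  have hcontA : Continuous fun t : ℝ => (1 + t ^ 2) * ff H t + t * H t := by
    apply Continuous.add
    · exact (continuous_const.add (continuous_pow 2)).mul (continuous_ff lipH hH0)
    · exact continuous_id.mul lipH.continuous
  have h2 : a * ff H a - b * ff H b = ∫ t in b..a, ((1 + t ^ 2) * ff H t + t * H t) :=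
    (intervalIntegral.integral_eq_sub_of_hasDerivAt
      (fun t _ => hasDerivAt_idff lipH hH0 t) (hcontA.intervalIntegrable b a)).symm
  have h3 : |∫ t in b..a, ((1 + t ^ 2) * ff H t + t * H t)| ≤ 1 * |a - b| := by
    have := intervalIntegral.norm_integral_le_of_norm_le_const
      (C := 1) (f := fun t => (1 + t ^ 2) * ff H t + t * H t) (a := b) (b := a)
      (fun t _ => by simpa [Real.norm_eq_abs] using abs_A_le lipH hH0 t)
    simpa [Real.norm_eq_abs] using this
  have h1 : gg H a - gg H b = (a * ff H a - b * ff H b) + (H a - H b) := by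
    rw [gg, gg]; ring
  calc |gg H a - gg H b| = |(a * ff H a - b * ff H b) + (H a - H b)| := by rw [h1]
    _ ≤ |a * ff H a - b * ff H b| + |H a - H b| := abs_add_le _ _
    _ ≤ 1 * |a - b| + |a - b| := add_le_add (h2 ▸ h3) (lip_abs lipH a b)
    _ = 2 * |a - b| := by ring

lemma gg_growth (lipH : LipschitzWith 1 H) (hH0 : ∫ t, H t * sphi t = 0) (x : ℝ) :
    |gg H x| ≤ |gg H 0| + 2 * |x| := by
  have h := (lip_gg lipH hH0).dist_le_mul x 0
  rw [Real.dist_eq, Real.dist_eq, sub_zero] at h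
  push_cast at h
  calc |gg H x| = |(gg H x - gg H 0) + gg H 0| := by ring_nf
    _ ≤ |gg H x - gg H 0| + |gg H 0| := abs_add_le _ _
    _ ≤ 2 * |x| + |gg H 0| := by linarith
    _ = |gg H 0| + 2 * |x| := by ring

end Stein

lemma integral_gaussianReal_eq_sphi (h : ℝ → ℝ) :
    ∫ z, h z ∂(gaussianReal 0 1) = ∫ x, sphi x * h x := by
  rw [gaussianReal_of_var_ne_zero 0 one_ne_zero]
  have hmeas : Measurable fun x => Real.toNNReal (sphi x) :=
    continuous_sphi.measurable.real_toNNReal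
  have hpdf : gaussianPDF 0 1 = fun x => ((Real.toNNReal (sphi x) : ℝ≥0) : ℝ≥0∞) := by
    ext x
    rw [gaussianPDF, ← sphi_eq_gaussianPDFReal]
    rfl
  rw [hpdf, integral_withDensity_eq_integral_smul hmeas]
  congr 1
  ext x
  rw [NNReal.smul_def, smul_eq_mul, Real.coe_toNNReal _ (sphi_pos x).le]

/-- Zero-bias Wasserstein bound: if `W` has mean 0 and variance 1 and `W*` is a
zero-bias transform of `W` on the same probability space, then
`d_W(W, Z) ≤ 2 E|W* - W|`, where `Z` is standard normal and `d_W` is the Wasserstein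
distance (sup over 1-Lipschitz test functions). -/
theorem zero_bias_wasserstein_bound
    {Ω : Type*} [MeasureSpace Ω] [IsProbabilityMeasure (ℙ : Measure Ω)]
    (W Wstar : Ω → ℝ) (hWmeas : Measurable W) (hWsmeas : Measurable Wstar)
    (hmean : ∫ ω, W ω ∂ℙ = 0)
    (hvar : ∫ ω, (W ω) ^ 2 ∂ℙ = 1)
    (hL2 : Integrable (fun ω => (W ω) ^ 2) ℙ)
    (hWsint : Integrable Wstar ℙ)
    (hzb : ∀ f f' : ℝ → ℝ, Measurable f' →
      (∀ a b : ℝ, f b - f a = ∫ t in a..b, f' t) →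
      Integrable (fun ω => W ω * f (W ω)) ℙ →
      Integrable (fun ω => f' (Wstar ω)) ℙ →
      ∫ ω, W ω * f (W ω) ∂ℙ = ∫ ω, f' (Wstar ω) ∂ℙ) :
    sSup {d : ℝ | ∃ h : ℝ → ℝ, LipschitzWith 1 h ∧
        d = |(∫ ω, h (W ω) ∂ℙ) - ∫ z, h z ∂(gaussianReal 0 1)|} ≤
      2 * ∫ ω, |Wstar ω - W ω| ∂ℙ := by
  have habs_nonneg : 0 ≤ ∫ ω, |Wstar ω - W ω| ∂ℙ := integral_nonneg fun ω => abs_nonneg _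
  apply Real.sSup_le _ (by linarith)
  rintro d ⟨h, hlip, rfl⟩
  have hWint : Integrable W ℙ := by
    have hm2 : MemLp W 2 ℙ := (memLp_two_iff_integrable_sq hWmeas.aestronglyMeasurable).mpr hL2
    exact hm2.integrable (by norm_num)
  set Nh := ∫ z, h z ∂(gaussianReal 0 1) with hNh
  set H : ℝ → ℝ := fun t => h t - Nh with hHdef
  have lipH : LipschitzWith 1 H := LipschitzWith.of_dist_le_mul fun a b => by
    rw [hHdef]
    simp only [dist_sub_right]  -- dist (h a - Nh) (h b - Nh) = dist (h a) (h b)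
    simpa using hlip.dist_le_mul a b
  have hliph : LipschitzWith 1 h := hlip
  have hint1 : Integrable (fun t => h t * sphi t) := integrable_H_mul_sphi hlip
  have hH0 : ∫ t, H t * sphi t = 0 := by
    have e1 : ∫ x, sphi x * h x = Nh := (integral_gaussianReal_eq_sphi h).symm
    have e0 : (fun t => H t * sphi t) = fun t => h t * sphi t - Nh * sphi t :=
      funext fun t => by rw [hHdef]; ring
    rw [e0, integral_sub hint1 (integrable_sphi.const_mul Nh), integral_const_mul, integral_sphi]
    have e2 : ∫ t, h t * sphi t = Nh := by
      rw [← e1]; congr 1; ext t; ring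
    rw [e2]; ring
  have hggmeas : Measurable (gg H) := (continuous_gg lipH hH0).measurable
  have hWf_int : Integrable (fun ω => W ω * ff H (W ω)) ℙ := by
    refine Integrable.mono' hWint.abs
      (hWmeas.mul ((continuous_ff lipH hH0).measurable.comp hWmeas)).aestronglyMeasurable
      (Eventually.of_forall fun ω => ?_)
    rw [Real.norm_eq_abs, abs_mul]
    have := abs_ff_le lipH hH0 (W ω)
    nlinarith [abs_nonneg (W ω), abs_nonneg (ff H (W ω))]
  have hgWs_int : Integrable (fun ω => gg H (Wstar ω)) ℙ := by
    refine Integrable.mono' ((integrable_const (|gg H 0|)).add (hWsint.abs.const_mul 2))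
      ((hggmeas.comp hWsmeas)).aestronglyMeasurable (Eventually.of_forall fun ω => ?_)
    simp only [Pi.add_apply]
    rw [Real.norm_eq_abs]
    exact gg_growth lipH hH0 (Wstar ω)
  have hgW_int : Integrable (fun ω => gg H (W ω)) ℙ := by
    refine Integrable.mono' ((integrable_const (|gg H 0|)).add (hWint.abs.const_mul 2))
      ((hggmeas.comp hWmeas)).aestronglyMeasurable (Eventually.of_forall fun ω => ?_)
    simp only [Pi.add_apply]
    rw [Real.norm_eq_abs]
    exact gg_growth lipH hH0 (W ω)
  have hhW_int : Integrable (fun ω => h (W ω)) ℙ := by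
    refine Integrable.mono' ((integrable_const (|h 0|)).add hWint.abs)
      ((hlip.continuous.measurable.comp hWmeas)).aestronglyMeasurable
      (Eventually.of_forall fun ω => ?_)
    simp only [Pi.add_apply]
    rw [Real.norm_eq_abs]
    exact H_growth hlip (W ω)
  have key := hzb (ff H) (gg H) hggmeas (ftc_ff lipH hH0) hWf_int hgWs_int
  have e2 : (∫ ω, h (W ω) ∂ℙ) - Nh = ∫ ω, (gg H (W ω) - gg H (Wstar ω)) ∂ℙ := by
    calc (∫ ω, h (W ω) ∂ℙ) - Nh = ∫ ω, (h (W ω) - Nh) ∂ℙ := by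
          rw [integral_sub hhW_int (integrable_const Nh), integral_const]
          simp
      _ = ∫ ω, (gg H (W ω) - W ω * ff H (W ω)) ∂ℙ := by
          congr 1; ext ω; rw [gg, hHdef]; ring
      _ = (∫ ω, gg H (W ω) ∂ℙ) - ∫ ω, W ω * ff H (W ω) ∂ℙ :=
          integral_sub hgW_int hWf_int
      _ = (∫ ω, gg H (W ω) ∂ℙ) - ∫ ω, gg H (Wstar ω) ∂ℙ := by rw [key]
      _ = ∫ ω, (gg H (W ω) - gg H (Wstar ω)) ∂ℙ := (integral_sub hgW_int hgWs_int).symm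
  calc |(∫ ω, h (W ω) ∂ℙ) - Nh|
      = |∫ ω, (gg H (W ω) - gg H (Wstar ω)) ∂ℙ| := by rw [e2]
    _ ≤ ∫ ω, |gg H (W ω) - gg H (Wstar ω)| ∂ℙ := by
        simpa only [Real.norm_eq_abs] using
          norm_integral_le_integral_norm (μ := (ℙ : Measure Ω))
            (fun ω => gg H (W ω) - gg H (Wstar ω))
    _ ≤ ∫ ω, 2 * |Wstar ω - W ω| ∂ℙ := by
        apply integral_mono (hgW_int.sub hgWs_int).abs ((hWsint.sub hWint).abs.const_mul 2)
        intro ω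
        have hd := (lip_gg lipH hH0).dist_le_mul (W ω) (Wstar ω)
        rw [Real.dist_eq, Real.dist_eq] at hd
        push_cast at hd
        calc |gg H (W ω) - gg H (Wstar ω)| ≤ 2 * |W ω - Wstar ω| := hd
          _ = 2 * |Wstar ω - W ω| := by rw [abs_sub_comm]
    _ = 2 * ∫ ω, |Wstar ω - W ω| ∂ℙ := integral_const_mul 2 _
end

section
/- Let X₁,…,Xₙ be i.i.d. with E X₁ = 0, Var(X₁) = 1/n, E|X₁|³ < ∞, and W_{n-1} = Σ_{i=1}^{n-1} Xᵢ. Then for all a < b, P(a ≤ W_{n-1} ≤ b) ≤ (b - a) + 2n E|X₁|³. -/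
open MeasureTheory ProbabilityTheory

lemma stein_sq_le (x : ℝ) : x ^ 2 ≤ 1 + |x| ^ 3 := by
  rcases le_total |x| 1 with h | h
  · nlinarith [sq_abs x, abs_nonneg x]
  · nlinarith [sq_abs x, abs_nonneg x]

lemma stein_abs_le (x : ℝ) : |x| ≤ 1 + |x| ^ 3 := by
  rcases le_total |x| 1 with h | h
  · nlinarith [abs_nonneg x, pow_nonneg (abs_nonneg x) 3]
  · nlinarith [mul_nonneg (mul_nonneg (abs_nonneg x) (by linarith : (0:ℝ) ≤ |x| - 1))
      (by linarith [abs_nonneg x] : (0:ℝ) ≤ |x| + 1)]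

lemma map_sum_congr {Ω : Type*} [MeasureSpace Ω] [IsProbabilityMeasure (ℙ : Measure Ω)]
    (X : ℕ → Ω → ℝ) (hmeas : ∀ i, Measurable (X i))
    (hindep : iIndepFun X ℙ)
    (hident : ∀ i, Measure.map (X i) ℙ = Measure.map (X 0) ℙ) :
    ∀ (k : ℕ) (s t : Finset ℕ), s.card = k → t.card = k →
      Measure.map (fun ω => ∑ i ∈ s, X i ω) ℙ = Measure.map (fun ω => ∑ i ∈ t, X i ω) ℙ := by
  intro k
  induction k with
  | zero =>
    intro s t hs ht
    rw [Finset.card_eq_zero] at hs ht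
    subst hs; subst ht
    simp
  | succ k ih =>
    intro s t hs ht
    obtain ⟨j, hj⟩ := Finset.card_pos.mp (by omega : 0 < s.card)
    obtain ⟨l, hl⟩ := Finset.card_pos.mp (by omega : 0 < t.card)
    have key : ∀ (u : Finset ℕ) (m : ℕ), m ∈ u →
        Measure.map (fun ω => ∑ i ∈ u, X i ω) ℙ =
          Measure.map (fun p : ℝ × ℝ => p.1 + p.2)
            ((Measure.map (fun ω => ∑ i ∈ u.erase m, X i ω) ℙ).prod (Measure.map (X 0) ℙ)) := by
      intro u m hm
      have hsum : Measurable (fun ω => ∑ i ∈ u.erase m, X i ω) :=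
        Finset.measurable_sum _ (fun i _ => hmeas i)
      have hi : IndepFun (∑ i ∈ u.erase m, X i) (X m) ℙ :=
        hindep.indepFun_finsetSum_of_notMem hmeas (Finset.notMem_erase m u)
      have hi' : IndepFun (fun ω => ∑ i ∈ u.erase m, X i ω) (X m) ℙ := by
        have : (∑ i ∈ u.erase m, X i) = (fun ω => ∑ i ∈ u.erase m, X i ω) := by
          funext ω; simp [Finset.sum_apply]
        rwa [this] at hi
      have hprod := (indepFun_iff_map_prod_eq_prod_map_map hsum.aemeasurable
        (hmeas m).aemeasurable).mp hi'
      have h1 : (fun ω => ∑ i ∈ u, X i ω) =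
          (fun p : ℝ × ℝ => p.1 + p.2) ∘ (fun ω => (∑ i ∈ u.erase m, X i ω, X m ω)) := by
        funext ω
        simp [Function.comp, Finset.sum_erase_add _ _ hm]
      rw [h1, ← Measure.map_map (by fun_prop) (hsum.prodMk (hmeas m)), hprod, hident m]
    rw [key s j hj, key t l hl,
      ih (s.erase j) (t.erase l) (by rw [Finset.card_erase_of_mem hj]; omega)
        (by rw [Finset.card_erase_of_mem hl]; omega)]

lemma stein_key (a b δ : ℝ) (hδ : 0 < δ) (w x : ℝ) (hw : a ≤ w ∧ w ≤ b) :
    |x| * min |x| δ ≤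
      x * ((max (a - δ) (min (w + x) (b + δ)) - (a + b) / 2)
            - (max (a - δ) (min w (b + δ)) - (a + b) / 2)) := by
  obtain ⟨hw1, hw2⟩ := hw
  have hclamp : max (a - δ) (min w (b + δ)) = w := by
    rw [min_eq_left (by linarith), max_eq_right (by linarith)]
  rw [hclamp]
  rcases le_total 0 x with hx | hx
  · have h1 : max (a - δ) (min (w + x) (b + δ)) = min (w + x) (b + δ) := by
      rw [max_eq_right]
      exact le_min (by linarith) (by linarith)
    rw [h1, abs_of_nonneg hx]
    have h2 : w + min x δ ≤ min (w + x) (b + δ) := le_min (by linarith [min_le_left x δ])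
      (by linarith [min_le_right x δ])
    have h3 : min x δ ≤ min (w + x) (b + δ) - (a + b) / 2 - (w - (a + b) / 2) := by linarith
    have h4 : 0 ≤ min x δ := le_min hx hδ.le
    nlinarith [mul_le_mul_of_nonneg_left h3 hx]
  · have h1 : max (a - δ) (min (w + x) (b + δ)) = max (a - δ) (w + x) := by
      rw [min_eq_left (by linarith)]
    rw [h1, abs_of_nonpos hx]
    have h2 : max (a - δ) (w + x) ≤ max (-δ + w) (w + x) :=
      max_le_max (by linarith) le_rfl
    have h3 : max (-δ + w) (w + x) = w + max (-δ) x := by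
      rw [add_comm w x, max_add_add_right]; ring
    have h4 : max (a - δ) (w + x) - (a + b) / 2 - (w - (a + b) / 2) ≤ max (-δ) x := by
      rw [h3] at h2; linarith
    have h5 : -x * min (-x) δ = x * max (-δ) x ∨ -x * min (-x) δ ≤ x * max (-δ) x := by
      rcases le_total (-x) δ with h | h
      · left
        rw [min_eq_left h, max_eq_right (by linarith)]; ring
      · left
        rw [min_eq_right h, max_eq_left (by linarith)]; ring
    have h6 : x * max (-δ) x ≤ x * (max (a - δ) (w + x) - (a + b) / 2 - (w - (a + b) / 2)) :=
      mul_le_mul_of_nonpos_left h4 hx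
    rcases h5 with h5 | h5 <;> linarith

lemma stein_key0 (a b δ : ℝ) (w x : ℝ) :
    0 ≤ x * ((max (a - δ) (min (w + x) (b + δ)) - (a + b) / 2)
            - (max (a - δ) (min w (b + δ)) - (a + b) / 2)) := by
  have hmono : Monotone (fun v : ℝ => max (a - δ) (min v (b + δ))) :=
    fun u v h => max_le_max le_rfl (min_le_min h le_rfl)
  rcases le_total 0 x with hx | hx
  · have := hmono (by linarith : w ≤ w + x)
    have h2 : (0:ℝ) ≤ (max (a - δ) (min (w + x) (b + δ)) - max (a - δ) (min w (b + δ))) := by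
      simpa using this
    nlinarith
  · have := hmono (by linarith : w + x ≤ w)
    have h2 : (max (a - δ) (min (w + x) (b + δ)) - max (a - δ) (min w (b + δ))) ≤ 0 := by
      simpa using this
    nlinarith

lemma stein_g1 (δ : ℝ) (hδ : 0 < δ) (x : ℝ) :
    x ^ 2 - |x| ^ 3 / (4 * δ) ≤ |x| * min |x| δ := by
  rcases le_total |x| δ with h | h
  · rw [min_eq_left h]
    have : 0 ≤ |x| ^ 3 / (4 * δ) := by positivity
    nlinarith [sq_abs x]
  · rw [min_eq_right h]
    have h4 : (0:ℝ) < 4*δ := by positivity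
    have key : (x^2 - |x| * δ) * (4 * δ) ≤ |x|^3 := by
      nlinarith [mul_nonneg (abs_nonneg x) (sq_nonneg (|x| - 2 * δ)), sq_abs x]
    have h5 := (le_div_iff₀ h4).mpr key
    linarith

lemma stein_fbdd (a b δ : ℝ) (hδ : 0 < δ) (hab : a ≤ b) (w : ℝ) :
    |max (a - δ) (min w (b + δ)) - (a + b) / 2| ≤ (b - a) / 2 + δ := by
  rw [abs_le]
  constructor
  · have h0 : a - δ ≤ max (a - δ) (min w (b + δ)) := le_max_left _ _
    linarith
  · have h1 : max (a - δ) (min w (b + δ)) ≤ b + δ :=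
      max_le (by linarith) (min_le_right _ _)
    linarith

set_option maxHeartbeats 2000000 in
/-- Stein's concentration inequality: for i.i.d. `X₁, …, Xₙ` with mean 0 and variance
`1/n`, and `W_{n-1} = X₁ + ⋯ + X_{n-1}`, one has
`P(a ≤ W_{n-1} ≤ b) ≤ (b - a) + 2n E|X₁|³` for all `a < b`. -/
theorem stein_concentration_inequality
    {Ω : Type*} [MeasureSpace Ω] [IsProbabilityMeasure (ℙ : Measure Ω)]
    (n : ℕ) (hn : 0 < n)
    (X : ℕ → Ω → ℝ) (hmeas : ∀ i, Measurable (X i))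
    (hindep : iIndepFun X ℙ)
    (hident : ∀ i, Measure.map (X i) ℙ = Measure.map (X 0) ℙ)
    (hmean : ∫ ω, X 0 ω ∂ℙ = 0)
    (hvar : ∫ ω, (X 0 ω) ^ 2 ∂ℙ = 1 / n)
    (hL3 : Integrable (fun ω => |X 0 ω| ^ 3) ℙ)
    (W : Ω → ℝ) (hW : W = fun ω => ∑ i ∈ Finset.range (n - 1), X i ω) :
    ∀ a b : ℝ, a < b →
      (ℙ {ω | a ≤ W ω ∧ W ω ≤ b}).toReal ≤
        (b - a) + 2 * n * ∫ ω, |X 0 ω| ^ 3 ∂ℙ := by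
  intro a b hab
  classical
  have hn' : (0:ℝ) < n := Nat.cast_pos.mpr hn
  set β := ∫ ω, |X 0 ω| ^ 3 ∂ℙ with hβdef
  -- basic integrability of X 0 and its square
  have hX0_int : Integrable (X 0) ℙ := by
    refine ((integrable_const (1:ℝ)).add hL3).mono' (hmeas 0).aestronglyMeasurable ?_
    filter_upwards with ω
    simpa [Real.norm_eq_abs] using stein_abs_le (X 0 ω)
  have hX0_sq_int : Integrable (fun ω => (X 0 ω) ^ 2) ℙ := by
    refine ((integrable_const (1:ℝ)).add hL3).mono'
      (((hmeas 0).pow_const 2).aestronglyMeasurable) ?_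
    filter_upwards with ω
    simpa [Real.norm_eq_abs, abs_of_nonneg (sq_nonneg (X 0 ω))] using stein_sq_le (X 0 ω)
  -- positivity of β
  have hβnn : 0 ≤ β := integral_nonneg (fun ω => by positivity)
  have hβpos : 0 < β := by
    rcases hβnn.lt_or_eq with h | h
    · exact h
    · exfalso
      have h0 : (fun ω => |X 0 ω| ^ 3) =ᵐ[ℙ] 0 := by
        rw [← integral_eq_zero_iff_of_nonneg (fun ω => by positivity) hL3]
        exact h.symm
      have h1 : (fun ω => (X 0 ω) ^ 2) =ᵐ[ℙ] 0 := by
        filter_upwards [h0] with ω hω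
        have : |X 0 ω| = 0 := by
          by_contra hne
          have := pow_pos (lt_of_le_of_ne (abs_nonneg _) (Ne.symm hne)) 3
          simp only [Pi.zero_apply] at hω
          linarith
        have : X 0 ω = 0 := abs_eq_zero.mp this
        simp [this]
      have h2 : ∫ ω, (X 0 ω) ^ 2 ∂ℙ = 0 := by
        rw [integral_congr_ae h1]; simp
      rw [hvar] at h2
      have : (0:ℝ) < 1 / n := one_div_pos.mpr hn'
      linarith
  -- transfer lemmas
  have hmapint : ∀ (i : ℕ) (ψ : ℝ → ℝ), Measurable ψ →
      Integrable (fun ω => ψ (X 0 ω)) ℙ → Integrable (fun ω => ψ (X i ω)) ℙ := by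
    intro i ψ hψ h0
    have h1 : Integrable ψ (Measure.map (X 0) ℙ) :=
      (integrable_map_measure hψ.aestronglyMeasurable (hmeas 0).aemeasurable).mpr h0
    rw [← hident i] at h1
    exact (integrable_map_measure hψ.aestronglyMeasurable (hmeas i).aemeasurable).mp h1
  have hmapeq : ∀ (i : ℕ) (ψ : ℝ → ℝ), Measurable ψ →
      ∫ ω, ψ (X i ω) ∂ℙ = ∫ ω, ψ (X 0 ω) ∂ℙ := by
    intro i ψ hψ
    rw [← integral_map (hmeas i).aemeasurable hψ.aestronglyMeasurable, hident i,
      integral_map (hmeas 0).aemeasurable hψ.aestronglyMeasurable]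
  have hXint : ∀ i, Integrable (X i) ℙ := fun i => hmapint i id measurable_id hX0_int
  have hXsq_int : ∀ i, Integrable (fun ω => (X i ω) ^ 2) ℙ := fun i =>
    hmapint i (fun x => x ^ 2) (by fun_prop) hX0_sq_int
  have hXmean : ∀ i, ∫ ω, X i ω ∂ℙ = 0 := fun i => by
    have := hmapeq i id measurable_id
    simpa [hmean] using this
  have hXvar : ∀ i, ∫ ω, (X i ω) ^ 2 ∂ℙ = 1 / n := fun i => by
    have := hmapeq i (fun x => x ^ 2) (by fun_prop)
    rw [this, hvar]
  -- the function f and related quantities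
  set δ : ℝ := 3 / 2 * n * β with hδdef
  have hδpos : 0 < δ := by
    rw [hδdef]; positivity
  set c : ℝ := (b - a) / 2 + δ with hcdef
  have hcpos : 0 < c := by rw [hcdef]; nlinarith
  set f : ℝ → ℝ := fun w => max (a - δ) (min w (b + δ)) - (a + b) / 2 with hfdef
  have hfmeas : Measurable f := by
    rw [hfdef]; fun_prop
  have hfbdd : ∀ w, |f w| ≤ c := fun w => stein_fbdd a b δ hδpos hab.le w
  set g1 : ℝ → ℝ := fun x => |x| * min |x| δ with hg1def
  have hg1meas : Measurable g1 := by rw [hg1def]; fun_prop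
  have hg1nn : ∀ x, 0 ≤ g1 x := fun x =>
    mul_nonneg (abs_nonneg x) (le_min (abs_nonneg x) hδpos.le)
  have hg1le : ∀ x, g1 x ≤ δ * |x| := fun x => by
    rw [hg1def]
    calc |x| * min |x| δ ≤ |x| * δ := mul_le_mul_of_nonneg_left (min_le_right _ _) (abs_nonneg x)
    _ = δ * |x| := mul_comm _ _
  have hg1_int0 : Integrable (fun ω => g1 (X 0 ω)) ℙ := by
    refine (hX0_int.abs.const_mul δ).mono'
      ((hg1meas.comp (hmeas 0)).aestronglyMeasurable) ?_
    filter_upwards with ω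
    rw [Real.norm_eq_abs, abs_of_nonneg (hg1nn _)]
    exact hg1le _
  set κ : ℝ := ∫ ω, g1 (X 0 ω) ∂ℙ with hκdef
  -- lower bound on κ
  have hκlow : 1 / (n:ℝ) - β / (4 * δ) ≤ κ := by
    have hint : Integrable (fun ω => (X 0 ω) ^ 2 - |X 0 ω| ^ 3 / (4 * δ)) ℙ :=
      hX0_sq_int.sub (hL3.div_const _)
    have := integral_mono hint hg1_int0 (fun ω => stein_g1 δ hδpos (X 0 ω))
    rwa [integral_sub hX0_sq_int (hL3.div_const _), integral_div, hvar, ← hβdef] at this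
  have hβδ : β / (4 * δ) = 1 / (6 * n) := by
    rw [hδdef]; field_simp; ring
  have hκ56 : 5 / (6 * (n:ℝ)) ≤ κ := by
    rw [hβδ] at hκlow
    have : 1 / (n:ℝ) - 1 / (6 * n) = 5 / (6 * n) := by field_simp; ring
    linarith
  -- V and its properties
  set V : Ω → ℝ := fun ω => ∑ i ∈ Finset.range n, X i ω with hVdef
  have hVmeas : Measurable V := by
    rw [hVdef]; exact Finset.measurable_sum _ (fun i _ => hmeas i)
  have hWmeas : Measurable W := by
    rw [hW]; exact Finset.measurable_sum _ (fun i _ => hmeas i)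
  -- indicator function
  set ind : ℝ → ℝ := fun x => (Set.Icc a b).indicator (fun _ => (1:ℝ)) x with hinddef
  have hindmeas : Measurable ind := by
    rw [hinddef]; exact (measurable_const.indicator measurableSet_Icc)
  have hindnn : ∀ x, 0 ≤ ind x := fun x => Set.indicator_nonneg (fun _ _ => zero_le_one) x
  have hindle : ∀ x, ind x ≤ 1 := fun x => by
    rw [hinddef]; by_cases h : x ∈ Set.Icc a b <;> simp [h]
  -- p as an integral
  set p : ℝ := (ℙ {ω | a ≤ W ω ∧ W ω ≤ b}).toReal with hpdef
  have hpnn : 0 ≤ p := ENNReal.toReal_nonneg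
  have hpint : ∫ ω, ind (W ω) ∂ℙ = p := by
    have hcomp : (fun ω => ind (W ω)) = (W ⁻¹' (Set.Icc a b)).indicator (fun _ => (1:ℝ)) := by
      funext ω
      rw [hinddef]
      by_cases h : W ω ∈ Set.Icc a b <;> simp [Set.indicator, h]
    have hset : {ω | a ≤ W ω ∧ W ω ≤ b} = W ⁻¹' (Set.Icc a b) := by
      ext ω; simp [Set.mem_preimage, Set.mem_Icc]
    rw [hcomp, integral_indicator_const (1:ℝ) (hWmeas measurableSet_Icc), hpdef, hset]
    simp
    rfl
  -- integrability of X j * f(V) etc.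
  have hfV_int : Integrable (fun ω => f (V ω)) ℙ := by
    refine (integrable_const c).mono' ((hfmeas.comp hVmeas).aestronglyMeasurable) ?_
    filter_upwards with ω
    simpa [Real.norm_eq_abs] using hfbdd (V ω)
  have hXfV_int : ∀ j, Integrable (fun ω => X j ω * f (V ω)) ℙ := by
    intro j
    have h1 : Integrable (fun ω => f (V ω) * X j ω) ℙ :=
      (hXint j).bdd_mul ((hfmeas.comp hVmeas).aestronglyMeasurable)
        (ae_of_all _ fun ω => by simpa [Real.norm_eq_abs] using hfbdd (V ω))
    simpa [mul_comm] using h1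
  -- key lower bound for each j
  have main_j : ∀ j ∈ Finset.range n, p * κ ≤ ∫ ω, X j ω * f (V ω) ∂ℙ := by
    intro j hj
    set S : Finset ℕ := (Finset.range n).erase j with hSdef
    set Vj : Ω → ℝ := fun ω => ∑ i ∈ S, X i ω with hVjdef
    have hVjmeas : Measurable Vj := by
      rw [hVjdef]; exact Finset.measurable_sum _ (fun i _ => hmeas i)
    have hdecomp : ∀ ω, V ω = Vj ω + X j ω := by
      intro ω
      rw [hVdef, hVjdef, hSdef]
      exact (Finset.sum_erase_add _ _ hj).symm
    -- independence of Vj and X j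
    have hiind : IndepFun Vj (X j) ℙ := by
      have hi : IndepFun (∑ i ∈ S, X i) (X j) ℙ :=
        hindep.indepFun_finsetSum_of_notMem hmeas (by rw [hSdef]; exact Finset.notMem_erase j _)
      have : (∑ i ∈ S, X i) = Vj := by
        funext ω; rw [hVjdef]; simp [Finset.sum_apply]
      rwa [this] at hi
    -- law of Vj equals law of W
    have hlaw : Measure.map Vj ℙ = Measure.map W ℙ := by
      rw [hVjdef, hW]
      exact map_sum_congr X hmeas hindep hident (n-1) S (Finset.range (n-1))
        (by rw [hSdef, Finset.card_erase_of_mem hj, Finset.card_range])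
        (Finset.card_range _)
    -- ∫ ind (Vj) = p
    have hindVj : ∫ ω, ind (Vj ω) ∂ℙ = p := by
      rw [← hpint, ← integral_map hVjmeas.aemeasurable hindmeas.aestronglyMeasurable, hlaw,
        integral_map hWmeas.aemeasurable hindmeas.aestronglyMeasurable]
    -- ∫ g1 (X j) = κ
    have hg1Xj : ∫ ω, g1 (X j ω) ∂ℙ = κ := by
      rw [hκdef]; exact hmapeq j g1 hg1meas
    have hg1_intj : Integrable (fun ω => g1 (X j ω)) ℙ := hmapint j g1 hg1meas hg1_int0
    -- integrability
    have hind_int : Integrable (fun ω => ind (Vj ω)) ℙ := by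
      refine (integrable_const (1:ℝ)).mono' ((hindmeas.comp hVjmeas).aestronglyMeasurable) ?_
      filter_upwards with ω
      rw [Real.norm_eq_abs, abs_of_nonneg (hindnn _)]
      exact hindle _
    have hfVj_int : Integrable (fun ω => f (Vj ω)) ℙ := by
      refine (integrable_const c).mono' ((hfmeas.comp hVjmeas).aestronglyMeasurable) ?_
      filter_upwards with ω
      simpa [Real.norm_eq_abs] using hfbdd (Vj ω)
    have hXfVj_int : Integrable (fun ω => X j ω * f (Vj ω)) ℙ := by
      have h1 : Integrable (fun ω => f (Vj ω) * X j ω) ℙ :=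
        (hXint j).bdd_mul ((hfmeas.comp hVjmeas).aestronglyMeasurable)
          (ae_of_all _ fun ω => by simpa [Real.norm_eq_abs] using hfbdd (Vj ω))
      simpa [mul_comm] using h1
    have hprodL_int : Integrable (fun ω => ind (Vj ω) * g1 (X j ω)) ℙ :=
      hg1_intj.bdd_mul ((hindmeas.comp hVjmeas).aestronglyMeasurable)
        (ae_of_all _ fun ω => by
          rw [Real.norm_eq_abs, abs_of_nonneg (hindnn _)]
          exact hindle _)
    -- ∫ X j * f (Vj) = 0
    have hzero : ∫ ω, X j ω * f (Vj ω) ∂ℙ = 0 := by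
      have hind2 : IndepFun (X j) (fun ω => f (Vj ω)) ℙ := by
        have := (hiind.symm).comp (measurable_id : Measurable (id : ℝ → ℝ)) hfmeas
        exact this
      calc ∫ ω, X j ω * f (Vj ω) ∂ℙ
          = integral ℙ (X j * fun ω => f (Vj ω)) := rfl
        _ = (∫ ω, X j ω ∂ℙ) * ∫ ω, f (Vj ω) ∂ℙ :=
            hind2.integral_mul_eq_mul_integral (hXint j).aestronglyMeasurable hfVj_int.aestronglyMeasurable
        _ = 0 := by rw [hXmean j, zero_mul]
    -- factorization of the lower-bound integrand
    have hfac : ∫ ω, ind (Vj ω) * g1 (X j ω) ∂ℙ = p * κ := by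
      have hind3 : IndepFun (fun ω => ind (Vj ω)) (fun ω => g1 (X j ω)) ℙ := by
        have := hiind.comp hindmeas hg1meas
        exact this
      calc ∫ ω, ind (Vj ω) * g1 (X j ω) ∂ℙ
          = integral ℙ ((fun ω => ind (Vj ω)) * fun ω => g1 (X j ω)) := rfl
        _ = (∫ ω, ind (Vj ω) ∂ℙ) * ∫ ω, g1 (X j ω) ∂ℙ :=
            hind3.integral_mul_eq_mul_integral hind_int.aestronglyMeasurable hg1_intj.aestronglyMeasurable
        _ = p * κ := by rw [hindVj, hg1Xj]
    -- pointwise inequality and integral_mono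
    have hmono : ∫ ω, ind (Vj ω) * g1 (X j ω) ∂ℙ ≤
        ∫ ω, X j ω * (f (V ω) - f (Vj ω)) ∂ℙ := by
      have hint2 : Integrable (fun ω => X j ω * (f (V ω) - f (Vj ω))) ℙ := by
        have := (hXfV_int j).sub hXfVj_int
        refine this.congr ?_
        filter_upwards with ω
        simp only [Pi.sub_apply]; ring
      refine integral_mono hprodL_int hint2 ?_
      intro ω
      have hVω : V ω = Vj ω + X j ω := hdecomp ω
      by_cases h : a ≤ Vj ω ∧ Vj ω ≤ b
      · have hkey := stein_key a b δ hδpos (Vj ω) (X j ω) h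
        have hind1 : ind (Vj ω) = 1 := by
          rw [hinddef]
          simp [Set.indicator, Set.mem_Icc, h.1, h.2]
        simp only [hVω, hind1, one_mul, hg1def, hfdef]
        exact hkey
      · have hkey := stein_key0 a b δ (Vj ω) (X j ω)
        have hind0 : ind (Vj ω) = 0 := by
          rw [hinddef]
          have : Vj ω ∉ Set.Icc a b := by
            rw [Set.mem_Icc]; exact h
          simp [this]
        simp only [hVω, hind0, zero_mul, hfdef]
        exact hkey
    have hsplit : ∫ ω, X j ω * (f (V ω) - f (Vj ω)) ∂ℙ =
        ∫ ω, X j ω * f (V ω) ∂ℙ := by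
      have : (fun ω => X j ω * (f (V ω) - f (Vj ω)))
          = fun ω => X j ω * f (V ω) - X j ω * f (Vj ω) := by
        funext ω; ring
      rw [this, integral_sub (hXfV_int j) hXfVj_int, hzero, sub_zero]
    rw [← hfac]
    rw [hsplit] at hmono
    exact hmono
  -- sum decomposition
  have hV_int : Integrable V ℙ := by
    rw [hVdef]
    exact integrable_finset_sum _ (fun i _ => hXint i)
  have hVfV_int : Integrable (fun ω => V ω * f (V ω)) ℙ := by
    have h1 : Integrable (fun ω => f (V ω) * V ω) ℙ :=
      hV_int.bdd_mul ((hfmeas.comp hVmeas).aestronglyMeasurable)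
        (ae_of_all _ fun ω => by simpa [Real.norm_eq_abs] using hfbdd (V ω))
    simpa [mul_comm] using h1
  have hsum : ∫ ω, V ω * f (V ω) ∂ℙ = ∑ j ∈ Finset.range n, ∫ ω, X j ω * f (V ω) ∂ℙ := by
    rw [← integral_finset_sum _ (fun j _ => hXfV_int j)]
    congr 1
    funext ω
    rw [hVdef, ← Finset.sum_mul]
  -- second moment of V
  have hprod_int : ∀ i j : ℕ, Integrable (fun ω => X i ω * X j ω) ℙ := by
    intro i j
    rcases eq_or_ne i j with rfl | hij
    · refine (hXsq_int i).congr ?_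
      filter_upwards with ω
      ring
    · have h := (hindep.indepFun hij).integrable_mul (hXint i) (hXint j)
      exact h
  have hcross : ∀ i j : ℕ, i ≠ j → ∫ ω, X i ω * X j ω ∂ℙ = 0 := by
    intro i j hij
    have h := (hindep.indepFun hij).integral_mul_eq_mul_integral (hXint i).aestronglyMeasurable (hXint j).aestronglyMeasurable
    calc ∫ ω, X i ω * X j ω ∂ℙ = integral ℙ (X i * X j) := rfl
      _ = (∫ ω, X i ω ∂ℙ) * ∫ ω, X j ω ∂ℙ := h
      _ = 0 := by rw [hXmean i, zero_mul]
  have hVsqeq : (fun ω => (V ω)^2) =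
      fun ω => ∑ i ∈ Finset.range n, ∑ j ∈ Finset.range n, X i ω * X j ω := by
    funext ω
    rw [hVdef, sq, Finset.sum_mul_sum]
  have hVsq_int : Integrable (fun ω => (V ω)^2) ℙ := by
    rw [hVsqeq]
    exact integrable_finset_sum _ (fun i _ => integrable_finset_sum _ (fun j _ => hprod_int i j))
  have hVsq : ∫ ω, (V ω)^2 ∂ℙ = 1 := by
    rw [hVsqeq, integral_finset_sum _
      (fun i _ => integrable_finset_sum _ (fun j _ => hprod_int i j))]
    have hinner : ∀ i ∈ Finset.range n,
        (∫ ω, ∑ j ∈ Finset.range n, X i ω * X j ω ∂ℙ) = 1 / n := by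
      intro i hi
      rw [integral_finset_sum _ (fun j _ => hprod_int i j),
        Finset.sum_eq_single i (fun j _ hji => hcross i j (Ne.symm hji)) (fun h => absurd hi h)]
      rw [← hXvar i]
      congr 1
      funext ω
      ring
    rw [Finset.sum_congr rfl hinner, Finset.sum_const, Finset.card_range, nsmul_eq_mul]
    field_simp
  have hVabs : ∫ ω, |V ω| ∂ℙ ≤ 1 := by
    have h1 : ∫ ω, 2 * |V ω| ∂ℙ ≤ ∫ ω, 1 + (V ω)^2 ∂ℙ := by
      refine integral_mono (hV_int.abs.const_mul 2) ((integrable_const 1).add hVsq_int) ?_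
      intro ω
      show 2 * |V ω| ≤ 1 + (V ω)^2
      nlinarith [sq_nonneg (|V ω| - 1), sq_abs (V ω)]
    rw [integral_add (integrable_const 1) hVsq_int, hVsq, integral_const,
      integral_const_mul _ _] at h1
    simp only [measure_univ, probReal_univ, ENNReal.toReal_one, smul_eq_mul, mul_one] at h1
    linarith
  -- upper bound
  have hupper : ∫ ω, V ω * f (V ω) ∂ℙ ≤ c := by
    have h1 : ∫ ω, V ω * f (V ω) ∂ℙ ≤ ∫ ω, c * |V ω| ∂ℙ := by
      refine integral_mono hVfV_int (hV_int.abs.const_mul c) ?_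
      intro ω
      calc V ω * f (V ω) ≤ |V ω * f (V ω)| := le_abs_self _
        _ = |V ω| * |f (V ω)| := abs_mul _ _
        _ ≤ |V ω| * c := mul_le_mul_of_nonneg_left (hfbdd _) (abs_nonneg _)
        _ = c * |V ω| := mul_comm _ _
    rw [integral_const_mul _ _] at h1
    calc ∫ ω, V ω * f (V ω) ∂ℙ ≤ c * ∫ ω, |V ω| ∂ℙ := h1
      _ ≤ c * 1 := mul_le_mul_of_nonneg_left hVabs hcpos.le
      _ = c := mul_one c
  -- combine
  have hnpκ : (n:ℝ) * (p * κ) ≤ c := by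
    calc (n:ℝ) * (p * κ) = ∑ _j ∈ Finset.range n, p * κ := by
          rw [Finset.sum_const, Finset.card_range, nsmul_eq_mul]
      _ ≤ ∑ j ∈ Finset.range n, ∫ ω, X j ω * f (V ω) ∂ℙ := Finset.sum_le_sum main_j
      _ = ∫ ω, V ω * f (V ω) ∂ℙ := hsum.symm
      _ ≤ c := hupper
  have hp56 : p * (5/6) ≤ c := by
    have h1 : p * ((n:ℝ) * (5 / (6*n))) ≤ p * ((n:ℝ) * κ) :=
      mul_le_mul_of_nonneg_left (mul_le_mul_of_nonneg_left hκ56 hn'.le) hpnn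
    have h2 : (n:ℝ) * (5 / (6*n)) = 5/6 := by field_simp
    rw [h2] at h1
    calc p * (5/6) ≤ p * ((n:ℝ) * κ) := h1
      _ = (n:ℝ) * (p * κ) := by ring
      _ ≤ c := hnpκ
  have hnb : 0 ≤ (n:ℝ) * β := by positivity
  show p ≤ b - a + 2 * n * β
  rw [hcdef, hδdef] at hp56
  nlinarith [hp56, hpnn, hab, hnb]
end
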